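/- arXiv:1609.03738 — 4 statements merged into one kernel-verified Lean document; each statement's English description precedes it below -/
import Mathlib

section
/- Let f : {1,2,3,...} → ℝ be a nonnegative arithmetic function and let c ≥ 0 be a real number such that ∑_{m ≤ M} f(m) = c·M + O(M^{3/5}) as M → ∞. Then for every fixed integer k ≥ 1, as M → ∞, ∑_{m ≤ M} f^{*k}(m) = c^k · M · (log M)^{k-1}/(k-1)! + O(M (log M)^{k-2}). -/
open Filter Finset MeasureTheory
open scoped symmDiff


lemma hyperbola (G : ℕ → ℕ → ℝ) (N : ℕ) :
    ∑ m ∈ Icc 1 N, ∑ p ∈ m.divisorsAntidiagonal, G p.1 p.2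
      = ∑ a ∈ Icc 1 N, ∑ b ∈ Icc 1 (N / a), G a b := by
  rw [← Finset.sum_biUnion]
  · rw [Finset.sum_sigma']
    refine Finset.sum_nbij' (fun p => ⟨p.1, p.2⟩) (fun q => (q.1, q.2)) ?_ ?_ ?_ ?_ ?_
    · intro p hp
      simp only [Finset.mem_biUnion, Nat.mem_divisorsAntidiagonal] at hp
      obtain ⟨m, hm, hpm, hm0⟩ := hp
      simp only [Finset.mem_sigma, Finset.mem_Icc] at *
      subst hpm
      have h1 : p.1 ≠ 0 := by intro e; rw [e] at hm0; simp at hm0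
      have h2 : p.2 ≠ 0 := by intro e; rw [e] at hm0; simp at hm0
      refine ⟨⟨by omega, le_trans (Nat.le_mul_of_pos_right _ (by omega)) hm.2⟩,
        ⟨by omega, ?_⟩⟩
      rw [Nat.le_div_iff_mul_le (by omega)]
      rw [mul_comm]; exact hm.2
    · intro q hq
      simp only [Finset.mem_sigma, Finset.mem_Icc] at hq
      simp only [Finset.mem_biUnion, Nat.mem_divisorsAntidiagonal]
      have hq1 : q.1 ≠ 0 := by omega
      have hq2 : q.2 ≠ 0 := by omega
      refine ⟨q.1 * q.2, ?_, rfl, Nat.mul_ne_zero hq1 hq2⟩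
      simp only [Finset.mem_Icc]
      constructor
      · exact Nat.one_le_iff_ne_zero.mpr (Nat.mul_ne_zero hq1 hq2)
      · rw [mul_comm]; exact (Nat.le_div_iff_mul_le (by omega)).mp hq.2.2
    · intro p _; rfl
    · intro q _; rfl
    · intro p _; rfl
  · intro x hx y hy hxy
    simp only [Finset.coe_Icc, Set.mem_Icc] at hx hy
    apply Finset.disjoint_left.mpr
    intro p hp hq
    rw [Nat.mem_divisorsAntidiagonal] at hp hq
    exact hxy (by rw [← hp.1, hq.1])



lemma step_eq (g : ℕ → ℝ) {x t : ℝ} (ht : t ∈ Set.Ioc 1 x) (ψ : ℝ → ℝ) :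
    ψ t * (∑ a ∈ Icc 1 ⌊t⌋₊, g a)
      = ∑ a ∈ Icc 1 ⌊x⌋₊, (Set.Ici (a:ℝ)).indicator (fun s => ψ s * g a) t := by
  have ht1 : (1:ℝ) ≤ t := le_of_lt ht.1
  have htx : t ≤ x := ht.2
  have key : Icc 1 ⌊t⌋₊ = (Icc 1 ⌊x⌋₊).filter (fun a : ℕ => (a:ℝ) ≤ t) := by
    ext a
    simp only [mem_Icc, mem_filter]
    constructor
    · intro ⟨h1, h2⟩
      have h3 : (a:ℝ) ≤ t := le_trans (Nat.cast_le.mpr h2) (Nat.floor_le (by linarith))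
      exact ⟨⟨h1, le_trans h2 (Nat.floor_le_floor htx)⟩, h3⟩
    · intro ⟨⟨h1, _⟩, h3⟩
      exact ⟨h1, Nat.le_floor h3⟩
  rw [key, Finset.sum_filter, Finset.mul_sum]
  refine Finset.sum_congr rfl fun a _ => ?_
  by_cases hat : (a:ℝ) ≤ t
  · rw [if_pos hat, Set.indicator_of_mem (Set.mem_Ici.mpr hat)]
  · rw [if_neg hat, Set.indicator_of_notMem (by simpa using hat), mul_zero]

lemma swap_integrable (g : ℕ → ℝ) {ψ : ℝ → ℝ} {x : ℝ}
    (hψ : IntegrableOn ψ (Set.Ioc 1 x)) :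
    IntegrableOn (fun t => ψ t * (∑ a ∈ Icc 1 ⌊t⌋₊, g a)) (Set.Ioc 1 x) := by
  have : IntegrableOn
      (fun t => ∑ a ∈ Icc 1 ⌊x⌋₊, (Set.Ici (a:ℝ)).indicator (fun s => ψ s * g a) t)
      (Set.Ioc 1 x) := by
    apply MeasureTheory.integrable_finset_sum
    intro a _
    exact (hψ.mul_const (g a)).indicator measurableSet_Ici
  exact this.congr_fun (fun t ht => (step_eq g ht ψ).symm) measurableSet_Ioc

lemma swap_sum_integral (g : ℕ → ℝ) {ψ : ℝ → ℝ} {x : ℝ} (hx : 1 ≤ x)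
    (hψ : IntegrableOn ψ (Set.Ioc 1 x)) :
    ∫ t in Set.Ioc 1 x, ψ t * (∑ a ∈ Icc 1 ⌊t⌋₊, g a)
      = ∑ a ∈ Icc 1 ⌊x⌋₊, g a * ∫ t in Set.Ioc (a:ℝ) x, ψ t := by
  rw [MeasureTheory.setIntegral_congr_fun measurableSet_Ioc
    (fun t ht => step_eq g ht ψ)]
  rw [MeasureTheory.integral_finset_sum _
    (fun a _ => (hψ.mul_const (g a)).indicator measurableSet_Ici)]
  refine Finset.sum_congr rfl fun a ha => ?_
  have ha' : 1 ≤ a := (Finset.mem_Icc.mp ha).1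
  have ha1 : (1:ℝ) ≤ (a:ℝ) := by exact_mod_cast ha'
  rw [MeasureTheory.integral_indicator measurableSet_Ici]
  rw [Measure.restrict_restrict measurableSet_Ici]
  have hseq : (Set.Ici (a:ℝ) ∩ Set.Ioc 1 x : Set ℝ) =ᵐ[volume] (Set.Ioc (a:ℝ) x : Set ℝ) := by
    have hsub : symmDiff (Set.Ici (a:ℝ) ∩ Set.Ioc 1 x) (Set.Ioc (a:ℝ) x) ⊆ {(a:ℝ)} := by
      intro t ht
      rcases Set.mem_symmDiff.mp ht with ⟨hA, hB⟩ | ⟨hB, hA⟩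
      · have h1 : (a:ℝ) ≤ t := hA.1
        have h3 : t ≤ x := hA.2.2
        have hta : t ≤ (a:ℝ) := by
          by_contra hlt
          push_neg at hlt
          exact hB ⟨hlt, h3⟩
        exact Set.mem_singleton_iff.mpr (le_antisymm hta h1)
      · exact absurd ⟨le_of_lt hB.1, lt_of_le_of_lt ha1 hB.1, hB.2⟩ hA
    have : volume (symmDiff (Set.Ici (a:ℝ) ∩ Set.Ioc 1 x) (Set.Ioc (a:ℝ) x)) = 0 :=
      measure_mono_null hsub (measure_singleton _)
    rw [MeasureTheory.ae_eq_set]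
    constructor
    · exact measure_mono_null (fun t ht => Or.inl ht) this
    · exact measure_mono_null (fun t ht => Or.inr ht) this
  rw [MeasureTheory.setIntegral_congr_set hseq, ← MeasureTheory.integral_const_mul]
  simp_rw [mul_comm (g a)]



lemma integrableOn_rpow_Ioc (r : ℝ) {a x : ℝ} (ha : 0 < a) :
    IntegrableOn (fun t : ℝ => t ^ r) (Set.Ioc a x) := by
  rcases le_or_gt a x with hax | hax
  · refine (ContinuousOn.integrableOn_Icc ?_).mono_set Set.Ioc_subset_Icc_self
    intro t ht
    exact (Real.continuousAt_rpow_const t r (Or.inl (by linarith [ht.1]))).continuousWithinAt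
  · rw [Set.Ioc_eq_empty (not_lt.mpr hax.le)]
    exact integrableOn_empty

lemma integral_rpow_Ioc {r : ℝ} (hr : r ≠ -1) {a x : ℝ} (ha : 0 < a) (hax : a ≤ x) :
    ∫ t in Set.Ioc a x, t ^ r = (x ^ (r + 1) - a ^ (r + 1)) / (r + 1) := by
  rw [← intervalIntegral.integral_of_le hax]
  exact integral_rpow (Or.inr ⟨hr, by
    intro h0
    rcases Set.mem_uIcc.mp h0 with ⟨h1, _⟩ | ⟨h1, _⟩ <;> linarith⟩)

lemma integral_inv_Ioc {a x : ℝ} (ha : 0 < a) (hax : a ≤ x) :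
    ∫ t in Set.Ioc a x, t⁻¹ = Real.log x - Real.log a := by
  rw [← intervalIntegral.integral_of_le hax, integral_inv (by
    intro h0
    rcases Set.mem_uIcc.mp h0 with ⟨h1, _⟩ | ⟨h1, _⟩ <;> linarith)]
  rw [Real.log_div (by linarith) (by linarith)]

lemma integrableOn_inv_Ioc {a x : ℝ} (ha : 0 < a) :
    IntegrableOn (fun t : ℝ => t⁻¹) (Set.Ioc a x) := by
  rcases le_or_gt a x with hax | hax
  · refine (ContinuousOn.integrableOn_Icc ?_).mono_set Set.Ioc_subset_Icc_self
    exact ContinuousOn.inv₀ continuousOn_id (fun t ht => by intro h; rw [h] at ht; linarith [ht.1])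
  · rw [Set.Ioc_eq_empty (not_lt.mpr hax.le)]
    exact integrableOn_empty

lemma integrableOn_logpow_inv (j : ℕ) (A : ℝ) {x : ℝ} :
    IntegrableOn (fun t : ℝ => (A + Real.log t) ^ j * t⁻¹) (Set.Ioc 1 x) := by
  rcases le_or_gt 1 x with hax | hax
  · refine (ContinuousOn.integrableOn_Icc ?_).mono_set Set.Ioc_subset_Icc_self
    have ht0 : ∀ t ∈ Set.Icc (1:ℝ) x, t ≠ 0 := fun t ht => by
      intro h; rw [h] at ht; linarith [ht.1]
    refine ContinuousOn.mul (ContinuousOn.pow ?_ j) (ContinuousOn.inv₀ continuousOn_id ht0)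
    exact continuousOn_const.add (Real.continuousOn_log.mono (by
      intro t ht; simp only [Set.mem_compl_iff, Set.mem_singleton_iff]; exact ht0 t ht))
  · rw [Set.Ioc_eq_empty (not_lt.mpr hax.le)]
    exact integrableOn_empty

lemma integral_logpow_inv (j : ℕ) (A : ℝ) {x : ℝ} (hx : 1 ≤ x) :
    ∫ t in Set.Ioc 1 x, (A + Real.log t) ^ j * t⁻¹
      = ((A + Real.log x) ^ (j + 1) - A ^ (j + 1)) / (j + 1) := by
  rw [← intervalIntegral.integral_of_le hx]
  have key : ∀ t ∈ Set.uIcc (1:ℝ) x, HasDerivAt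
      (fun s => (A + Real.log s) ^ (j + 1) / (j + 1))
      ((A + Real.log t) ^ j * t⁻¹) t := by
    intro t ht
    rw [Set.uIcc_of_le hx] at ht
    have ht0 : t ≠ 0 := by intro h; rw [h] at ht; linarith [ht.1]
    have h1 : HasDerivAt (fun s : ℝ => A + Real.log s) t⁻¹ t :=
      (Real.hasDerivAt_log ht0).const_add A
    have h2 := (h1.pow (j + 1)).div_const ((j : ℝ) + 1)
    refine h2.congr_deriv ?_
    have : ((j:ℝ) + 1) ≠ 0 := by positivity
    rw [Nat.add_sub_cancel]; push_cast
    field_simp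
  have hInt : IntervalIntegrable (fun t : ℝ => (A + Real.log t) ^ j * t⁻¹) volume 1 x := by
    rw [intervalIntegrable_iff_integrableOn_Ioc_of_le hx]
    exact integrableOn_logpow_inv j A
  rw [intervalIntegral.integral_eq_sub_of_hasDerivAt key hInt]
  rw [Real.log_one, add_zero, sub_div]



-- monotonicity of partial sums of a nonneg function
lemma S_mono {g : ℕ → ℝ} (hg : ∀ n, 0 ≤ g n) {s t : ℝ} (hst : s ≤ t) :
    ∑ m ∈ Icc 1 ⌊s⌋₊, g m ≤ ∑ m ∈ Icc 1 ⌊t⌋₊, g m :=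
  Finset.sum_le_sum_of_subset_of_nonneg
    (Finset.Icc_subset_Icc le_rfl (Nat.floor_le_floor hst)) (fun i _ _ => hg i)

lemma S_nonneg {g : ℕ → ℝ} (hg : ∀ n, 0 ≤ g n) (t : ℝ) :
    0 ≤ ∑ m ∈ Icc 1 ⌊t⌋₊, g m := Finset.sum_nonneg (fun i _ => hg i)

lemma global_S_bound (f : ArithmeticFunction ℝ) (hf : ∀ n, 0 ≤ f n) (c : ℝ) (hc : 0 ≤ c)
    (h : (fun M : ℝ => (∑ m ∈ Finset.Icc 1 ⌊M⌋₊, f m) - c * M)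
      =O[atTop] fun M : ℝ => M ^ ((3 : ℝ) / 5)) :
    ∃ A, 0 ≤ A ∧ ∀ t : ℝ, 1 ≤ t →
      |(∑ m ∈ Icc 1 ⌊t⌋₊, f m) - c * t| ≤ A * t ^ ((3:ℝ)/5) := by
  obtain ⟨C, hC⟩ := h.bound
  rw [eventually_atTop] at hC
  obtain ⟨M0, hM0⟩ := hC
  set t0 : ℝ := max M0 1 with ht0def
  have ht01 : (1:ℝ) ≤ t0 := le_max_right _ _
  set B : ℝ := (∑ m ∈ Icc 1 ⌊t0⌋₊, f m) + c * t0 with hBdef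
  have hB0 : 0 ≤ B := add_nonneg (S_nonneg hf t0) (mul_nonneg hc (by linarith))
  refine ⟨|C| + B, by positivity, fun t ht => ?_⟩
  have htpos : (0:ℝ) < t := by linarith
  have hrp : (0:ℝ) < t ^ ((3:ℝ)/5) := Real.rpow_pos_of_pos htpos _
  have hrp1 : (1:ℝ) ≤ t ^ ((3:ℝ)/5) := Real.one_le_rpow ht (by norm_num)
  rcases le_or_gt t0 t with hcase | hcase
  · have := hM0 t (le_trans (le_max_left _ _) hcase)
    rw [Real.norm_eq_abs, Real.norm_eq_abs, Real.abs_rpow_of_nonneg htpos.le, abs_of_pos htpos]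
      at this
    calc |(∑ m ∈ Icc 1 ⌊t⌋₊, f m) - c * t| ≤ C * t ^ ((3:ℝ)/5) := this
      _ ≤ (|C| + B) * t ^ ((3:ℝ)/5) := by
          apply mul_le_mul_of_nonneg_right _ hrp.le
          calc C ≤ |C| := le_abs_self C
            _ ≤ |C| + B := by linarith
  · have h1 : |(∑ m ∈ Icc 1 ⌊t⌋₊, f m) - c * t| ≤ B := by
      rw [abs_sub_le_iff]
      constructor
      · have := S_mono hf hcase.le
        have : (∑ m ∈ Icc 1 ⌊t⌋₊, f m) ≤ B := by
          rw [hBdef]; nlinarith [mul_nonneg hc htpos.le]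
        nlinarith [mul_nonneg hc htpos.le]
      · have h2 : c * t ≤ c * t0 := by nlinarith
        have h3 : (0:ℝ) ≤ ∑ m ∈ Icc 1 ⌊t⌋₊, f m := S_nonneg hf t
        rw [hBdef] at *
        nlinarith [S_nonneg hf t0]
    calc |(∑ m ∈ Icc 1 ⌊t⌋₊, f m) - c * t| ≤ B := h1
      _ ≤ B * t ^ ((3:ℝ)/5) := le_mul_of_one_le_right hB0 hrp1
      _ ≤ (|C| + B) * t ^ ((3:ℝ)/5) := by
          apply mul_le_mul_of_nonneg_right _ hrp.le
          linarith [abs_nonneg C]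



/-- General estimate: for a nonneg `g` with `|∑_{m≤t} g m - c t| ≤ A t^{3/5}` for `t ≥ 1`,
we get `|∑_{b≤y} g b / b - c log y| ≤ c + (7/2) A` for all `y ≥ 1`. -/
lemma W_bound_gen (g : ℕ → ℝ) (hg : ∀ n, 0 ≤ g n) (c : ℝ) (hc : 0 ≤ c)
    (A : ℝ) (hA : 0 ≤ A)
    (hS : ∀ t : ℝ, 1 ≤ t → |(∑ m ∈ Icc 1 ⌊t⌋₊, g m) - c * t| ≤ A * t ^ ((3:ℝ)/5))
    (y : ℝ) (hy : 1 ≤ y) :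
    |(∑ b ∈ Icc 1 ⌊y⌋₊, g b * (b:ℝ)⁻¹) - c * Real.log y| ≤ c + A + (5/2) * A := by
  have hy0 : (0:ℝ) < y := by linarith
  set S : ℝ → ℝ := fun t => ∑ m ∈ Icc 1 ⌊t⌋₊, g m with hSdef
  -- step 1: each weight as an integral
  have hweight : ∀ b ∈ Icc 1 ⌊y⌋₊, g b * (b:ℝ)⁻¹
      = g b * y⁻¹ + g b * ∫ t in Set.Ioc (b:ℝ) y, t ^ (-2:ℝ) := by
    intro b hb
    have hb1 : 1 ≤ b := (Finset.mem_Icc.mp hb).1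
    have hb1' : (1:ℝ) ≤ (b:ℝ) := by exact_mod_cast hb1
    have hby : (b:ℝ) ≤ y := le_trans (le_trans (Nat.cast_le.mpr (Finset.mem_Icc.mp hb).2)
      (Nat.floor_le hy0.le)) le_rfl
    rw [integral_rpow_Ioc (by norm_num) (by linarith) hby]
    have : (-2:ℝ) + 1 = -1 := by norm_num
    rw [this, Real.rpow_neg_one, Real.rpow_neg_one]
    rw [← mul_add]
    congr 1
    ring
  rw [Finset.sum_congr rfl hweight, Finset.sum_add_distrib, ← Finset.sum_mul]
  rw [← swap_sum_integral g hy (integrableOn_rpow_Ioc _ one_pos)]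
  -- step 2: split the integral
  have hint1 : IntegrableOn (fun t => t ^ (-2:ℝ) * S t) (Set.Ioc 1 y) :=
    swap_integrable g (integrableOn_rpow_Ioc _ one_pos)
  have hint2 : IntegrableOn (fun t : ℝ => t ^ (-2:ℝ) * (c * t)) (Set.Ioc 1 y) := by
    refine MeasureTheory.IntegrableOn.congr_fun
      ((integrableOn_rpow_Ioc (-1:ℝ) one_pos).const_mul c) ?_ measurableSet_Ioc
    intro t ht
    have ht0 : (0:ℝ) < t := lt_trans one_pos ht.1
    show c * t ^ (-1:ℝ) = t ^ (-2:ℝ) * (c * t)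
    rw [show (-1:ℝ) = (-2) + 1 by norm_num, Real.rpow_add ht0, Real.rpow_one]
    ring
  have hsplit : ∫ t in Set.Ioc 1 y, t ^ (-2:ℝ) * S t
      = (∫ t in Set.Ioc 1 y, t ^ (-2:ℝ) * (S t - c * t)) + c * Real.log y := by
    have : ∫ t in Set.Ioc 1 y, t ^ (-2:ℝ) * (S t - c * t)
        = (∫ t in Set.Ioc 1 y, t ^ (-2:ℝ) * S t) - ∫ t in Set.Ioc 1 y, t ^ (-2:ℝ) * (c * t) := by
      rw [← integral_sub hint1 hint2]
      congr 1; funext t; ring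
    rw [this]
    have h2 : ∫ t in Set.Ioc 1 y, t ^ (-2:ℝ) * (c * t) = c * Real.log y := by
      have : ∫ t in Set.Ioc 1 y, t ^ (-2:ℝ) * (c * t) = ∫ t in Set.Ioc 1 y, c * t⁻¹ := by
        apply setIntegral_congr_fun measurableSet_Ioc
        intro t ht
        have ht0 : (0:ℝ) < t := lt_trans one_pos ht.1
        rw [show (fun t : ℝ => c * t⁻¹) t = c * t⁻¹ from rfl, ← Real.rpow_neg_one t,
          show (-1:ℝ) = (-2) + 1 by norm_num, Real.rpow_add ht0, Real.rpow_one]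
        ring
      rw [this, integral_const_mul, integral_inv_Ioc one_pos hy, Real.log_one, sub_zero]
    linarith
  -- step 3: bound the error integral
  have herr : |∫ t in Set.Ioc 1 y, t ^ (-2:ℝ) * (S t - c * t)| ≤ (5/2) * A := by
    have hbnd : ∀ t ∈ Set.Ioc (1:ℝ) y, ‖t ^ (-2:ℝ) * (S t - c * t)‖ ≤ A * t ^ (-(7:ℝ)/5) := by
      intro t ht
      have ht1 : (1:ℝ) ≤ t := ht.1.le
      have ht0 : (0:ℝ) < t := by linarith
      rw [Real.norm_eq_abs, abs_mul, abs_of_pos (Real.rpow_pos_of_pos ht0 _)]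
      calc t ^ (-2:ℝ) * |S t - c * t| ≤ t ^ (-2:ℝ) * (A * t ^ ((3:ℝ)/5)) := by
            exact mul_le_mul_of_nonneg_left (hS t ht1) (Real.rpow_pos_of_pos ht0 _).le
        _ = A * t ^ (-(7:ℝ)/5) := by
            rw [show (-(7:ℝ)/5) = (-2) + (3:ℝ)/5 by norm_num, Real.rpow_add ht0]
            ring
    have hig : IntegrableOn (fun t : ℝ => A * t ^ (-(7:ℝ)/5)) (Set.Ioc 1 y) :=
      (integrableOn_rpow_Ioc _ one_pos).const_mul A
    calc |∫ t in Set.Ioc 1 y, t ^ (-2:ℝ) * (S t - c * t)|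
        ≤ ∫ t in Set.Ioc 1 y, A * t ^ (-(7:ℝ)/5) := by
          rw [← Real.norm_eq_abs]
          apply norm_integral_le_of_norm_le hig
          exact (ae_restrict_iff' measurableSet_Ioc).mpr (ae_of_all _ hbnd)
      _ = A * ((y ^ (-(2:ℝ)/5) - 1) / (-(2:ℝ)/5)) := by
          rw [integral_const_mul, integral_rpow_Ioc (by norm_num) one_pos hy]
          norm_num [Real.one_rpow]
      _ ≤ (5/2) * A := by
          have h1 : (0:ℝ) < y ^ (-(2:ℝ)/5) := Real.rpow_pos_of_pos hy0 _
          have h2 : y ^ (-(2:ℝ)/5) ≤ 1 := Real.rpow_le_one_of_one_le_of_nonpos hy (by norm_num)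
          rw [div_div_eq_mul_div, div_eq_mul_inv]
          nlinarith
  -- step 4: combine
  have hSy : |S y * y⁻¹| ≤ c + A := by
    have h1 : |S y - c * y| ≤ A * y ^ ((3:ℝ)/5) := hS y hy
    have h2 : y ^ ((3:ℝ)/5) ≤ y := by
      calc y ^ ((3:ℝ)/5) ≤ y ^ (1:ℝ) := Real.rpow_le_rpow_of_exponent_le hy (by norm_num)
        _ = y := Real.rpow_one y
    have h3 : 0 ≤ S y := S_nonneg hg y
    have h4 : S y ≤ c * y + A * y := by
      have := abs_le.mp h1
      nlinarith
    rw [abs_of_nonneg (mul_nonneg h3 (inv_nonneg.mpr hy0.le))]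
    calc S y * y⁻¹ ≤ ((c + A) * y) * y⁻¹ :=
          mul_le_mul_of_nonneg_right (by nlinarith) (inv_nonneg.mpr hy0.le)
      _ = c + A := by field_simp
  calc |(S y * y⁻¹ + ∫ t in Set.Ioc 1 y, t ^ (-2:ℝ) * S t) - c * Real.log y|
      = |S y * y⁻¹ + ∫ t in Set.Ioc 1 y, t ^ (-2:ℝ) * (S t - c * t)| := by
        rw [hsplit]
        congr 1
        ring
    _ ≤ |S y * y⁻¹| + |∫ t in Set.Ioc 1 y, t ^ (-2:ℝ) * (S t - c * t)| := abs_add_le _ _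
    _ ≤ (c + A) + (5/2) * A := add_le_add hSy herr
    _ = c + A + (5/2) * A := by ring



lemma pow_apply_nonneg (f : ArithmeticFunction ℝ) (hf : ∀ n, 0 ≤ f n) :
    ∀ k n, 0 ≤ (f ^ k) n := by
  intro k
  induction k with
  | zero => intro n; rw [pow_zero]
            rcases eq_or_ne n 1 with rfl | hn
            · simp
            · simp [ArithmeticFunction.one_apply, hn]
  | succ k ih =>
      intro n
      rw [pow_succ, ArithmeticFunction.mul_apply]
      exact Finset.sum_nonneg fun p _ => mul_nonneg (ih p.1) (hf p.2)

/-- Weighted hyperbola identity for `f^(k+1) = f^k * f`. -/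
lemma weighted_hyp (f : ArithmeticFunction ℝ) (k : ℕ) (x : ℝ) (hx : 1 ≤ x) :
    ∑ m ∈ Icc 1 ⌊x⌋₊, (f ^ (k+1)) m * (m:ℝ)⁻¹
      = ∑ a ∈ Icc 1 ⌊x⌋₊, ((f ^ k) a * (a:ℝ)⁻¹) *
          ∑ b ∈ Icc 1 ⌊x / (a:ℝ)⌋₊, f b * (b:ℝ)⁻¹ := by
  have key := hyperbola (fun a b => ((f ^ k) a * (a:ℝ)⁻¹) * (f b * (b:ℝ)⁻¹)) ⌊x⌋₊
  have lhs_eq : ∑ m ∈ Icc 1 ⌊x⌋₊, (f ^ (k+1)) m * (m:ℝ)⁻¹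
      = ∑ m ∈ Icc 1 ⌊x⌋₊, ∑ p ∈ m.divisorsAntidiagonal,
          ((f ^ k) p.1 * (p.1:ℝ)⁻¹) * (f p.2 * (p.2:ℝ)⁻¹) := by
    refine Finset.sum_congr rfl fun m hm => ?_
    have hm1 : 1 ≤ m := (Finset.mem_Icc.mp hm).1
    rw [pow_succ, ArithmeticFunction.mul_apply, Finset.sum_mul]
    refine Finset.sum_congr rfl fun p hp => ?_
    obtain ⟨hpm, hm0⟩ := Nat.mem_divisorsAntidiagonal.mp hp
    have : (m:ℝ) = (p.1 : ℝ) * (p.2 : ℝ) := by exact_mod_cast hpm.symm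
    rw [this, mul_inv]
    ring
  rw [lhs_eq, key]
  refine Finset.sum_congr rfl fun a ha => ?_
  have ha1 : 1 ≤ a := (Finset.mem_Icc.mp ha).1
  rw [Nat.floor_div_natCast x a, Finset.mul_sum]

/-- Plain hyperbola identity for `f^(k+1) = f^k * f`. -/
lemma plain_hyp (f : ArithmeticFunction ℝ) (k : ℕ) (x : ℝ) (hx : 1 ≤ x) :
    ∑ m ∈ Icc 1 ⌊x⌋₊, (f ^ (k+1)) m
      = ∑ a ∈ Icc 1 ⌊x⌋₊, (f ^ k) a * ∑ b ∈ Icc 1 ⌊x / (a:ℝ)⌋₊, f b := by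
  have key := hyperbola (fun a b => (f ^ k) a * f b) ⌊x⌋₊
  have lhs_eq : ∑ m ∈ Icc 1 ⌊x⌋₊, (f ^ (k+1)) m
      = ∑ m ∈ Icc 1 ⌊x⌋₊, ∑ p ∈ m.divisorsAntidiagonal, (f ^ k) p.1 * f p.2 := by
    refine Finset.sum_congr rfl fun m hm => ?_
    rw [pow_succ, ArithmeticFunction.mul_apply]
  rw [lhs_eq, key]
  refine Finset.sum_congr rfl fun a ha => ?_
  rw [Nat.floor_div_natCast x a, Finset.mul_sum]

lemma D_bound (f : ArithmeticFunction ℝ) (hf : ∀ n, 0 ≤ f n) (c : ℝ) (hc : 0 ≤ c)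
    (A : ℝ) (hA : 0 ≤ A)
    (hS : ∀ t : ℝ, 1 ≤ t → |(∑ m ∈ Icc 1 ⌊t⌋₊, f m) - c * t| ≤ A * t ^ ((3:ℝ)/5)) :
    ∀ j : ℕ, ∃ C, 0 ≤ C ∧ ∀ x : ℝ, 1 ≤ x →
      |(∑ a ∈ Icc 1 ⌊x⌋₊, (f ^ (j+1)) a * (a:ℝ)⁻¹)
        - c ^ (j+1) * (Real.log x) ^ (j+1) / ((j+1).factorial : ℝ)|
          ≤ C * (1 + Real.log x) ^ j := by
  intro j
  induction j with
  | zero =>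
      refine ⟨c + A + (5/2) * A, by positivity, fun x hx => ?_⟩
      have := W_bound_gen f hf c hc A hA hS x hx
      simpa [pow_one, Nat.factorial] using this
  | succ j ih =>
      obtain ⟨C, hC0, hCb⟩ := ih
      set K : ℝ := c + A + (5/2) * A with hKdef
      have hK0 : 0 ≤ K := by positivity
      set DG : ℝ := c ^ (j+1) / ((j+1).factorial : ℝ) + C with hDGdef
      have hDG0 : 0 ≤ DG := by positivity
      -- global bound on the (j+1)-st log average
      have hDglob : ∀ t : ℝ, 1 ≤ t →
          (∑ a ∈ Icc 1 ⌊t⌋₊, (f ^ (j+1)) a * (a:ℝ)⁻¹) ≤ DG * (1 + Real.log t) ^ (j+1) := by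
        intro t ht
        have hL0 : 0 ≤ Real.log t := Real.log_nonneg ht
        have h1 := (abs_le.mp (hCb t ht)).2
        have h2 : (Real.log t) ^ (j+1) ≤ (1 + Real.log t) ^ (j+1) :=
          pow_le_pow_left₀ hL0 (by linarith) _
        have h3 : (1 + Real.log t) ^ j ≤ (1 + Real.log t) ^ (j+1) :=
          pow_le_pow_right₀ (by linarith) (Nat.le_succ j)
        have hfac : (0:ℝ) < ((j+1).factorial : ℝ) := by positivity
        calc (∑ a ∈ Icc 1 ⌊t⌋₊, (f ^ (j+1)) a * (a:ℝ)⁻¹)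
            ≤ c ^ (j+1) * (Real.log t) ^ (j+1) / ((j+1).factorial : ℝ)
              + C * (1 + Real.log t) ^ j := by linarith
          _ ≤ c ^ (j+1) / ((j+1).factorial : ℝ) * (1 + Real.log t) ^ (j+1)
              + C * (1 + Real.log t) ^ (j+1) := by
                have e1 : c ^ (j+1) * (Real.log t) ^ (j+1) / ((j+1).factorial : ℝ)
                    = c ^ (j+1) / ((j+1).factorial : ℝ) * (Real.log t) ^ (j+1) := by ring
                rw [e1]
                have := mul_le_mul_of_nonneg_left h2 (by positivity :
                  (0:ℝ) ≤ c ^ (j+1) / ((j+1).factorial : ℝ))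
                have := mul_le_mul_of_nonneg_left h3 hC0
                nlinarith
          _ = DG * (1 + Real.log t) ^ (j+1) := by rw [hDGdef]; ring
      refine ⟨c * C + K * DG, by positivity, fun x hx => ?_⟩
      have hx0 : (0:ℝ) < x := by linarith
      have hL0 : 0 ≤ Real.log x := Real.log_nonneg hx
      set gD : ℕ → ℝ := fun a => (f ^ (j+1)) a * (a:ℝ)⁻¹ with hgDdef
      have hgD0 : ∀ a, 0 ≤ gD a := fun a =>
        mul_nonneg (pow_apply_nonneg f hf _ a) (by positivity)
      -- the hyperbola step
      have hyp := weighted_hyp f (j+1) x hx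
      -- decompose W(x/a) = c log(x/a) + err
      have hdecomp : ∑ a ∈ Icc 1 ⌊x⌋₊, gD a * ∑ b ∈ Icc 1 ⌊x / (a:ℝ)⌋₊, f b * (b:ℝ)⁻¹
          = (∑ a ∈ Icc 1 ⌊x⌋₊, gD a * (c * (Real.log x - Real.log a)))
            + ∑ a ∈ Icc 1 ⌊x⌋₊, gD a *
              ((∑ b ∈ Icc 1 ⌊x / (a:ℝ)⌋₊, f b * (b:ℝ)⁻¹) - c * Real.log (x / (a:ℝ))) := by
        rw [← Finset.sum_add_distrib]
        refine Finset.sum_congr rfl fun a ha => ?_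
        have ha1 : 1 ≤ a := (Finset.mem_Icc.mp ha).1
        have ha1' : (1:ℝ) ≤ (a:ℝ) := by exact_mod_cast ha1
        have hax : (a:ℝ) ≤ x :=
          le_trans (Nat.cast_le.mpr (Finset.mem_Icc.mp ha).2) (Nat.floor_le hx0.le)
        rw [Real.log_div (by linarith) (by linarith)]
        ring
      -- error sum bound
      have herr2 : |∑ a ∈ Icc 1 ⌊x⌋₊, gD a *
          ((∑ b ∈ Icc 1 ⌊x / (a:ℝ)⌋₊, f b * (b:ℝ)⁻¹) - c * Real.log (x / (a:ℝ)))|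
            ≤ K * DG * (1 + Real.log x) ^ (j+1) := by
        calc |∑ a ∈ Icc 1 ⌊x⌋₊, gD a *
            ((∑ b ∈ Icc 1 ⌊x / (a:ℝ)⌋₊, f b * (b:ℝ)⁻¹) - c * Real.log (x / (a:ℝ)))|
            ≤ ∑ a ∈ Icc 1 ⌊x⌋₊, |gD a *
              ((∑ b ∈ Icc 1 ⌊x / (a:ℝ)⌋₊, f b * (b:ℝ)⁻¹) - c * Real.log (x / (a:ℝ)))| :=
              Finset.abs_sum_le_sum_abs _ _
          _ ≤ ∑ a ∈ Icc 1 ⌊x⌋₊, gD a * K := by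
              refine Finset.sum_le_sum fun a ha => ?_
              have ha1 : 1 ≤ a := (Finset.mem_Icc.mp ha).1
              have ha1' : (1:ℝ) ≤ (a:ℝ) := by exact_mod_cast ha1
              have hax : (a:ℝ) ≤ x :=
                le_trans (Nat.cast_le.mpr (Finset.mem_Icc.mp ha).2) (Nat.floor_le hx0.le)
              have hxa1 : (1:ℝ) ≤ x / (a:ℝ) := (one_le_div (by linarith)).mpr hax
              rw [abs_mul, abs_of_nonneg (hgD0 a)]
              exact mul_le_mul_of_nonneg_left
                (W_bound_gen f hf c hc A hA hS _ hxa1) (hgD0 a)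
          _ = K * ∑ a ∈ Icc 1 ⌊x⌋₊, gD a := by rw [← Finset.sum_mul]; ring
          _ ≤ K * (DG * (1 + Real.log x) ^ (j+1)) :=
              mul_le_mul_of_nonneg_left (hDglob x hx) hK0
          _ = K * DG * (1 + Real.log x) ^ (j+1) := by ring
      -- main sum: log(x/a) as integral, then swap
      have hmain : ∑ a ∈ Icc 1 ⌊x⌋₊, gD a * (Real.log x - Real.log a)
          = ∫ t in Set.Ioc 1 x, t⁻¹ * (∑ a ∈ Icc 1 ⌊t⌋₊, gD a) := by
        rw [swap_sum_integral gD hx (integrableOn_inv_Ioc one_pos)]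
        refine Finset.sum_congr rfl fun a ha => ?_
        have ha1 : 1 ≤ a := (Finset.mem_Icc.mp ha).1
        have ha1' : (1:ℝ) ≤ (a:ℝ) := by exact_mod_cast ha1
        have hax : (a:ℝ) ≤ x :=
          le_trans (Nat.cast_le.mpr (Finset.mem_Icc.mp ha).2) (Nat.floor_le hx0.le)
        rw [integral_inv_Ioc (by linarith) hax]
      -- split the integral
      have hint1 : IntegrableOn (fun t => t⁻¹ * (∑ a ∈ Icc 1 ⌊t⌋₊, gD a)) (Set.Ioc 1 x) :=
        swap_integrable gD (integrableOn_inv_Ioc one_pos)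
      have hint2 : IntegrableOn
          (fun t : ℝ => t⁻¹ * (c ^ (j+1) * (Real.log t) ^ (j+1) / ((j+1).factorial : ℝ)))
          (Set.Ioc 1 x) := by
        refine MeasureTheory.IntegrableOn.congr_fun
          ((integrableOn_logpow_inv (j+1) 0).const_mul
            (c ^ (j+1) / ((j+1).factorial : ℝ))) ?_ measurableSet_Ioc
        intro t ht
        show c ^ (j+1) / ((j+1).factorial : ℝ) * ((0 + Real.log t) ^ (j+1) * t⁻¹)
          = t⁻¹ * (c ^ (j+1) * (Real.log t) ^ (j+1) / ((j+1).factorial : ℝ))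
        rw [zero_add]
        ring
      have hsplit : ∫ t in Set.Ioc 1 x, t⁻¹ * (∑ a ∈ Icc 1 ⌊t⌋₊, gD a)
          = (∫ t in Set.Ioc 1 x, t⁻¹ * ((∑ a ∈ Icc 1 ⌊t⌋₊, gD a)
              - c ^ (j+1) * (Real.log t) ^ (j+1) / ((j+1).factorial : ℝ)))
            + c ^ (j+1) * (Real.log x) ^ (j+1+1) / ((j+1+1).factorial : ℝ) := by
        have e1 : ∫ t in Set.Ioc 1 x, t⁻¹ * ((∑ a ∈ Icc 1 ⌊t⌋₊, gD a)
              - c ^ (j+1) * (Real.log t) ^ (j+1) / ((j+1).factorial : ℝ))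
            = (∫ t in Set.Ioc 1 x, t⁻¹ * (∑ a ∈ Icc 1 ⌊t⌋₊, gD a))
              - ∫ t in Set.Ioc 1 x,
                  t⁻¹ * (c ^ (j+1) * (Real.log t) ^ (j+1) / ((j+1).factorial : ℝ)) := by
          rw [← integral_sub hint1 hint2]
          congr 1; funext t; ring
        have e2 : ∫ t in Set.Ioc 1 x,
            t⁻¹ * (c ^ (j+1) * (Real.log t) ^ (j+1) / ((j+1).factorial : ℝ))
            = c ^ (j+1) * (Real.log x) ^ (j+1+1) / ((j+1+1).factorial : ℝ) := by
          have e3 : ∫ t in Set.Ioc 1 x,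
              t⁻¹ * (c ^ (j+1) * (Real.log t) ^ (j+1) / ((j+1).factorial : ℝ))
              = c ^ (j+1) / ((j+1).factorial : ℝ)
                * ∫ t in Set.Ioc 1 x, (0 + Real.log t) ^ (j+1) * t⁻¹ := by
            rw [← integral_const_mul]
            refine setIntegral_congr_fun measurableSet_Ioc fun t ht => ?_
            show t⁻¹ * (c ^ (j+1) * (Real.log t) ^ (j+1) / ((j+1).factorial : ℝ))
              = c ^ (j+1) / ((j+1).factorial : ℝ) * ((0 + Real.log t) ^ (j+1) * t⁻¹)
            rw [zero_add]; ring
          rw [e3, integral_logpow_inv (j+1) 0 hx, zero_add,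
            zero_pow (by omega : j+1+1 ≠ 0), sub_zero]
          have hfact : ((j+1+1).factorial : ℝ) = (((j+1:ℕ):ℝ) + 1) * ((j+1).factorial : ℝ) := by
            rw [Nat.factorial_succ]; push_cast; ring
          rw [div_mul_div_comm, hfact,
            mul_comm (((j+1).factorial : ℝ)) (((j+1:ℕ):ℝ) + 1)]
        linarith
      -- bound error integral
      have herr1 : |∫ t in Set.Ioc 1 x, t⁻¹ * ((∑ a ∈ Icc 1 ⌊t⌋₊, gD a)
            - c ^ (j+1) * (Real.log t) ^ (j+1) / ((j+1).factorial : ℝ))|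
          ≤ C * (1 + Real.log x) ^ (j+1) := by
        have hig : IntegrableOn (fun t : ℝ => C * ((1 + Real.log t) ^ j * t⁻¹)) (Set.Ioc 1 x) :=
          (integrableOn_logpow_inv j 1).const_mul C
        have hbnd : ∀ t ∈ Set.Ioc (1:ℝ) x, ‖t⁻¹ * ((∑ a ∈ Icc 1 ⌊t⌋₊, gD a)
              - c ^ (j+1) * (Real.log t) ^ (j+1) / ((j+1).factorial : ℝ))‖
            ≤ C * ((1 + Real.log t) ^ j * t⁻¹) := by
          intro t ht
          have ht1 : (1:ℝ) ≤ t := ht.1.le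
          have ht0 : (0:ℝ) < t := by linarith
          rw [Real.norm_eq_abs, abs_mul, abs_of_pos (inv_pos.mpr ht0)]
          have := hCb t ht1
          calc t⁻¹ * |(∑ a ∈ Icc 1 ⌊t⌋₊, gD a)
                - c ^ (j+1) * (Real.log t) ^ (j+1) / ((j+1).factorial : ℝ)|
              ≤ t⁻¹ * (C * (1 + Real.log t) ^ j) :=
                mul_le_mul_of_nonneg_left this (inv_pos.mpr ht0).le
            _ = C * ((1 + Real.log t) ^ j * t⁻¹) := by ring
        calc |∫ t in Set.Ioc 1 x, t⁻¹ * ((∑ a ∈ Icc 1 ⌊t⌋₊, gD a)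
              - c ^ (j+1) * (Real.log t) ^ (j+1) / ((j+1).factorial : ℝ))|
            ≤ ∫ t in Set.Ioc 1 x, C * ((1 + Real.log t) ^ j * t⁻¹) := by
              rw [← Real.norm_eq_abs]
              apply norm_integral_le_of_norm_le hig
              exact (ae_restrict_iff' measurableSet_Ioc).mpr (ae_of_all _ hbnd)
          _ = C * (((1 + Real.log x) ^ (j+1) - 1 ^ (j+1)) / (j+1)) := by
              rw [integral_const_mul, integral_logpow_inv j 1 hx]
          _ ≤ C * (1 + Real.log x) ^ (j+1) := by
              rw [one_pow]
              have h2 : (1:ℝ) ≤ (1 + Real.log x) ^ (j+1) := one_le_pow₀ (by linarith)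
              refine mul_le_mul_of_nonneg_left ?_ hC0
              rw [div_le_iff₀ (by positivity)]
              push_cast
              nlinarith
      -- assemble
      have final_eq : (∑ a ∈ Icc 1 ⌊x⌋₊, (f ^ (j+1+1)) a * (a:ℝ)⁻¹)
            - c ^ (j+1+1) * (Real.log x) ^ (j+1+1) / ((j+1+1).factorial : ℝ)
          = c * (∫ t in Set.Ioc 1 x, t⁻¹ * ((∑ a ∈ Icc 1 ⌊t⌋₊, gD a)
              - c ^ (j+1) * (Real.log t) ^ (j+1) / ((j+1).factorial : ℝ)))
            + ∑ a ∈ Icc 1 ⌊x⌋₊, gD a *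
              ((∑ b ∈ Icc 1 ⌊x / (a:ℝ)⌋₊, f b * (b:ℝ)⁻¹) - c * Real.log (x / (a:ℝ))) := by
        have e0 : ∑ a ∈ Icc 1 ⌊x⌋₊, gD a * (c * (Real.log x - Real.log a))
            = c * ∑ a ∈ Icc 1 ⌊x⌋₊, gD a * (Real.log x - Real.log a) := by
          rw [Finset.mul_sum]
          refine Finset.sum_congr rfl fun a _ => by ring
        rw [hyp]
        show (∑ a ∈ Icc 1 ⌊x⌋₊, gD a * ∑ b ∈ Icc 1 ⌊x / (a:ℝ)⌋₊, f b * (b:ℝ)⁻¹)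
            - c ^ (j+1+1) * (Real.log x) ^ (j+1+1) / ((j+1+1).factorial : ℝ) = _
        rw [hdecomp, e0, hmain, hsplit]
        have : c * ((∫ t in Set.Ioc 1 x, t⁻¹ * ((∑ a ∈ Icc 1 ⌊t⌋₊, gD a)
              - c ^ (j+1) * (Real.log t) ^ (j+1) / ((j+1).factorial : ℝ)))
            + c ^ (j+1) * (Real.log x) ^ (j+1+1) / ((j+1+1).factorial : ℝ))
            = c * (∫ t in Set.Ioc 1 x, t⁻¹ * ((∑ a ∈ Icc 1 ⌊t⌋₊, gD a)
              - c ^ (j+1) * (Real.log t) ^ (j+1) / ((j+1).factorial : ℝ)))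
              + c ^ (j+1+1) * (Real.log x) ^ (j+1+1) / ((j+1+1).factorial : ℝ) := by
          rw [pow_succ c (j+1)]
          ring
        rw [this]
        ring
      rw [final_eq]
      calc |c * (∫ t in Set.Ioc 1 x, t⁻¹ * ((∑ a ∈ Icc 1 ⌊t⌋₊, gD a)
              - c ^ (j+1) * (Real.log t) ^ (j+1) / ((j+1).factorial : ℝ)))
            + ∑ a ∈ Icc 1 ⌊x⌋₊, gD a *
              ((∑ b ∈ Icc 1 ⌊x / (a:ℝ)⌋₊, f b * (b:ℝ)⁻¹) - c * Real.log (x / (a:ℝ)))|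
          ≤ |c| * |∫ t in Set.Ioc 1 x, t⁻¹ * ((∑ a ∈ Icc 1 ⌊t⌋₊, gD a)
              - c ^ (j+1) * (Real.log t) ^ (j+1) / ((j+1).factorial : ℝ))|
            + |∑ a ∈ Icc 1 ⌊x⌋₊, gD a *
              ((∑ b ∈ Icc 1 ⌊x / (a:ℝ)⌋₊, f b * (b:ℝ)⁻¹) - c * Real.log (x / (a:ℝ)))| := by
            refine le_trans (abs_add_le _ _) ?_
            rw [abs_mul]
        _ ≤ c * (C * (1 + Real.log x) ^ (j+1)) + K * DG * (1 + Real.log x) ^ (j+1) := by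
            rw [abs_of_nonneg hc]
            exact add_le_add (mul_le_mul_of_nonneg_left herr1 hc) herr2
        _ = (c * C + K * DG) * (1 + Real.log x) ^ (j+1) := by ring



section TB
variable (f : ArithmeticFunction ℝ) (hf : ∀ n, 0 ≤ f n) (c : ℝ) (hc : 0 ≤ c)
    (A : ℝ) (hA : 0 ≤ A)
    (hS : ∀ t : ℝ, 1 ≤ t → |(∑ m ∈ Icc 1 ⌊t⌋₊, f m) - c * t| ≤ A * t ^ ((3:ℝ)/5))

include hf hc hA hS in
/-- Crude global bound `T_{i+1}(t) ≤ B t (1+log t)^i`. -/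
lemma T_crude : ∀ i : ℕ, ∃ B, 0 ≤ B ∧ ∀ t : ℝ, 1 ≤ t →
    ∑ m ∈ Icc 1 ⌊t⌋₊, (f ^ (i+1)) m ≤ B * t * (1 + Real.log t) ^ i := by
  have hSle : ∀ t : ℝ, 1 ≤ t → ∑ m ∈ Icc 1 ⌊t⌋₊, f m ≤ (c + A) * t := by
    intro t ht
    have h1 := (abs_le.mp (hS t ht)).2
    have h2 : t ^ ((3:ℝ)/5) ≤ t := by
      calc t ^ ((3:ℝ)/5) ≤ t ^ (1:ℝ) := Real.rpow_le_rpow_of_exponent_le ht (by norm_num)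
        _ = t := Real.rpow_one t
    nlinarith
  intro i
  cases i with
  | zero =>
      refine ⟨c + A, by positivity, fun t ht => ?_⟩
      simpa using hSle t ht
  | succ i =>
      obtain ⟨C, hC0, hCb⟩ := D_bound f hf c hc A hA hS i
      set DG : ℝ := c ^ (i+1) / ((i+1).factorial : ℝ) + C with hDGdef
      have hDG0 : 0 ≤ DG := by positivity
      have hDglob : ∀ t : ℝ, 1 ≤ t →
          (∑ a ∈ Icc 1 ⌊t⌋₊, (f ^ (i+1)) a * (a:ℝ)⁻¹) ≤ DG * (1 + Real.log t) ^ (i+1) := by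
        intro t ht
        have hL0 : 0 ≤ Real.log t := Real.log_nonneg ht
        have h1 := (abs_le.mp (hCb t ht)).2
        have h2 : (Real.log t) ^ (i+1) ≤ (1 + Real.log t) ^ (i+1) :=
          pow_le_pow_left₀ hL0 (by linarith) _
        have h3 : (1 + Real.log t) ^ i ≤ (1 + Real.log t) ^ (i+1) :=
          pow_le_pow_right₀ (by linarith) (Nat.le_succ i)
        have hfac : (0:ℝ) < ((i+1).factorial : ℝ) := by positivity
        have e1 : c ^ (i+1) * (Real.log t) ^ (i+1) / ((i+1).factorial : ℝ)
            = c ^ (i+1) / ((i+1).factorial : ℝ) * (Real.log t) ^ (i+1) := by ring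
        have h4 := mul_le_mul_of_nonneg_left h2 (by positivity :
          (0:ℝ) ≤ c ^ (i+1) / ((i+1).factorial : ℝ))
        have h5 := mul_le_mul_of_nonneg_left h3 hC0
        calc (∑ a ∈ Icc 1 ⌊t⌋₊, (f ^ (i+1)) a * (a:ℝ)⁻¹)
            ≤ c ^ (i+1) * (Real.log t) ^ (i+1) / ((i+1).factorial : ℝ)
              + C * (1 + Real.log t) ^ i := by linarith
          _ ≤ DG * (1 + Real.log t) ^ (i+1) := by rw [hDGdef, e1] at *; nlinarith
      refine ⟨(c + A) * DG, by positivity, fun t ht => ?_⟩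
      have ht0 : (0:ℝ) < t := by linarith
      rw [plain_hyp f (i+1) t ht]
      calc ∑ a ∈ Icc 1 ⌊t⌋₊, (f ^ (i+1)) a * ∑ b ∈ Icc 1 ⌊t / (a:ℝ)⌋₊, f b
          ≤ ∑ a ∈ Icc 1 ⌊t⌋₊, (f ^ (i+1)) a * ((c + A) * (t / (a:ℝ))) := by
            refine Finset.sum_le_sum fun a ha => ?_
            have ha1 : 1 ≤ a := (Finset.mem_Icc.mp ha).1
            have ha1' : (1:ℝ) ≤ (a:ℝ) := by exact_mod_cast ha1
            have hax : (a:ℝ) ≤ t :=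
              le_trans (Nat.cast_le.mpr (Finset.mem_Icc.mp ha).2) (Nat.floor_le ht0.le)
            have hta1 : (1:ℝ) ≤ t / (a:ℝ) := (one_le_div (by linarith)).mpr hax
            exact mul_le_mul_of_nonneg_left (hSle _ hta1) (pow_apply_nonneg f hf _ a)
        _ = (c + A) * t * ∑ a ∈ Icc 1 ⌊t⌋₊, (f ^ (i+1)) a * (a:ℝ)⁻¹ := by
            rw [Finset.mul_sum]
            refine Finset.sum_congr rfl fun a _ => ?_
            rw [div_eq_mul_inv]
            ring
        _ ≤ (c + A) * t * (DG * (1 + Real.log t) ^ (i+1)) := by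
            refine mul_le_mul_of_nonneg_left (hDglob t ht) (by positivity)
        _ = (c + A) * DG * t * (1 + Real.log t) ^ (i+1) := by ring

include hf hc hA hS in
/-- Main bound for `k = i+2`:
`|T_{i+2}(M) - c^{i+2} M (log M)^{i+1}/(i+1)!| ≤ C M (1+log M)^i`. -/
lemma T_bound_ge2 : ∀ i : ℕ, ∃ C, 0 ≤ C ∧ ∀ M : ℝ, 1 ≤ M →
    |(∑ m ∈ Icc 1 ⌊M⌋₊, (f ^ (i+2)) m)
      - c ^ (i+2) * M * (Real.log M) ^ (i+1) / ((i+1).factorial : ℝ)|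
        ≤ C * M * (1 + Real.log M) ^ i := by
  intro i
  obtain ⟨C, hC0, hCb⟩ := D_bound f hf c hc A hA hS i
  obtain ⟨B, hB0, hBb⟩ := T_crude f hf c hc A hA hS i
  refine ⟨c * C + A * ((5/2) * B), by positivity, fun M hM => ?_⟩
  have hM0 : (0:ℝ) < M := by linarith
  have hL0 : 0 ≤ Real.log M := Real.log_nonneg hM
  -- hyperbola
  have hyp : ∑ m ∈ Icc 1 ⌊M⌋₊, (f ^ (i+2)) m
      = ∑ a ∈ Icc 1 ⌊M⌋₊, (f ^ (i+1)) a * ∑ b ∈ Icc 1 ⌊M / (a:ℝ)⌋₊, f b :=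
    plain_hyp f (i+1) M hM
  -- decompose S(M/a) = c*(M/a) + err
  have hdecomp : ∑ a ∈ Icc 1 ⌊M⌋₊, (f ^ (i+1)) a * ∑ b ∈ Icc 1 ⌊M / (a:ℝ)⌋₊, f b
      = c * M * (∑ a ∈ Icc 1 ⌊M⌋₊, (f ^ (i+1)) a * (a:ℝ)⁻¹)
        + ∑ a ∈ Icc 1 ⌊M⌋₊, (f ^ (i+1)) a *
            ((∑ b ∈ Icc 1 ⌊M / (a:ℝ)⌋₊, f b) - c * (M / (a:ℝ))) := by
    rw [Finset.mul_sum, ← Finset.sum_add_distrib]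
    refine Finset.sum_congr rfl fun a ha => ?_
    rw [div_eq_mul_inv]
    ring
  -- error bound
  have herr : |∑ a ∈ Icc 1 ⌊M⌋₊, (f ^ (i+1)) a *
      ((∑ b ∈ Icc 1 ⌊M / (a:ℝ)⌋₊, f b) - c * (M / (a:ℝ)))|
        ≤ A * ((5/2) * B) * M * (1 + Real.log M) ^ i := by
    -- pointwise bound by A * M^{3/5} * a^{-3/5}
    have hpt : ∀ a ∈ Icc 1 ⌊M⌋₊, |(f ^ (i+1)) a *
        ((∑ b ∈ Icc 1 ⌊M / (a:ℝ)⌋₊, f b) - c * (M / (a:ℝ)))|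
          ≤ (f ^ (i+1)) a * ((a:ℝ) ^ (-(3:ℝ)/5) * (A * M ^ ((3:ℝ)/5))) := by
      intro a ha
      have ha1 : 1 ≤ a := (Finset.mem_Icc.mp ha).1
      have ha1' : (1:ℝ) ≤ (a:ℝ) := by exact_mod_cast ha1
      have ha0 : (0:ℝ) < (a:ℝ) := by linarith
      have hax : (a:ℝ) ≤ M :=
        le_trans (Nat.cast_le.mpr (Finset.mem_Icc.mp ha).2) (Nat.floor_le hM0.le)
      have hMa1 : (1:ℝ) ≤ M / (a:ℝ) := (one_le_div (by linarith)).mpr hax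
      rw [abs_mul, abs_of_nonneg (pow_apply_nonneg f hf _ a)]
      refine mul_le_mul_of_nonneg_left ?_ (pow_apply_nonneg f hf _ a)
      calc |(∑ b ∈ Icc 1 ⌊M / (a:ℝ)⌋₊, f b) - c * (M / (a:ℝ))|
          ≤ A * (M / (a:ℝ)) ^ ((3:ℝ)/5) := hS _ hMa1
        _ = (a:ℝ) ^ (-(3:ℝ)/5) * (A * M ^ ((3:ℝ)/5)) := by
            rw [Real.div_rpow hM0.le ha0.le, show (-(3:ℝ)/5) = -((3:ℝ)/5) by norm_num,
              Real.rpow_neg ha0.le, div_eq_mul_inv]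
            ring
    -- the weighted sum of a^{-3/5}
    have hweight : ∀ a ∈ Icc 1 ⌊M⌋₊, (a:ℝ) ^ (-(3:ℝ)/5)
        = M ^ (-(3:ℝ)/5) + ∫ t in Set.Ioc (a:ℝ) M, (3/5) * t ^ (-(8:ℝ)/5) := by
      intro a ha
      have ha1 : 1 ≤ a := (Finset.mem_Icc.mp ha).1
      have ha1' : (1:ℝ) ≤ (a:ℝ) := by exact_mod_cast ha1
      have hax : (a:ℝ) ≤ M :=
        le_trans (Nat.cast_le.mpr (Finset.mem_Icc.mp ha).2) (Nat.floor_le hM0.le)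
      rw [integral_const_mul, integral_rpow_Ioc (by norm_num) (by linarith) hax]
      rw [show (-(8:ℝ)/5) + 1 = -(3:ℝ)/5 by norm_num]
      field_simp
      ring
    have hsum3 : ∑ a ∈ Icc 1 ⌊M⌋₊, (f ^ (i+1)) a * (a:ℝ) ^ (-(3:ℝ)/5)
        ≤ (5/2) * B * M ^ ((2:ℝ)/5) * (1 + Real.log M) ^ i := by
      have e1 : ∑ a ∈ Icc 1 ⌊M⌋₊, (f ^ (i+1)) a * (a:ℝ) ^ (-(3:ℝ)/5)
          = (∑ a ∈ Icc 1 ⌊M⌋₊, (f ^ (i+1)) a) * M ^ (-(3:ℝ)/5)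
            + ∫ t in Set.Ioc 1 M, ((3:ℝ)/5) * t ^ (-(8:ℝ)/5)
                * (∑ a ∈ Icc 1 ⌊t⌋₊, (f ^ (i+1)) a) := by
        rw [Finset.sum_congr rfl fun a ha => by rw [hweight a ha, mul_add]]
        rw [Finset.sum_add_distrib, ← Finset.sum_mul]
        congr 1
        rw [swap_sum_integral (fun a => (f ^ (i+1)) a) hM
          ((integrableOn_rpow_Ioc (-(8:ℝ)/5) one_pos).const_mul ((3:ℝ)/5))]
      have t1 : (∑ a ∈ Icc 1 ⌊M⌋₊, (f ^ (i+1)) a) * M ^ (-(3:ℝ)/5)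
          ≤ B * M ^ ((2:ℝ)/5) * (1 + Real.log M) ^ i := by
        have h1 : (0:ℝ) < M ^ (-(3:ℝ)/5) := Real.rpow_pos_of_pos hM0 _
        calc (∑ a ∈ Icc 1 ⌊M⌋₊, (f ^ (i+1)) a) * M ^ (-(3:ℝ)/5)
            ≤ (B * M * (1 + Real.log M) ^ i) * M ^ (-(3:ℝ)/5) :=
              mul_le_mul_of_nonneg_right (hBb M hM) h1.le
          _ = B * M ^ ((2:ℝ)/5) * (1 + Real.log M) ^ i := by
              have hMM : M * M ^ (-(3:ℝ)/5) = M ^ ((2:ℝ)/5) := by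
                rw [show M * M ^ (-(3:ℝ)/5) = M ^ (1:ℝ) * M ^ (-(3:ℝ)/5) by
                  rw [Real.rpow_one], ← Real.rpow_add hM0]
                norm_num
              rw [show (B * M * (1 + Real.log M) ^ i) * M ^ (-(3:ℝ)/5)
                  = B * (M * M ^ (-(3:ℝ)/5)) * (1 + Real.log M) ^ i by ring, hMM]
      have t2 : ∫ t in Set.Ioc 1 M, ((3:ℝ)/5) * t ^ (-(8:ℝ)/5)
            * (∑ a ∈ Icc 1 ⌊t⌋₊, (f ^ (i+1)) a)
          ≤ (3/2) * B * M ^ ((2:ℝ)/5) * (1 + Real.log M) ^ i := by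
        have hig : IntegrableOn
            (fun t : ℝ => (3/5) * B * (1 + Real.log M) ^ i * t ^ (-(3:ℝ)/5))
            (Set.Ioc 1 M) :=
          (integrableOn_rpow_Ioc (-(3:ℝ)/5) one_pos).const_mul _
        have hbnd : ∀ t ∈ Set.Ioc (1:ℝ) M, ((3:ℝ)/5) * t ^ (-(8:ℝ)/5)
              * (∑ a ∈ Icc 1 ⌊t⌋₊, (f ^ (i+1)) a)
            ≤ (3/5) * B * (1 + Real.log M) ^ i * t ^ (-(3:ℝ)/5) := by
          intro t ht
          have ht1 : (1:ℝ) ≤ t := ht.1.le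
          have ht0 : (0:ℝ) < t := by linarith
          have hLt : Real.log t ≤ Real.log M := Real.log_le_log ht0 ht.2
          have hp1 : (1 + Real.log t) ^ i ≤ (1 + Real.log M) ^ i :=
            pow_le_pow_left₀ (by linarith [Real.log_nonneg ht1]) (by linarith) i
          have h2 : (∑ a ∈ Icc 1 ⌊t⌋₊, (f ^ (i+1)) a) ≤ B * t * (1 + Real.log t) ^ i :=
            hBb t ht1
          have h3 : (0:ℝ) < t ^ (-(8:ℝ)/5) := Real.rpow_pos_of_pos ht0 _
          have h4 : t ^ (-(8:ℝ)/5) * t = t ^ (-(3:ℝ)/5) := by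
            rw [show t ^ (-(8:ℝ)/5) * t = t ^ (-(8:ℝ)/5) * t ^ (1:ℝ) by
              rw [Real.rpow_one], ← Real.rpow_add ht0]
            norm_num
          calc ((3:ℝ)/5) * t ^ (-(8:ℝ)/5) * (∑ a ∈ Icc 1 ⌊t⌋₊, (f ^ (i+1)) a)
              ≤ ((3:ℝ)/5) * t ^ (-(8:ℝ)/5) * (B * t * (1 + Real.log t) ^ i) := by
                refine mul_le_mul_of_nonneg_left h2 (by positivity)
            _ = (3/5) * B * (1 + Real.log t) ^ i * (t ^ (-(8:ℝ)/5) * t) := by ring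
            _ ≤ (3/5) * B * (1 + Real.log M) ^ i * (t ^ (-(8:ℝ)/5) * t) := by
                refine mul_le_mul_of_nonneg_right ?_ (by positivity)
                refine mul_le_mul_of_nonneg_left hp1 (by positivity)
            _ = (3/5) * B * (1 + Real.log M) ^ i * t ^ (-(3:ℝ)/5) := by rw [h4]
        calc ∫ t in Set.Ioc 1 M, ((3:ℝ)/5) * t ^ (-(8:ℝ)/5)
              * (∑ a ∈ Icc 1 ⌊t⌋₊, (f ^ (i+1)) a)
            ≤ ∫ t in Set.Ioc 1 M, (3/5) * B * (1 + Real.log M) ^ i * t ^ (-(3:ℝ)/5) := by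
              refine setIntegral_mono_on ?_ hig measurableSet_Ioc hbnd
              exact swap_integrable (fun a => (f ^ (i+1)) a)
                ((integrableOn_rpow_Ioc (-(8:ℝ)/5) one_pos).const_mul ((3:ℝ)/5))
          _ = (3/5) * B * (1 + Real.log M) ^ i
                * ((M ^ ((2:ℝ)/5) - 1) / ((2:ℝ)/5)) := by
              rw [integral_const_mul, integral_rpow_Ioc (by norm_num) one_pos hM]
              rw [show (-(3:ℝ)/5) + 1 = (2:ℝ)/5 by norm_num, Real.one_rpow]
          _ ≤ (3/2) * B * M ^ ((2:ℝ)/5) * (1 + Real.log M) ^ i := by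
              have h1 : (0:ℝ) < M ^ ((2:ℝ)/5) := Real.rpow_pos_of_pos hM0 _
              have h2 : (0:ℝ) ≤ (1 + Real.log M) ^ i := by positivity
              rw [show ((M ^ ((2:ℝ)/5) - 1) / ((2:ℝ)/5)) = (5/2) * (M ^ ((2:ℝ)/5) - 1) by ring]
              nlinarith
      linarith [e1 ▸ add_le_add t1 t2]
    -- combine pointwise and weighted bounds
    calc |∑ a ∈ Icc 1 ⌊M⌋₊, (f ^ (i+1)) a *
        ((∑ b ∈ Icc 1 ⌊M / (a:ℝ)⌋₊, f b) - c * (M / (a:ℝ)))|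
        ≤ ∑ a ∈ Icc 1 ⌊M⌋₊, |(f ^ (i+1)) a *
            ((∑ b ∈ Icc 1 ⌊M / (a:ℝ)⌋₊, f b) - c * (M / (a:ℝ)))| :=
          Finset.abs_sum_le_sum_abs _ _
      _ ≤ ∑ a ∈ Icc 1 ⌊M⌋₊, (f ^ (i+1)) a * ((a:ℝ) ^ (-(3:ℝ)/5) * (A * M ^ ((3:ℝ)/5))) :=
          Finset.sum_le_sum hpt
      _ = (A * M ^ ((3:ℝ)/5)) * ∑ a ∈ Icc 1 ⌊M⌋₊, (f ^ (i+1)) a * (a:ℝ) ^ (-(3:ℝ)/5) := by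
          rw [Finset.mul_sum]
          exact Finset.sum_congr rfl fun a _ => by ring
      _ ≤ (A * M ^ ((3:ℝ)/5)) * ((5/2) * B * M ^ ((2:ℝ)/5) * (1 + Real.log M) ^ i) := by
          refine mul_le_mul_of_nonneg_left hsum3 (by positivity)
      _ = A * ((5/2) * B) * (M ^ ((3:ℝ)/5) * M ^ ((2:ℝ)/5)) * (1 + Real.log M) ^ i := by
          ring
      _ = A * ((5/2) * B) * M * (1 + Real.log M) ^ i := by
          rw [← Real.rpow_add hM0]
          norm_num
  -- main term bound
  have hmain : |c * M * (∑ a ∈ Icc 1 ⌊M⌋₊, (f ^ (i+1)) a * (a:ℝ)⁻¹)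
      - c ^ (i+2) * M * (Real.log M) ^ (i+1) / ((i+1).factorial : ℝ)|
        ≤ c * C * M * (1 + Real.log M) ^ i := by
    have e1 : c * M * (∑ a ∈ Icc 1 ⌊M⌋₊, (f ^ (i+1)) a * (a:ℝ)⁻¹)
        - c ^ (i+2) * M * (Real.log M) ^ (i+1) / ((i+1).factorial : ℝ)
        = c * M * ((∑ a ∈ Icc 1 ⌊M⌋₊, (f ^ (i+1)) a * (a:ℝ)⁻¹)
            - c ^ (i+1) * (Real.log M) ^ (i+1) / ((i+1).factorial : ℝ)) := by
      rw [show (i+2) = (i+1)+1 from rfl, pow_succ c (i+1)]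
      ring
    rw [e1, abs_mul, abs_of_nonneg (by positivity : (0:ℝ) ≤ c * M)]
    calc c * M * |(∑ a ∈ Icc 1 ⌊M⌋₊, (f ^ (i+1)) a * (a:ℝ)⁻¹)
          - c ^ (i+1) * (Real.log M) ^ (i+1) / ((i+1).factorial : ℝ)|
        ≤ c * M * (C * (1 + Real.log M) ^ i) :=
          mul_le_mul_of_nonneg_left (hCb M hM) (by positivity)
      _ = c * C * M * (1 + Real.log M) ^ i := by ring
  -- assemble
  have : (∑ m ∈ Icc 1 ⌊M⌋₊, (f ^ (i+2)) m)
      - c ^ (i+2) * M * (Real.log M) ^ (i+1) / ((i+1).factorial : ℝ)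
      = (c * M * (∑ a ∈ Icc 1 ⌊M⌋₊, (f ^ (i+1)) a * (a:ℝ)⁻¹)
          - c ^ (i+2) * M * (Real.log M) ^ (i+1) / ((i+1).factorial : ℝ))
        + ∑ a ∈ Icc 1 ⌊M⌋₊, (f ^ (i+1)) a *
            ((∑ b ∈ Icc 1 ⌊M / (a:ℝ)⌋₊, f b) - c * (M / (a:ℝ))) := by
    rw [hyp, hdecomp]
    ring
  rw [this]
  calc |(c * M * (∑ a ∈ Icc 1 ⌊M⌋₊, (f ^ (i+1)) a * (a:ℝ)⁻¹)
          - c ^ (i+2) * M * (Real.log M) ^ (i+1) / ((i+1).factorial : ℝ))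
        + ∑ a ∈ Icc 1 ⌊M⌋₊, (f ^ (i+1)) a *
            ((∑ b ∈ Icc 1 ⌊M / (a:ℝ)⌋₊, f b) - c * (M / (a:ℝ)))|
      ≤ |c * M * (∑ a ∈ Icc 1 ⌊M⌋₊, (f ^ (i+1)) a * (a:ℝ)⁻¹)
          - c ^ (i+2) * M * (Real.log M) ^ (i+1) / ((i+1).factorial : ℝ)|
        + |∑ a ∈ Icc 1 ⌊M⌋₊, (f ^ (i+1)) a *
            ((∑ b ∈ Icc 1 ⌊M / (a:ℝ)⌋₊, f b) - c * (M / (a:ℝ)))| := abs_add_le _ _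
    _ ≤ c * C * M * (1 + Real.log M) ^ i + A * ((5/2) * B) * M * (1 + Real.log M) ^ i :=
        add_le_add hmain herr
    _ = (c * C + A * ((5/2) * B)) * M * (1 + Real.log M) ^ i := by ring
end TB



/-- If `f` is a nonnegative arithmetic function with
`∑_{m ≤ M} f(m) = c·M + O(M^{3/5})`, then for every `k ≥ 1`,
`∑_{m ≤ M} f^{*k}(m) = c^k · M · (log M)^{k-1}/(k-1)! + O(M (log M)^{k-2})`. -/
theorem sum_dirichlet_convolution_pow_asymptotic
    (f : ArithmeticFunction ℝ) (hf : ∀ n, 0 ≤ f n) (c : ℝ) (hc : 0 ≤ c)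
    (h : (fun M : ℝ => (∑ m ∈ Finset.Icc 1 ⌊M⌋₊, f m) - c * M)
      =O[atTop] fun M : ℝ => M ^ ((3 : ℝ) / 5))
    (k : ℕ) (hk : 1 ≤ k) :
    (fun M : ℝ =>
        (∑ m ∈ Finset.Icc 1 ⌊M⌋₊, (f ^ k) m)
          - c ^ k * M * Real.log M ^ (k - 1) / (Nat.factorial (k - 1)))
      =O[atTop] fun M : ℝ => M * Real.log M ^ ((k : ℤ) - 2) := by
  obtain ⟨A, hA0, hS⟩ := global_S_bound f hf c hc h
  have hev : ∀ᶠ M : ℝ in atTop, Real.exp 1 ≤ M := eventually_ge_atTop _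
  match k, hk with
  | 1, _ =>
      rw [Asymptotics.isBigO_iff]
      refine ⟨(5/2) * A, ?_⟩
      filter_upwards [hev] with M hM
      have hM1 : (1:ℝ) ≤ M := le_trans (by
        have := Real.add_one_le_exp (1:ℝ); linarith) hM
      have hM0 : (0:ℝ) < M := by linarith
      have hL1 : (1:ℝ) ≤ Real.log M := by
        rw [Real.le_log_iff_exp_le hM0]; exact hM
      have hL0 : (0:ℝ) < Real.log M := by linarith
      have hlog : Real.log M ≤ (5/2) * M ^ ((2:ℝ)/5) := by
        have h1 : Real.log (M ^ ((2:ℝ)/5)) ≤ M ^ ((2:ℝ)/5) - 1 :=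
          Real.log_le_sub_one_of_pos (Real.rpow_pos_of_pos hM0 _)
        rw [Real.log_rpow hM0] at h1
        nlinarith [Real.rpow_pos_of_pos hM0 ((2:ℝ)/5)]
      have hrw : M ^ ((3:ℝ)/5) * Real.log M ≤ (5/2) * M := by
        have h2 : M ^ ((3:ℝ)/5) * Real.log M ≤ M ^ ((3:ℝ)/5) * ((5/2) * M ^ ((2:ℝ)/5)) :=
          mul_le_mul_of_nonneg_left hlog (Real.rpow_pos_of_pos hM0 _).le
        have h3 : M ^ ((3:ℝ)/5) * M ^ ((2:ℝ)/5) = M := by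
          rw [← Real.rpow_add hM0]
          norm_num
        nlinarith [Real.rpow_pos_of_pos hM0 ((3:ℝ)/5)]
      have hSM := hS M hM1
      have hnorm : ‖M * Real.log M ^ ((1:ℕ) - 2 : ℤ)‖ = M * (Real.log M)⁻¹ := by
        have : ((1:ℕ) - 2 : ℤ) = -1 := by norm_num
        rw [this, zpow_neg_one, Real.norm_eq_abs,
          abs_of_nonneg (by positivity : (0:ℝ) ≤ M * (Real.log M)⁻¹)]
      rw [hnorm]
      have goal_eq : (∑ m ∈ Finset.Icc 1 ⌊M⌋₊, (f ^ 1) m)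
          - c ^ 1 * M * Real.log M ^ (1 - 1) / (Nat.factorial (1 - 1))
          = (∑ m ∈ Finset.Icc 1 ⌊M⌋₊, f m) - c * M := by
        simp
      rw [Real.norm_eq_abs, goal_eq]
      calc |(∑ m ∈ Finset.Icc 1 ⌊M⌋₊, f m) - c * M| ≤ A * M ^ ((3:ℝ)/5) := hSM
        _ ≤ (5/2) * A * (M * (Real.log M)⁻¹) := by
            have e1 : M ^ ((3:ℝ)/5) = (M ^ ((3:ℝ)/5) * Real.log M) * (Real.log M)⁻¹ := by
              field_simp
            rw [e1]
            have h5 : (M ^ ((3:ℝ)/5) * Real.log M) * (Real.log M)⁻¹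
                ≤ ((5/2) * M) * (Real.log M)⁻¹ :=
              mul_le_mul_of_nonneg_right hrw (inv_pos.mpr hL0).le
            calc A * ((M ^ ((3:ℝ)/5) * Real.log M) * (Real.log M)⁻¹)
                ≤ A * (((5/2) * M) * (Real.log M)⁻¹) :=
                  mul_le_mul_of_nonneg_left h5 hA0
              _ = (5/2) * A * (M * (Real.log M)⁻¹) := by ring
  | (i+2), _ =>
      obtain ⟨C, hC0, hCb⟩ := T_bound_ge2 f hf c hc A hA0 hS i
      rw [Asymptotics.isBigO_iff]
      refine ⟨C * 2 ^ i, ?_⟩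
      filter_upwards [hev] with M hM
      have hM1 : (1:ℝ) ≤ M := le_trans (by
        have := Real.add_one_le_exp (1:ℝ); linarith) hM
      have hM0 : (0:ℝ) < M := by linarith
      have hL1 : (1:ℝ) ≤ Real.log M := by
        rw [Real.le_log_iff_exp_le hM0]; exact hM
      have hL0 : (0:ℝ) < Real.log M := by linarith
      have hsub1 : i + 2 - 1 = i + 1 := rfl
      have hzexp : ((i + 2 : ℕ) : ℤ) - 2 = (i : ℤ) := by push_cast; ring
      have hnorm : ‖M * Real.log M ^ ((i + 2 : ℕ) - 2 : ℤ)‖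
          = M * Real.log M ^ i := by
        rw [show ((i + 2 : ℕ) - 2 : ℤ) = ((i:ℕ) : ℤ) by push_cast; ring, zpow_natCast,
          Real.norm_eq_abs, abs_of_nonneg (by positivity)]
      rw [hnorm, Real.norm_eq_abs, hsub1]
      calc |(∑ m ∈ Finset.Icc 1 ⌊M⌋₊, (f ^ (i+2)) m)
            - c ^ (i+2) * M * Real.log M ^ (i+1) / (Nat.factorial (i+1))|
          ≤ C * M * (1 + Real.log M) ^ i := hCb M hM1
        _ ≤ C * M * (2 * Real.log M) ^ i := by
            refine mul_le_mul_of_nonneg_left (pow_le_pow_left₀ (by linarith) (by linarith) i)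
              (by positivity)
        _ = C * 2 ^ i * (M * Real.log M ^ i) := by
            rw [mul_pow]
            ring
end

section
/- Let f : {1,2,3,...} → ℝ be a nonnegative arithmetic function and let c ≥ 0 be a real number such that ∑_{m ≤ M} f(m) = c·M + O(M^{3/5}) as M → ∞. Then for every fixed integer k ≥ 1, as M → ∞, ∑_{m ≤ M} f^{*k}(m)/m = c^k · (log M)^k / k! + O((log M)^{k-1}). -/
open Filter Finset

open MeasureTheory

lemma logContOn (x : ℝ) (hx : 1 ≤ x) : ContinuousOn Real.log (Set.uIcc 1 x) := by
  rw [Set.uIcc_of_le hx]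
  exact Real.continuousOn_log.mono fun t ht => by
    simp only [Set.mem_compl_iff, Set.mem_singleton_iff]
    exact ne_of_gt (lt_of_lt_of_le zero_lt_one ht.1)

lemma ne_zero_on (x : ℝ) (hx : 1 ≤ x) : ∀ t ∈ Set.uIcc (1:ℝ) x, t ≠ 0 := by
  rw [Set.uIcc_of_le hx]
  exact fun t ht => ne_of_gt (lt_of_lt_of_le zero_lt_one ht.1)

lemma contOn_aux (x : ℝ) (hx : 1 ≤ x) (j : ℕ) :
    ContinuousOn (fun t : ℝ => (Real.log x - Real.log t) ^ j / t) (Set.uIcc 1 x) :=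
  ((continuousOn_const.sub (logContOn x hx)).pow j).div continuousOn_id (ne_zero_on x hx)

lemma contOn_aux2 (x : ℝ) (hx : 1 ≤ x) (j : ℕ) :
    ContinuousOn (fun t : ℝ => (Real.log x - Real.log t) ^ j * Real.log t / t)
      (Set.uIcc 1 x) :=
  (((continuousOn_const.sub (logContOn x hx)).pow j).mul (logContOn x hx)).div
    continuousOn_id (ne_zero_on x hx)

lemma integral_sub_log_pow (x : ℝ) (hx : 1 ≤ x) (j : ℕ) :
    ∫ t in Set.Ioc 1 x, (Real.log x - Real.log t) ^ j / t
      = Real.log x ^ (j + 1) / (j + 1) := by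
  rw [← intervalIntegral.integral_of_le hx]
  have key : ∀ t ∈ Set.uIcc (1:ℝ) x, HasDerivAt
      (fun u : ℝ => -((Real.log x - Real.log u) ^ (j+1)) / (j+1))
      ((Real.log x - Real.log t) ^ j / t) t := by
    intro t ht
    rw [Set.uIcc_of_le hx] at ht
    have ht0 : (0:ℝ) < t := lt_of_lt_of_le zero_lt_one ht.1
    have h1 : HasDerivAt (fun u : ℝ => Real.log x - Real.log u) (-t⁻¹) t :=
      (Real.hasDerivAt_log ht0.ne').const_sub _
    have h2 := (h1.pow (j+1)).neg.div_const ((j:ℝ)+1)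
    refine h2.congr_deriv ?_
    have : ((j:ℝ)+1) ≠ 0 := by positivity
    rw [show j + 1 - 1 = j by omega]
    push_cast
    field_simp
  rw [intervalIntegral.integral_eq_sub_of_hasDerivAt key (contOn_aux x hx j).intervalIntegrable]
  simp [Real.log_one, zero_pow (Nat.succ_ne_zero j)]
  ring

lemma integral_sub_log_pow_mul_log (x : ℝ) (hx : 1 ≤ x) (j : ℕ) :
    ∫ t in Set.Ioc 1 x, (Real.log x - Real.log t) ^ j * Real.log t / t
      = Real.log x ^ (j + 2) / ((j + 1) * (j + 2)) := by
  rw [← intervalIntegral.integral_of_le hx]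
  have key : ∀ t ∈ Set.uIcc (1:ℝ) x, HasDerivAt
      (fun u : ℝ => -((Real.log x - Real.log u) ^ (j+1) * Real.log u) / (j+1)
        - (Real.log x - Real.log u) ^ (j+2) / (((j:ℝ)+1) * ((j:ℝ)+2)))
      ((Real.log x - Real.log t) ^ j * Real.log t / t) t := by
    intro t ht
    rw [Set.uIcc_of_le hx] at ht
    have ht0 : (0:ℝ) < t := lt_of_lt_of_le zero_lt_one ht.1
    have h1 : HasDerivAt (fun u : ℝ => Real.log x - Real.log u) (-t⁻¹) t :=
      (Real.hasDerivAt_log ht0.ne').const_sub _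
    have hA := (((h1.pow (j+1)).mul (Real.hasDerivAt_log ht0.ne')).neg.div_const ((j:ℝ)+1))
    have hB := (h1.pow (j+2)).div_const (((j:ℝ)+1) * ((j:ℝ)+2))
    have h2 := hA.sub hB
    refine h2.congr_deriv ?_
    have e1 : ((j:ℝ)+1) ≠ 0 := by positivity
    have e2 : ((j:ℝ)+2) ≠ 0 := by positivity
    rw [show j + 1 - 1 = j by omega, show j + 2 - 1 = j + 1 by omega]
    simp only [Pi.pow_apply]
    push_cast
    field_simp
    ring
  rw [intervalIntegral.integral_eq_sub_of_hasDerivAt key (contOn_aux2 x hx j).intervalIntegrable]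
  simp [Real.log_one, zero_pow (Nat.succ_ne_zero j)]


lemma sum_Icc_zero_eq (cseq : ℕ → ℝ) (h0 : cseq 0 = 0) (N : ℕ) :
    ∑ k ∈ Finset.Icc 0 N, cseq k = ∑ k ∈ Finset.Icc 1 N, cseq k := by
  rw [Finset.Icc_eq_cons_Ioc (Nat.zero_le N), Finset.sum_cons, h0, zero_add,
    ← Finset.Icc_add_one_left_eq_Ioc, zero_add]

lemma meas_partial (cseq : ℕ → ℝ) :
    Measurable (fun t : ℝ => ∑ k ∈ Finset.Icc 0 ⌊t⌋₊, cseq k) :=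
  Measurable.comp (f := (Nat.floor : ℝ → ℕ)) (g := fun N => ∑ k ∈ Finset.Icc 0 N, cseq k)
    measurable_from_top Nat.measurable_floor

lemma partial_mono (cseq : ℕ → ℝ) (hc : ∀ n, 0 ≤ cseq n) {s t : ℝ} (hst : s ≤ t) :
    ∑ k ∈ Finset.Icc 0 ⌊s⌋₊, cseq k ≤ ∑ k ∈ Finset.Icc 0 ⌊t⌋₊, cseq k :=
  Finset.sum_le_sum_of_subset_of_nonneg
    (Finset.Icc_subset_Icc le_rfl (Nat.floor_le_floor hst)) (fun n _ _ => hc n)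

lemma partial_nonneg (cseq : ℕ → ℝ) (hc : ∀ n, 0 ≤ cseq n) (t : ℝ) :
    0 ≤ ∑ k ∈ Finset.Icc 0 ⌊t⌋₊, cseq k :=
  Finset.sum_nonneg fun n _ => hc n

lemma integrableOn_mul_partial (cseq : ℕ → ℝ) (hc : ∀ n, 0 ≤ cseq n) (x : ℝ) (hx : 1 ≤ x)
    {ψ : ℝ → ℝ} (hψ : ContinuousOn ψ (Set.Icc 1 x)) :
    IntegrableOn (fun t => ψ t * ∑ k ∈ Finset.Icc 0 ⌊t⌋₊, cseq k) (Set.Ioc 1 x) := by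
  have hψint : IntegrableOn ψ (Set.Ioc 1 x) :=
    (hψ.integrableOn_Icc).mono_set Set.Ioc_subset_Icc_self
  have hmeas : AEStronglyMeasurable (fun t : ℝ => ∑ k ∈ Finset.Icc 0 ⌊t⌋₊, cseq k)
      ((volume : Measure ℝ).restrict (Set.Ioc 1 x)) :=
    (meas_partial cseq).aestronglyMeasurable
  have hbdd : ∀ᵐ t ∂((volume : Measure ℝ).restrict (Set.Ioc 1 x)),
      ‖∑ k ∈ Finset.Icc 0 ⌊t⌋₊, cseq k‖ ≤ ∑ k ∈ Finset.Icc 0 ⌊x⌋₊, cseq k := by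
    rw [ae_restrict_iff' measurableSet_Ioc]
    refine Eventually.of_forall fun t ht => ?_
    rw [Real.norm_of_nonneg (partial_nonneg cseq hc t)]
    exact partial_mono cseq hc ht.2
  have : IntegrableOn (fun t => (∑ k ∈ Finset.Icc 0 ⌊t⌋₊, cseq k) * ψ t) (Set.Ioc 1 x) :=
    hψint.bdd_mul hmeas hbdd
  exact this.congr_fun (fun t _ => mul_comm _ _) measurableSet_Ioc

lemma rpow_contOn (x : ℝ) (r : ℝ) :
    ContinuousOn (fun t : ℝ => t ^ r) (Set.Icc 1 x) := fun t ht =>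
  (Real.continuousAt_rpow_const t r
    (Or.inl (ne_of_gt (lt_of_lt_of_le zero_lt_one ht.1)))).continuousWithinAt

lemma integral_rpow_Ioc_le (x : ℝ) (hx : 1 ≤ x) :
    ∫ t in Set.Ioc 1 x, t ^ (-(7:ℝ)/5) ≤ 5/2 := by
  rw [← intervalIntegral.integral_of_le hx]
  rw [integral_rpow (Or.inr ⟨by norm_num, by
    rw [Set.uIcc_of_le hx]; exact fun h0 => absurd h0.1 (by norm_num)⟩)]
  have h1 : (0:ℝ) ≤ x ^ (-(7:ℝ)/5 + 1) := Real.rpow_nonneg (by linarith) _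
  rw [Real.one_rpow]
  rw [show (-(7:ℝ)/5 + 1) = -(2/5) by norm_num] at h1 ⊢
  have : (x ^ (-(2/5):ℝ) - 1) / (-(2/5)) = (1 - x ^ (-(2/5):ℝ)) * (5/2) := by ring
  rw [this]
  nlinarith [h1]

lemma T_estimate (f : ArithmeticFunction ℝ) (hf : ∀ n, 0 ≤ f n) (c C₁ : ℝ) (hC₁ : 0 ≤ C₁)
    (hF : ∀ t : ℝ, 1 ≤ t → |(∑ m ∈ Finset.Icc 0 ⌊t⌋₊, f m) - c * t| ≤ C₁ * t ^ ((3:ℝ)/5))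
    (x : ℝ) (hx : 1 ≤ x) :
    |(∑ m ∈ Finset.Icc 0 ⌊x⌋₊, f m / m) - c * Real.log x| ≤ |c| + (C₁ + 5/2 * C₁) := by
  have hx0 : (0:ℝ) < x := lt_of_lt_of_le zero_lt_one hx
  set F : ℝ → ℝ := fun t => ∑ m ∈ Finset.Icc 0 ⌊t⌋₊, f m with hFdef
  -- Abel summation
  have hdiff : ∀ t ∈ Set.Icc (1:ℝ) x, DifferentiableAt ℝ (fun t : ℝ => t⁻¹) t := fun t ht =>
    differentiableAt_inv (ne_of_gt (lt_of_lt_of_le zero_lt_one ht.1))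
  have hderiv_int : IntegrableOn (deriv fun t : ℝ => t⁻¹) (Set.Icc 1 x) := by
    have : ContinuousOn (fun t : ℝ => -((t^2)⁻¹)) (Set.Icc 1 x) := by
      refine ContinuousOn.neg (ContinuousOn.inv₀ (by fun_prop) ?_)
      exact fun t ht => pow_ne_zero 2 (ne_of_gt (lt_of_lt_of_le zero_lt_one ht.1))
    refine (this.integrableOn_Icc).congr_fun (fun t _ => ?_) measurableSet_Icc
    rw [deriv_inv]
  have habel := sum_mul_eq_sub_integral_mul₀ (c := fun n => (f n : ℝ)) (f := fun t : ℝ => t⁻¹)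
    (by simp) x hdiff hderiv_int
  have hsum : (∑ m ∈ Finset.Icc 0 ⌊x⌋₊, f m / m)
      = ∑ k ∈ Finset.Icc 0 ⌊x⌋₊, (fun t : ℝ => t⁻¹) k * f k := by
    refine Finset.sum_congr rfl fun m _ => ?_
    rw [div_eq_inv_mul]
  -- rewrite the integral
  have hIeq : ∫ t in Set.Ioc 1 x, deriv (fun t : ℝ => t⁻¹) t * F t
      = - ∫ t in Set.Ioc 1 x, (t^2)⁻¹ * F t := by
    rw [← MeasureTheory.integral_neg]
    refine setIntegral_congr_fun measurableSet_Ioc (fun t ht => ?_)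
    rw [deriv_inv]; ring
  have hFint : IntegrableOn (fun t => (t^2)⁻¹ * F t) (Set.Ioc 1 x) := by
    refine integrableOn_mul_partial (fun n => f n) hf x hx ?_
    exact ContinuousOn.inv₀ (by fun_prop) (fun t ht => pow_ne_zero 2 (ne_of_gt (lt_of_lt_of_le zero_lt_one ht.1)))
  have hct_cont : ContinuousOn (fun t : ℝ => (t^2)⁻¹ * (c * t)) (Set.Icc 1 x) := by
    refine ContinuousOn.mul (ContinuousOn.inv₀ (by fun_prop) (fun t ht => pow_ne_zero 2 (ne_of_gt (lt_of_lt_of_le zero_lt_one ht.1))))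
      (by fun_prop)
  have hct_int : IntegrableOn (fun t : ℝ => (t^2)⁻¹ * (c * t)) (Set.Ioc 1 x) :=
    (hct_cont.integrableOn_Icc).mono_set Set.Ioc_subset_Icc_self
  have hlog : ∫ t in Set.Ioc 1 x, (t^2)⁻¹ * (c * t) = c * Real.log x := by
    have : ∀ t ∈ Set.Ioc (1:ℝ) x, (t^2)⁻¹ * (c * t) = c * t⁻¹ := by
      intro t ht
      have ht0 : t ≠ 0 := ne_of_gt (lt_trans zero_lt_one ht.1)
      field_simp
    rw [setIntegral_congr_fun measurableSet_Ioc this, MeasureTheory.integral_const_mul,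
      ← intervalIntegral.integral_of_le hx, integral_inv (by
        rw [Set.uIcc_of_le hx]; exact fun h0 => absurd h0.1 (by norm_num))]
    rw [div_one]
  -- main identity
  have key : (∑ m ∈ Finset.Icc 0 ⌊x⌋₊, f m / m) - c * Real.log x
      = c + ((x⁻¹ * F x - c) + ∫ t in Set.Ioc 1 x, (t^2)⁻¹ * (F t - c * t)) := by
    have hsplit : ∫ t in Set.Ioc 1 x, (t^2)⁻¹ * (F t - c * t)
        = (∫ t in Set.Ioc 1 x, (t^2)⁻¹ * F t) - ∫ t in Set.Ioc 1 x, (t^2)⁻¹ * (c * t) := by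
      rw [← MeasureTheory.integral_sub hFint hct_int]
      refine setIntegral_congr_fun measurableSet_Ioc (fun t ht => ?_)
      ring
    rw [hsplit, hlog, hsum, habel, hIeq]
    ring
  rw [key]
  -- bounds
  have hb1 : |x⁻¹ * F x - c| ≤ C₁ := by
    have : x⁻¹ * F x - c = (F x - c * x) * x⁻¹ := by
      field_simp
    rw [this, abs_mul, abs_of_nonneg (inv_nonneg.mpr hx0.le)]
    have h35 : x ^ ((3:ℝ)/5) ≤ x := by
      nth_rewrite 2 [← Real.rpow_one x]
      exact Real.rpow_le_rpow_of_exponent_le hx (by norm_num)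
    calc |F x - c * x| * x⁻¹ ≤ (C₁ * x ^ ((3:ℝ)/5)) * x⁻¹ := by
          exact mul_le_mul_of_nonneg_right (hF x hx) (inv_nonneg.mpr hx0.le)
      _ ≤ (C₁ * x) * x⁻¹ := by
          exact mul_le_mul_of_nonneg_right
            (mul_le_mul_of_nonneg_left h35 hC₁) (inv_nonneg.mpr hx0.le)
      _ = C₁ := by field_simp
  have hb2 : |∫ t in Set.Ioc 1 x, (t^2)⁻¹ * (F t - c * t)| ≤ 5/2 * C₁ := by
    have hg_int : IntegrableOn (fun t : ℝ => C₁ * t ^ (-(7:ℝ)/5)) (Set.Ioc 1 x) := by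
      refine ((continuousOn_const.mul (rpow_contOn x _)).integrableOn_Icc).mono_set
        Set.Ioc_subset_Icc_self
    have hbound : ∀ᵐ t ∂((volume : Measure ℝ).restrict (Set.Ioc 1 x)),
        ‖(t^2)⁻¹ * (F t - c * t)‖ ≤ C₁ * t ^ (-(7:ℝ)/5) := by
      rw [ae_restrict_iff' measurableSet_Ioc]
      refine Eventually.of_forall fun t ht => ?_
      have ht1 : (1:ℝ) ≤ t := ht.1.le
      have ht0 : (0:ℝ) < t := lt_of_lt_of_le zero_lt_one ht1
      rw [norm_mul, Real.norm_of_nonneg (inv_nonneg.mpr (sq_nonneg t))]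
      have h1 : ‖F t - c * t‖ ≤ C₁ * t ^ ((3:ℝ)/5) := hF t ht1
      calc (t^2)⁻¹ * ‖F t - c * t‖ ≤ (t^2)⁻¹ * (C₁ * t ^ ((3:ℝ)/5)) :=
            mul_le_mul_of_nonneg_left h1 (inv_nonneg.mpr (sq_nonneg t))
        _ = C₁ * t ^ (-(7:ℝ)/5) := by
            rw [show ((-(7:ℝ)/5)) = (3:ℝ)/5 + (-2 : ℝ) by norm_num,
              Real.rpow_add ht0, Real.rpow_neg ht0.le, Real.rpow_two]
            push_cast
            field_simp
    calc |∫ t in Set.Ioc 1 x, (t^2)⁻¹ * (F t - c * t)|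
        ≤ ∫ t in Set.Ioc 1 x, C₁ * t ^ (-(7:ℝ)/5) :=
          norm_integral_le_of_norm_le hg_int hbound
      _ = C₁ * ∫ t in Set.Ioc 1 x, t ^ (-(7:ℝ)/5) := MeasureTheory.integral_const_mul _ _
      _ ≤ C₁ * (5/2) := mul_le_mul_of_nonneg_left (integral_rpow_Ioc_le x hx) hC₁
      _ = 5/2 * C₁ := by ring
  calc |c + ((x⁻¹ * F x - c) + ∫ t in Set.Ioc 1 x, (t^2)⁻¹ * (F t - c * t))|
      ≤ |c| + |(x⁻¹ * F x - c) + ∫ t in Set.Ioc 1 x, (t^2)⁻¹ * (F t - c * t)| := abs_add_le _ _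
    _ ≤ |c| + (C₁ + 5/2 * C₁) := by
        refine add_le_add le_rfl (le_trans (abs_add_le _ _) (add_le_add hb1 hb2))

lemma P_estimate (f : ArithmeticFunction ℝ) (hf : ∀ n, 0 ≤ f n) (c C₀ : ℝ) (hC₀ : 0 ≤ C₀)
    (hT : ∀ t : ℝ, 1 ≤ t → |(∑ m ∈ Finset.Icc 0 ⌊t⌋₊, f m / m) - c * Real.log t| ≤ C₀)
    (j : ℕ) (x : ℝ) (hx : 1 ≤ x) :
    |(∑ d ∈ Finset.Icc 0 ⌊x⌋₊, (Real.log x - Real.log d)^(j+1) * (f d / d))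
      - c * Real.log x ^ (j+2) / (j+2)| ≤ C₀ * Real.log x ^ (j+1) := by
  have hx0 : (0:ℝ) < x := lt_of_lt_of_le zero_lt_one hx
  set L := Real.log x with hL
  set T : ℝ → ℝ := fun t => ∑ m ∈ Finset.Icc 0 ⌊t⌋₊, f m / m with hTdef
  set φ : ℝ → ℝ := fun t => (L - Real.log t)^(j+1) with hφdef
  have hne : ∀ t ∈ Set.Icc (1:ℝ) x, t ≠ 0 :=
    fun t ht => ne_of_gt (lt_of_lt_of_le zero_lt_one ht.1)
  have hd : ∀ t : ℝ, t ≠ 0 → HasDerivAt φ (((j:ℝ)+1) * (L - Real.log t)^j * (-t⁻¹)) t := by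
    intro t ht
    have h1 : HasDerivAt (fun u : ℝ => L - Real.log u) (-t⁻¹) t :=
      (Real.hasDerivAt_log ht).const_sub _
    have h2 := h1.pow (j+1)
    refine h2.congr_deriv ?_
    push_cast
    ring_nf
  have hdiff : ∀ t ∈ Set.Icc (1:ℝ) x, DifferentiableAt ℝ φ t :=
    fun t ht => (hd t (hne t ht)).differentiableAt
  have hψcont : ContinuousOn (fun t : ℝ => ((j:ℝ)+1) * (L - Real.log t)^j * (-t⁻¹))
      (Set.Icc 1 x) := by
    have hlog : ContinuousOn Real.log (Set.Icc 1 x) := by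
      have := logContOn x hx; rwa [Set.uIcc_of_le hx] at this
    exact ((continuousOn_const.mul ((continuousOn_const.sub hlog).pow j)).mul
      ((continuousOn_id.inv₀ hne).neg))
  have hderiv_int : IntegrableOn (deriv φ) (Set.Icc 1 x) := by
    refine (hψcont.integrableOn_Icc).congr_fun (fun t ht => ?_) measurableSet_Icc
    exact ((hd t (hne t ht)).deriv).symm
  have h0 : (fun n : ℕ => f n / n) 0 = 0 := by simp
  have habel := sum_mul_eq_sub_integral_mul₀ (c := fun n : ℕ => f n / n) (f := φ) h0 x hdiff
    hderiv_int
  have hφx : φ x = 0 := by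
    simp only [hφdef, hL, sub_self, zero_pow (Nat.succ_ne_zero j)]
  -- rewrite integral
  have hIeq : ∫ t in Set.Ioc 1 x, deriv φ t * T t
      = - ∫ t in Set.Ioc 1 x, (((j:ℝ)+1) * (L - Real.log t)^j * t⁻¹) * T t := by
    rw [← MeasureTheory.integral_neg]
    refine setIntegral_congr_fun measurableSet_Ioc (fun t ht => ?_)
    rw [(hd t (ne_of_gt (lt_trans zero_lt_one ht.1))).deriv]
    ring
  have hsum_eq : (∑ d ∈ Finset.Icc 0 ⌊x⌋₊, (L - Real.log d)^(j+1) * (f d / d))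
      = ∫ t in Set.Ioc 1 x, (((j:ℝ)+1) * (L - Real.log t)^j * t⁻¹) * T t := by
    rw [show (∑ d ∈ Finset.Icc 0 ⌊x⌋₊, (L - Real.log d)^(j+1) * (f d / d))
      = ∑ d ∈ Finset.Icc 0 ⌊x⌋₊, φ d * (f d / d) from rfl, habel, hφx, hIeq]
    ring
  -- integrability facts
  have hψ'cont : ContinuousOn (fun t : ℝ => ((j:ℝ)+1) * (L - Real.log t)^j * t⁻¹)
      (Set.Icc 1 x) := by
    have hlog : ContinuousOn Real.log (Set.Icc 1 x) := by
      have := logContOn x hx; rwa [Set.uIcc_of_le hx] at this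
    exact ((continuousOn_const.mul ((continuousOn_const.sub hlog).pow j)).mul
      (continuousOn_id.inv₀ hne))
  have hInt1 : IntegrableOn
      (fun t => (((j:ℝ)+1) * (L - Real.log t)^j * t⁻¹) * T t) (Set.Ioc 1 x) :=
    integrableOn_mul_partial (fun n => f n / n) (fun n => div_nonneg (hf n) (Nat.cast_nonneg n)) x hx hψ'cont
  have hlogcont : ContinuousOn
      (fun t : ℝ => (((j:ℝ)+1) * (L - Real.log t)^j * t⁻¹) * (c * Real.log t))
      (Set.Icc 1 x) := by
    have hlog : ContinuousOn Real.log (Set.Icc 1 x) := by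
      have := logContOn x hx; rwa [Set.uIcc_of_le hx] at this
    exact hψ'cont.mul (continuousOn_const.mul hlog)
  have hInt2 : IntegrableOn
      (fun t : ℝ => (((j:ℝ)+1) * (L - Real.log t)^j * t⁻¹) * (c * Real.log t))
      (Set.Ioc 1 x) := (hlogcont.integrableOn_Icc).mono_set Set.Ioc_subset_Icc_self
  -- main term
  have hmain : ∫ t in Set.Ioc 1 x, (((j:ℝ)+1) * (L - Real.log t)^j * t⁻¹) * (c * Real.log t)
      = c * L ^ (j+2) / (j+2) := by
    have : ∀ t ∈ Set.Ioc (1:ℝ) x,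
        (((j:ℝ)+1) * (L - Real.log t)^j * t⁻¹) * (c * Real.log t)
          = (c * ((j:ℝ)+1)) * ((L - Real.log t)^j * Real.log t / t) := by
      intro t ht
      have ht0 : t ≠ 0 := ne_of_gt (lt_trans zero_lt_one ht.1)
      field_simp
    rw [setIntegral_congr_fun measurableSet_Ioc this, MeasureTheory.integral_const_mul,
      integral_sub_log_pow_mul_log x hx j]
    have e1 : ((j:ℝ)+1) ≠ 0 := by positivity
    have e2 : ((j:ℝ)+2) ≠ 0 := by positivity
    push_cast
    field_simp
    ring
  -- split
  have hsplit : ∫ t in Set.Ioc 1 x, (((j:ℝ)+1) * (L - Real.log t)^j * t⁻¹) * T t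
      = (c * L ^ (j+2) / (j+2))
        + ∫ t in Set.Ioc 1 x,
            (((j:ℝ)+1) * (L - Real.log t)^j * t⁻¹) * (T t - c * Real.log t) := by
    rw [show (fun t : ℝ => (((j:ℝ)+1) * (L - Real.log t)^j * t⁻¹) * (T t - c * Real.log t))
      = fun t : ℝ => (((j:ℝ)+1) * (L - Real.log t)^j * t⁻¹) * T t
          - (((j:ℝ)+1) * (L - Real.log t)^j * t⁻¹) * (c * Real.log t) from
        funext fun t => by ring]
    rw [MeasureTheory.integral_sub hInt1 hInt2, hmain]
    ring
  -- error bound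
  have herr : |∫ t in Set.Ioc 1 x,
      (((j:ℝ)+1) * (L - Real.log t)^j * t⁻¹) * (T t - c * Real.log t)|
        ≤ C₀ * L ^ (j+1) := by
    have hg_int : IntegrableOn
        (fun t : ℝ => (C₀ * ((j:ℝ)+1)) * ((L - Real.log t)^j / t)) (Set.Ioc 1 x) := by
      have := contOn_aux x hx j
      rw [Set.uIcc_of_le hx] at this
      exact ((continuousOn_const.mul this).integrableOn_Icc).mono_set Set.Ioc_subset_Icc_self
    have hbound : ∀ᵐ t ∂((volume : Measure ℝ).restrict (Set.Ioc 1 x)),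
        ‖(((j:ℝ)+1) * (L - Real.log t)^j * t⁻¹) * (T t - c * Real.log t)‖
          ≤ (C₀ * ((j:ℝ)+1)) * ((L - Real.log t)^j / t) := by
      rw [ae_restrict_iff' measurableSet_Ioc]
      refine Eventually.of_forall fun t ht => ?_
      have ht1 : (1:ℝ) ≤ t := ht.1.le
      have ht0 : (0:ℝ) < t := lt_of_lt_of_le zero_lt_one ht1
      have hlogle : Real.log t ≤ L := Real.log_le_log ht0 ht.2
      have hpow_nonneg : (0:ℝ) ≤ (L - Real.log t)^j := by
        have : (0:ℝ) ≤ L - Real.log t := by linarith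
        positivity
      have hψpos : (0:ℝ) ≤ ((j:ℝ)+1) * (L - Real.log t)^j * t⁻¹ := by positivity
      rw [norm_mul, Real.norm_of_nonneg hψpos]
      calc (((j:ℝ)+1) * (L - Real.log t)^j * t⁻¹) * ‖T t - c * Real.log t‖
          ≤ (((j:ℝ)+1) * (L - Real.log t)^j * t⁻¹) * C₀ :=
            mul_le_mul_of_nonneg_left (hT t ht1) hψpos
        _ = (C₀ * ((j:ℝ)+1)) * ((L - Real.log t)^j / t) := by
            field_simp
    calc |∫ t in Set.Ioc 1 x,
        (((j:ℝ)+1) * (L - Real.log t)^j * t⁻¹) * (T t - c * Real.log t)|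
        ≤ ∫ t in Set.Ioc 1 x, (C₀ * ((j:ℝ)+1)) * ((L - Real.log t)^j / t) :=
          norm_integral_le_of_norm_le hg_int hbound
      _ = (C₀ * ((j:ℝ)+1)) * (L ^ (j+1) / (j+1)) := by
          rw [MeasureTheory.integral_const_mul, integral_sub_log_pow x hx j]
      _ = C₀ * L ^ (j+1) := by
          have e1 : ((j:ℝ)+1) ≠ 0 := by positivity
          push_cast
          field_simp
  rw [hsum_eq, hsplit]
  have : c * L ^ (j+2) / (j+2) + (∫ t in Set.Ioc 1 x,
      (((j:ℝ)+1) * (L - Real.log t)^j * t⁻¹) * (T t - c * Real.log t))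
        - c * L ^ (j+2) / (j+2)
      = ∫ t in Set.Ioc 1 x,
          (((j:ℝ)+1) * (L - Real.log t)^j * t⁻¹) * (T t - c * Real.log t) := by ring
  rw [this]
  exact herr


lemma hyperbola_s1 (g h : ArithmeticFunction ℝ) (N : ℕ) :
    ∑ m ∈ Finset.Icc 1 N, (g * h) m / m
      = ∑ d ∈ Finset.Icc 1 N, (g d / d) * ∑ e ∈ Finset.Icc 1 (N / d), h e / e := by
  have key : ∀ m ∈ Finset.Icc 1 N, (g * h) m / (m : ℝ)
      = ∑ p ∈ m.divisorsAntidiagonal, (g p.1 / p.1) * (h p.2 / p.2) := by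
    intro m hm
    rw [ArithmeticFunction.mul_apply, Finset.sum_div]
    refine Finset.sum_congr rfl fun p hp => ?_
    obtain ⟨hpm, hm0⟩ := Nat.mem_divisorsAntidiagonal.mp hp
    rw [← hpm]
    push_cast
    rw [div_mul_div_comm]
  rw [Finset.sum_congr rfl key]
  simp_rw [Finset.mul_sum]
  rw [Finset.sum_sigma' (Finset.Icc 1 N) (fun m => m.divisorsAntidiagonal) (fun _ p => (g p.1 / p.1) * (h p.2 / p.2)),
    Finset.sum_sigma' (Finset.Icc 1 N) (fun d => Finset.Icc 1 (N / d)) (fun d e => (g d / d) * (h e / e))]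
  refine Finset.sum_nbij' (fun p => ⟨p.2.1, p.2.2⟩) (fun p => ⟨p.1 * p.2, (p.1, p.2)⟩) ?_ ?_ ?_ ?_ ?_
  · rintro ⟨m, d, e⟩ hp
    simp only [Finset.mem_sigma, Finset.mem_Icc, Nat.mem_divisorsAntidiagonal] at hp ⊢
    obtain ⟨⟨h1, h2⟩, hde, hm0⟩ := hp
    have hd : 1 ≤ d := Nat.one_le_iff_ne_zero.mpr (fun hd0 => hm0 (by simp [← hde, hd0]))
    have he : 1 ≤ e := Nat.one_le_iff_ne_zero.mpr (fun he0 => hm0 (by simp [← hde, he0]))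
    refine ⟨⟨hd, le_trans (Nat.le_mul_of_pos_right d he) (hde ▸ h2)⟩, he, ?_⟩
    rw [Nat.le_div_iff_mul_le hd, mul_comm]
    exact hde ▸ h2
  · rintro ⟨d, e⟩ hp
    simp only [Finset.mem_sigma, Finset.mem_Icc, Nat.mem_divisorsAntidiagonal] at hp ⊢
    obtain ⟨⟨hd1, hdN⟩, he1, heN⟩ := hp
    have hde : d * e ≤ N := by
      rw [Nat.le_div_iff_mul_le hd1] at heN; rw [mul_comm]; exact heN
    refine ⟨⟨Nat.one_le_iff_ne_zero.mpr (by positivity), hde⟩, ?_⟩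
    exact ⟨trivial, by positivity⟩
  · rintro ⟨m, d, e⟩ hp
    simp only [Finset.mem_sigma, Nat.mem_divisorsAntidiagonal] at hp
    obtain ⟨_, hde, _⟩ := hp
    simp [hde]
  · rintro ⟨d, e⟩ _; rfl
  · rintro ⟨m, d, e⟩ _; rfl


lemma pow_le_pow_of_le_add_one {L : ℝ} (hL : 0 ≤ L) {a b : ℕ} (hab : a ≤ b) :
    L ^ a ≤ L ^ b + 1 := by
  rcases le_or_gt L 1 with h | h
  · have : L ^ a ≤ 1 := pow_le_one₀ hL h
    have : (0:ℝ) ≤ L ^ b := pow_nonneg hL b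
    linarith
  · have : L ^ a ≤ L ^ b := pow_le_pow_right₀ h.le hab
    linarith

lemma S_estimate (f : ArithmeticFunction ℝ) (hf : ∀ n, 0 ≤ f n) (c C₀ : ℝ)
    (hc : 0 ≤ c) (hC₀ : 0 ≤ C₀)
    (hT : ∀ t : ℝ, 1 ≤ t → |(∑ m ∈ Finset.Icc 0 ⌊t⌋₊, f m / m) - c * Real.log t| ≤ C₀) :
    ∀ k : ℕ, 1 ≤ k → ∃ C : ℝ, 0 ≤ C ∧ ∀ x : ℝ, 1 ≤ x →
      |(∑ m ∈ Finset.Icc 1 ⌊x⌋₊, (f^k) m / m)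
        - c^k * Real.log x ^ k / (Nat.factorial k)| ≤ C * (Real.log x ^ (k-1) + 1) := by
  refine Nat.le_induction ?_ ?_
  · -- base case k = 1
    refine ⟨C₀, hC₀, fun x hx => ?_⟩
    have hb := hT x hx
    rw [sum_Icc_zero_eq (fun m => f m / m) (by simp) ⌊x⌋₊] at hb
    simp only [pow_one, Nat.factorial_one, Nat.cast_one, div_one, Nat.sub_self, pow_zero]
    calc |(∑ m ∈ Finset.Icc 1 ⌊x⌋₊, f m / m) - c * Real.log x| ≤ C₀ := hb
      _ ≤ C₀ * (1 + 1) := by linarith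
  · -- inductive step
    rintro k hk1 ⟨C, hC0, hC⟩
    refine ⟨C * (2*c + 2*C₀) + c^k / (Nat.factorial k) * C₀, by positivity, fun x hx => ?_⟩
    obtain ⟨j, rfl⟩ : ∃ j, k = j + 1 := ⟨k - 1, (Nat.succ_pred_eq_of_pos hk1).symm⟩
    have hx0 : (0:ℝ) < x := lt_of_lt_of_le zero_lt_one hx
    set N := ⌊x⌋₊ with hN
    set L := Real.log x with hL
    have hL0 : 0 ≤ L := Real.log_nonneg hx
    -- the convolution identity
    have hconv : (∑ m ∈ Finset.Icc 1 N, (f^(j+1+1)) m / m)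
        = ∑ d ∈ Finset.Icc 1 N, (f d / d) *
            (∑ e ∈ Finset.Icc 1 (N/d), (f^(j+1)) e / e) := by
      rw [show f^(j+1+1) = f * f^(j+1) from pow_succ' f (j+1)]
      exact hyperbola_s1 f (f^(j+1)) N
    -- facts about d ∈ Icc 1 N
    have hdfacts : ∀ d ∈ Finset.Icc 1 N, (1:ℝ) ≤ (d:ℝ) ∧ (d:ℝ) ≤ x ∧ 1 ≤ x / d ∧
        Real.log (x / d) = L - Real.log d ∧ 0 ≤ Real.log d ∧ L - Real.log d ≤ L := by
      intro d hd
      obtain ⟨hd1, hdN⟩ := Finset.mem_Icc.mp hd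
      have hdr : (1:ℝ) ≤ (d:ℝ) := by exact_mod_cast hd1
      have hdx : (d:ℝ) ≤ x := le_trans (by exact_mod_cast hdN : (d:ℝ) ≤ (N:ℝ))
        (Nat.floor_le hx0.le)
      have hd0 : (0:ℝ) < d := lt_of_lt_of_le zero_lt_one hdr
      have hlog0 : 0 ≤ Real.log d := Real.log_nonneg hdr
      exact ⟨hdr, hdx, (one_le_div hd0).mpr hdx,
        Real.log_div (ne_of_gt hx0) (ne_of_gt hd0), hlog0, by linarith⟩
    -- inner sum estimate from inductive hypothesis
    have hSd : ∀ d ∈ Finset.Icc 1 N,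
        |(∑ e ∈ Finset.Icc 1 (N/d), (f^(j+1)) e / e)
          - c^(j+1) * (L - Real.log d)^(j+1) / (Nat.factorial (j+1))|
        ≤ C * (L^j + 1) := by
      intro d hd
      obtain ⟨hdr, hdx, hxd1, hlogd, hlog0, hsubL⟩ := hdfacts d hd
      have hIH := hC (x / d) hxd1
      rw [Nat.floor_div_natCast x d, hlogd] at hIH
      simp only [Nat.add_sub_cancel] at hIH
      have hsub0 : 0 ≤ L - Real.log d := by
        rw [← hlogd]; exact Real.log_nonneg hxd1
      have hpow : (L - Real.log d)^j ≤ L^j := pow_le_pow_left₀ hsub0 hsubL j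
      calc |(∑ e ∈ Finset.Icc 1 (N/d), (f^(j+1)) e / e)
          - c^(j+1) * (L - Real.log d)^(j+1) / (Nat.factorial (j+1))|
          ≤ C * ((L - Real.log d)^j + 1) := hIH
        _ ≤ C * (L^j + 1) := mul_le_mul_of_nonneg_left (by linarith) hC0
    -- split off the main term
    set P := ∑ d ∈ Finset.Icc 1 N, (L - Real.log d)^(j+1) * (f d / d) with hPdef
    have hP : |P - c * L^(j+2) / ((j:ℝ)+2)| ≤ C₀ * L^(j+1) := by
      have hPe := P_estimate f hf c C₀ hC₀ hT j x hx
      rw [sum_Icc_zero_eq (fun d => (Real.log x - Real.log d)^(j+1) * (f d / d))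
        (by simp) ⌊x⌋₊] at hPe
      rw [hPdef, hL, hN]
      exact hPe
    set E := ∑ d ∈ Finset.Icc 1 N, (f d / d) *
      ((∑ e ∈ Finset.Icc 1 (N/d), (f^(j+1)) e / e)
        - c^(j+1) * (L - Real.log d)^(j+1) / (Nat.factorial (j+1))) with hEdef
    have hAE : (∑ d ∈ Finset.Icc 1 N, (f d / d) *
        (∑ e ∈ Finset.Icc 1 (N/d), (f^(j+1)) e / e))
        = c^(j+1) / (Nat.factorial (j+1)) * P + E := by
      rw [hPdef, hEdef, Finset.mul_sum, ← Finset.sum_add_distrib]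
      exact Finset.sum_congr rfl fun d hd => by ring
    -- bound on E
    have hTx : (∑ d ∈ Finset.Icc 1 N, f d / d) ≤ C₀ + c * L := by
      have hb := hT x hx
      rw [sum_Icc_zero_eq (fun m => f m / m) (by simp) ⌊x⌋₊] at hb
      have := le_abs_self ((∑ m ∈ Finset.Icc 1 ⌊x⌋₊, f m / m) - c * Real.log x)
      rw [hN, hL]
      linarith
    have hE : |E| ≤ (C * (L^j + 1)) * (C₀ + c * L) := by
      have h1 : |E| ≤ ∑ d ∈ Finset.Icc 1 N, (f d / d) * (C * (L^j + 1)) := by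
        refine (Finset.abs_sum_le_sum_abs _ _).trans (Finset.sum_le_sum fun d hd => ?_)
        rw [abs_mul, abs_of_nonneg (div_nonneg (hf d) (Nat.cast_nonneg d))]
        exact mul_le_mul_of_nonneg_left (hSd d hd) (div_nonneg (hf d) (Nat.cast_nonneg d))
      rw [← Finset.sum_mul] at h1
      calc |E| ≤ (∑ d ∈ Finset.Icc 1 N, f d / d) * (C * (L^j + 1)) := h1
        _ ≤ (C₀ + c * L) * (C * (L^j + 1)) := by
            refine mul_le_mul_of_nonneg_right hTx (by positivity)
        _ = (C * (L^j + 1)) * (C₀ + c * L) := by ring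
    -- assemble
    rw [hconv, hAE]
    have hfact : (Nat.factorial (j+1+1) : ℝ) = ((j:ℝ)+2) * (Nat.factorial (j+1)) := by
      rw [Nat.factorial_succ]
      push_cast
      ring
    have hkey : c^(j+1) / (Nat.factorial (j+1)) * P + E
        - c^(j+1+1) * L^(j+1+1) / (Nat.factorial (j+1+1))
        = c^(j+1) / (Nat.factorial (j+1)) * (P - c * L^(j+2) / ((j:ℝ)+2)) + E := by
      rw [hfact]
      have hne1 : (Nat.factorial (j+1) : ℝ) ≠ 0 := by positivity
      have hne2 : ((j:ℝ)+2) ≠ 0 := by positivity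
      field_simp
      ring
    rw [hkey]
    have hq : (0:ℝ) ≤ c^(j+1) / (Nat.factorial (j+1)) := by positivity
    have hstep1 : |c^(j+1) / (Nat.factorial (j+1)) * (P - c * L^(j+2) / ((j:ℝ)+2)) + E|
        ≤ c^(j+1) / (Nat.factorial (j+1)) * (C₀ * L^(j+1)) + (C * (L^j + 1)) * (C₀ + c * L) := by
      refine (abs_add_le _ _).trans (add_le_add ?_ hE)
      rw [abs_mul, abs_of_nonneg hq]
      exact mul_le_mul_of_nonneg_left hP hq
    -- final numeric bounds
    have hpj : L^j ≤ L^(j+1) + 1 := pow_le_pow_of_le_add_one hL0 (Nat.le_succ j)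
    have hpl : L ≤ L^(j+1) + 1 := by
      have := pow_le_pow_of_le_add_one hL0 (show 1 ≤ j+1 by omega)
      rwa [pow_one] at this
    have hmul : L^j * L = L^(j+1) := (pow_succ L j).symm
    have hpow0 : (0:ℝ) ≤ L^j := pow_nonneg hL0 j
    have hpow1 : (0:ℝ) ≤ L^(j+1) := pow_nonneg hL0 (j+1)
    simp only [Nat.add_sub_cancel]
    have h2 : c^(j+1) / (Nat.factorial (j+1)) * (C₀ * L^(j+1))
        ≤ c^(j+1) / (Nat.factorial (j+1)) * C₀ * (L^(j+1) + 1) := by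
      nlinarith [mul_nonneg hq hC₀]
    have h3 : (C * (L^j + 1)) * (C₀ + c * L) ≤ C * (2*c + 2*C₀) * (L^(j+1) + 1) := by
      nlinarith [mul_nonneg hC0 hC₀, mul_nonneg hC0 hc, mul_nonneg (mul_nonneg hC0 hc) hpow1,
        mul_nonneg (mul_nonneg hC0 hC₀) hpow1, mul_nonneg hC0 (mul_nonneg hc hL0)]
    linarith

/-- If `f` is a nonnegative arithmetic function with
`∑_{m ≤ M} f(m) = c·M + O(M^{3/5})`, then for every `k ≥ 1`,
`∑_{m ≤ M} f^{*k}(m)/m = c^k · (log M)^k / k! + O((log M)^{k-1})`. -/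
theorem sum_dirichlet_convolution_pow_div_asymptotic
    (f : ArithmeticFunction ℝ) (hf : ∀ n, 0 ≤ f n) (c : ℝ) (hc : 0 ≤ c)
    (h : (fun M : ℝ => (∑ m ∈ Finset.Icc 1 ⌊M⌋₊, f m) - c * M)
      =O[atTop] fun M : ℝ => M ^ ((3 : ℝ) / 5))
    (k : ℕ) (hk : 1 ≤ k) :
    (fun M : ℝ =>
        (∑ m ∈ Finset.Icc 1 ⌊M⌋₊, (f ^ k) m / m)
          - c ^ k * Real.log M ^ k / (Nat.factorial k))
      =O[atTop] fun M : ℝ => Real.log M ^ (k - 1) := by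
  rw [Asymptotics.isBigO_iff] at h
  obtain ⟨C₁, hC₁⟩ := h
  rw [eventually_atTop] at hC₁
  obtain ⟨x₀, hx₀⟩ := hC₁
  set x₁ : ℝ := max x₀ 1 with hx₁def
  have hx₁1 : (1:ℝ) ≤ x₁ := le_max_right _ _
  set K : ℝ := (∑ m ∈ Finset.Icc 1 ⌊x₁⌋₊, f m) + c * x₁ with hKdef
  have hK0 : 0 ≤ K :=
    add_nonneg (Finset.sum_nonneg fun m _ => hf m) (mul_nonneg hc (by linarith))
  set C₂ : ℝ := |C₁| + K with hC₂def
  have hC₂0 : 0 ≤ C₂ := add_nonneg (abs_nonneg _) hK0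
  have hF : ∀ t : ℝ, 1 ≤ t →
      |(∑ m ∈ Finset.Icc 0 ⌊t⌋₊, f m) - c * t| ≤ C₂ * t ^ ((3:ℝ)/5) := by
    intro t ht
    have ht0 : (0:ℝ) < t := lt_of_lt_of_le zero_lt_one ht
    have hrp1 : (1:ℝ) ≤ t ^ ((3:ℝ)/5) := Real.one_le_rpow ht (by norm_num)
    have hrp0 : (0:ℝ) ≤ t ^ ((3:ℝ)/5) := by linarith
    rw [sum_Icc_zero_eq (fun m => (f m : ℝ)) (by simp) ⌊t⌋₊]
    rcases le_or_gt x₀ t with hcase | hcase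
    · have hb := hx₀ t hcase
      rw [Real.norm_eq_abs, Real.norm_eq_abs,
        abs_of_nonneg (Real.rpow_nonneg ht0.le _)] at hb
      calc |(∑ m ∈ Finset.Icc 1 ⌊t⌋₊, f m) - c * t| ≤ C₁ * t ^ ((3:ℝ)/5) := hb
        _ ≤ C₂ * t ^ ((3:ℝ)/5) := by
            refine mul_le_mul_of_nonneg_right ?_ hrp0
            rw [hC₂def]
            calc C₁ ≤ |C₁| := le_abs_self _
              _ ≤ |C₁| + K := by linarith
    · have htx₁ : t ≤ x₁ := le_trans hcase.le (le_max_left _ _)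
      have n1 : (0:ℝ) ≤ ∑ m ∈ Finset.Icc 1 ⌊t⌋₊, f m :=
        Finset.sum_nonneg fun m _ => hf m
      have n2 : (0:ℝ) ≤ c * t := mul_nonneg hc ht0.le
      have h2 : (∑ m ∈ Finset.Icc 1 ⌊t⌋₊, f m) ≤ ∑ m ∈ Finset.Icc 1 ⌊x₁⌋₊, f m :=
        Finset.sum_le_sum_of_subset_of_nonneg
          (Finset.Icc_subset_Icc le_rfl (Nat.floor_le_floor htx₁)) (fun m _ _ => hf m)
      have h3 : c * t ≤ c * x₁ := mul_le_mul_of_nonneg_left htx₁ hc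
      have h1 : |(∑ m ∈ Finset.Icc 1 ⌊t⌋₊, f m) - c * t| ≤ K := by
        rw [abs_le, hKdef]
        constructor <;> linarith
      calc |(∑ m ∈ Finset.Icc 1 ⌊t⌋₊, f m) - c * t| ≤ K := h1
        _ ≤ K * t ^ ((3:ℝ)/5) := le_mul_of_one_le_right hK0 hrp1
        _ ≤ C₂ * t ^ ((3:ℝ)/5) := by
            refine mul_le_mul_of_nonneg_right ?_ hrp0
            rw [hC₂def]
            linarith [abs_nonneg C₁]
  set C₀ : ℝ := |c| + (C₂ + 5/2 * C₂) with hC₀def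
  have hC₀0 : 0 ≤ C₀ := by
    rw [hC₀def]
    linarith [abs_nonneg c]
  have hT : ∀ t : ℝ, 1 ≤ t →
      |(∑ m ∈ Finset.Icc 0 ⌊t⌋₊, f m / m) - c * Real.log t| ≤ C₀ :=
    fun t ht => T_estimate f hf c C₂ hC₂0 hF t ht
  obtain ⟨C, hC0, hS⟩ := S_estimate f hf c C₀ hc hC₀0 hT k hk
  rw [Asymptotics.isBigO_iff]
  refine ⟨2 * C, ?_⟩
  have hexp1 : (1:ℝ) ≤ Real.exp 1 := by linarith [Real.add_one_le_exp 1]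
  filter_upwards [eventually_ge_atTop (Real.exp 1)] with M hM
  have hM1 : (1:ℝ) ≤ M := le_trans hexp1 hM
  have hL1 : (1:ℝ) ≤ Real.log M := by
    rw [Real.le_log_iff_exp_le (by linarith)]
    exact hM
  have hLp : (1:ℝ) ≤ Real.log M ^ (k-1) := one_le_pow₀ hL1
  rw [Real.norm_eq_abs, Real.norm_eq_abs,
    abs_of_nonneg (by linarith : (0:ℝ) ≤ Real.log M ^ (k-1))]
  calc |(∑ m ∈ Finset.Icc 1 ⌊M⌋₊, (f ^ k) m / m)
      - c ^ k * Real.log M ^ k / (Nat.factorial k)|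
      ≤ C * (Real.log M ^ (k-1) + 1) := hS M hM1
    _ ≤ 2 * C * Real.log M ^ (k-1) := by nlinarith
end

section
/- Let f : {1,2,3,...} → ℝ be a nonnegative arithmetic function and let c ≥ 0 be a real number such that ∑_{m ≤ M} f(m) = c·M + O(M^{3/5}) as M → ∞. Fix integers k ≥ 1 and n ≥ 0 and a real number A ≥ 1. Then there is a constant C (depending only on f, k, n, A) such that for all real M ≥ 3, all real M' with M ≤ M' ≤ M^A, and all complex γ with |γ| ≤ A/log M, one has |∑_{m ≤ M} f^{*k}(m)·(log(M'/m))^n·(M'/m)^{-γ}/m − (c^k (M')^{-γ} (log M)^k/(k-1)!)·∫_0^1 M^{γ r} r^{k-1} (log(M'/M^r))^n dr| ≤ C (log M)^{k+n-1}. -/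
open Filter Finset
open MeasureTheory intervalIntegral

namespace SDC

lemma sum_Icc0_eq {𝕜 : Type*} [AddCommMonoid 𝕜] (g : ℕ → 𝕜) (hg : g 0 = 0) (N : ℕ) :
    ∑ m ∈ Finset.Icc 0 N, g m = ∑ m ∈ Finset.Icc 1 N, g m := by
  rw [show (1:ℕ) = 0 + 1 from rfl, Finset.Icc_add_one_left_eq_Ioc, Finset.Icc_eq_cons_Ioc (Nat.zero_le N),
    Finset.sum_cons, hg, zero_add]

lemma sum_rearrange {M : Type*} [AddCommMonoid M] (R : ℕ → ℕ → M) (N : ℕ) :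
    ∑ m ∈ Finset.Icc 1 N, ∑ p ∈ m.divisorsAntidiagonal, R p.1 p.2
      = ∑ d ∈ Finset.Icc 1 N, ∑ e ∈ Finset.Icc 1 (N / d), R d e := by
  rw [Finset.sum_sigma', Finset.sum_sigma']
  refine Finset.sum_nbij' (fun x => ⟨x.2.1, x.2.2⟩) (fun x => ⟨x.1 * x.2, (x.1, x.2)⟩)
    ?_ ?_ ?_ ?_ ?_
  · rintro ⟨m, d, e⟩ hx
    simp only [Finset.mem_sigma, Finset.mem_Icc, Nat.mem_divisorsAntidiagonal] at hx ⊢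
    obtain ⟨⟨hm1, hmN⟩, hde, hm0⟩ := hx
    have hd : 0 < d := by
      rcases Nat.eq_zero_or_pos d with h | h
      · exfalso; apply hm0; subst h; simpa using hde.symm
      · exact h
    have he : 0 < e := by
      rcases Nat.eq_zero_or_pos e with h | h
      · exfalso; apply hm0; subst h; simpa using hde.symm
      · exact h
    refine ⟨⟨hd, le_trans (Nat.le_of_dvd (by omega) ⟨e, hde.symm⟩) hmN⟩, he, ?_⟩
    rw [Nat.le_div_iff_mul_le hd, mul_comm]
    omega
  · rintro ⟨d, e⟩ hx
    simp only [Finset.mem_sigma, Finset.mem_Icc, Nat.mem_divisorsAntidiagonal] at hx ⊢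
    obtain ⟨⟨hd1, hdN⟩, he1, heN⟩ := hx
    have hde : e * d ≤ N := (Nat.le_div_iff_mul_le hd1).mp heN
    have h1 : 1 ≤ d * e := Nat.one_le_iff_ne_zero.mpr (by positivity)
    exact ⟨⟨h1, by rwa [mul_comm]⟩, trivial, by positivity⟩
  · rintro ⟨m, d, e⟩ hx
    simp only [Finset.mem_sigma, Nat.mem_divisorsAntidiagonal] at hx
    simp [hx.2.1]
  · rintro ⟨d, e⟩ _; rfl
  · rintro ⟨m, d, e⟩ _; rfl


lemma pow_nonneg_apply (f : ArithmeticFunction ℝ) (hf : ∀ n, 0 ≤ f n) (k : ℕ) (hk : 1 ≤ k) :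
    ∀ m, 0 ≤ (f ^ k) m := by
  induction k with
  | zero => omega
  | succ k ih =>
    rcases Nat.eq_zero_or_pos k with rfl | hk'
    · simpa using hf
    · intro m
      rw [pow_succ, ArithmeticFunction.mul_apply]
      exact Finset.sum_nonneg fun p _ => mul_nonneg (ih hk' p.1) (hf p.2)

/-- Abel summation with an explicit derivative. -/
lemma abelHelper {𝕜 : Type*} [RCLike 𝕜] (cseq : ℕ → 𝕜) (hc0 : cseq 0 = 0) {b : ℝ} (hb : 1 ≤ b)
    {w wD : ℝ → 𝕜} (hw : ∀ s : ℝ, 0 < s → HasDerivAt w (wD s) s)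
    (hwD : ContinuousOn wD (Set.Icc 1 b)) :
    ∑ m ∈ Finset.Icc 0 ⌊b⌋₊, w m * cseq m
      = w b * (∑ m ∈ Finset.Icc 0 ⌊b⌋₊, cseq m)
        - ∫ s in Set.Ioc 1 b, wD s * (∑ m ∈ Finset.Icc 0 ⌊s⌋₊, cseq m) := by
  have hpos : ∀ s ∈ Set.Icc (1:ℝ) b, (0:ℝ) < s := fun s hs => lt_of_lt_of_le one_pos hs.1
  have hdiff : ∀ s ∈ Set.Icc (1:ℝ) b, DifferentiableAt ℝ w s :=
    fun s hs => (hw s (hpos s hs)).differentiableAt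
  have hEq : ∀ s ∈ Set.Icc (1:ℝ) b, deriv w s = wD s :=
    fun s hs => (hw s (hpos s hs)).deriv
  have hint : IntegrableOn (deriv w) (Set.Icc 1 b) :=
    (hwD.integrableOn_Icc).congr_fun (fun s hs => (hEq s hs).symm) measurableSet_Icc
  rw [sum_mul_eq_sub_integral_mul₀ cseq hc0 b hdiff hint]
  congr 1
  refine setIntegral_congr_fun measurableSet_Ioc fun s hs => ?_
  rw [hEq s ⟨le_of_lt hs.1, hs.2⟩]

/-- Global error bound from the big-O hypothesis. -/
lemma exists_global_bound (f : ArithmeticFunction ℝ) (hf : ∀ n, 0 ≤ f n) (c : ℝ) (hc : 0 ≤ c)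
    (h : (fun M : ℝ => (∑ m ∈ Finset.Icc 1 ⌊M⌋₊, f m) - c * M)
      =O[atTop] fun M : ℝ => M ^ ((3 : ℝ) / 5)) :
    ∃ B : ℝ, 0 ≤ B ∧ ∀ t : ℝ, 1 ≤ t →
      |(∑ m ∈ Finset.Icc 1 ⌊t⌋₊, f m) - c * t| ≤ B * t ^ ((3:ℝ)/5) := by
  obtain ⟨C₀, hC₀⟩ := h.isBigOWith
  rw [Asymptotics.isBigOWith_iff, eventually_atTop] at hC₀
  obtain ⟨t₀', ht₀'⟩ := hC₀
  set t₀ : ℝ := max t₀' 1 with ht₀def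
  have ht₀1 : (1:ℝ) ≤ t₀ := le_max_right _ _
  set B : ℝ := max C₀ 0 + ((∑ m ∈ Finset.Icc 1 ⌊t₀⌋₊, f m) + c * t₀) with hBdef
  have hsum_nonneg : ∀ u : ℝ, 0 ≤ ∑ m ∈ Finset.Icc 1 ⌊u⌋₊, f m :=
    fun u => Finset.sum_nonneg fun m _ => hf m
  have hB0 : 0 ≤ B := by
    have := hsum_nonneg t₀
    have : 0 ≤ c * t₀ := mul_nonneg hc (by linarith)
    positivity
  refine ⟨B, hB0, fun t ht => ?_⟩
  have htpow : (1:ℝ) ≤ t ^ ((3:ℝ)/5) := Real.one_le_rpow ht (by norm_num)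
  rcases le_or_gt t₀ t with hcase | hcase
  · have := ht₀' t (le_trans (le_max_left _ _) hcase)
    rw [Real.norm_eq_abs, Real.norm_eq_abs, Real.abs_rpow_of_nonneg (by linarith)] at this
    rw [abs_of_nonneg (by linarith : (0:ℝ) ≤ t)] at this
    refine this.trans ?_
    have h1 : C₀ ≤ B := by
      have := hsum_nonneg t₀
      have : 0 ≤ c * t₀ := mul_nonneg hc (by linarith)
      have : C₀ ≤ max C₀ 0 := le_max_left _ _
      linarith [hsum_nonneg t₀, mul_nonneg hc (le_trans zero_le_one ht₀1)]
    exact mul_le_mul_of_nonneg_right h1 (by linarith)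
  · have hmono : (∑ m ∈ Finset.Icc 1 ⌊t⌋₊, f m) ≤ ∑ m ∈ Finset.Icc 1 ⌊t₀⌋₊, f m := by
      refine Finset.sum_le_sum_of_subset_of_nonneg ?_ (fun m _ _ => hf m)
      exact Finset.Icc_subset_Icc le_rfl (Nat.floor_le_floor hcase.le)
    have hct : c * t ≤ c * t₀ := mul_le_mul_of_nonneg_left hcase.le hc
    have habs : |(∑ m ∈ Finset.Icc 1 ⌊t⌋₊, f m) - c * t|
        ≤ (∑ m ∈ Finset.Icc 1 ⌊t₀⌋₊, f m) + c * t₀ := by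
      rw [abs_sub_le_iff]
      constructor
      · have := mul_nonneg hc (le_trans zero_le_one ht)
        linarith [hsum_nonneg t]
      · have := hsum_nonneg t
        linarith
    calc |(∑ m ∈ Finset.Icc 1 ⌊t⌋₊, f m) - c * t|
        ≤ (∑ m ∈ Finset.Icc 1 ⌊t₀⌋₊, f m) + c * t₀ := habs
      _ ≤ B := le_add_of_nonneg_left (le_max_right C₀ 0)
      _ = B * 1 := (mul_one B).symm
      _ ≤ B * t ^ ((3:ℝ)/5) := mul_le_mul_of_nonneg_left htpow hB0


set_option maxHeartbeats 2000000 in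
lemma lemQ (f : ArithmeticFunction ℝ) (hf : ∀ n, 0 ≤ f n) (c : ℝ) (hc : 0 ≤ c)
    (h : (fun M : ℝ => (∑ m ∈ Finset.Icc 1 ⌊M⌋₊, f m) - c * M)
      =O[atTop] fun M : ℝ => M ^ ((3 : ℝ) / 5)) (j : ℕ) :
    ∃ C : ℝ, 0 ≤ C ∧ ∀ t : ℝ, 1 ≤ t →
      |(∑ e ∈ Finset.Icc 1 ⌊t⌋₊, f e * Real.log (t / e) ^ j / e)
        - c * Real.log t ^ (j+1) / (j+1)| ≤ C * (1 + Real.log t) ^ j := by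
  obtain ⟨B, hB0, hB⟩ := exists_global_bound f hf c hc h
  refine ⟨2*c + (c+B) + (5/2)*B*(j+1), by positivity, fun t ht => ?_⟩
  have ht0 : (0:ℝ) < t := lt_of_lt_of_le one_pos ht
  set L := Real.log t with hLdef
  have hL0 : 0 ≤ L := Real.log_nonneg ht
  set w : ℝ → ℝ := fun s => (L - Real.log s)^j / s with hwdef
  set wD : ℝ → ℝ :=
    fun s => -((j:ℝ) * (L - Real.log s)^(j-1) + (L - Real.log s)^j) / s^2 with hwDdef
  have hderiv : ∀ s : ℝ, 0 < s → HasDerivAt w (wD s) s := by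
    intro s hs
    have h1 : HasDerivAt (fun s : ℝ => L - Real.log s) (-s⁻¹) s := by
      simpa using (Real.hasDerivAt_log hs.ne').const_sub L
    have h3 := (h1.pow j).div (hasDerivAt_id s) hs.ne'
    have heq : ((j:ℝ) * (L - Real.log s) ^ (j - 1) * -s⁻¹ * id s - (L - Real.log s) ^ j * 1)
        / id s ^ 2 = wD s := by
      simp only [id_eq, hwDdef]
      rw [mul_assoc ((j:ℝ) * (L - Real.log s) ^ (j - 1)) (-s⁻¹) s, neg_mul,
        inv_mul_cancel₀ hs.ne']
      ring
    exact h3.congr_deriv heq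
  have hwDcont : ContinuousOn wD (Set.Icc 1 t) := by
    intro s hs
    have hs0 : s ≠ 0 := ne_of_gt (lt_of_lt_of_le one_pos hs.1)
    have hlog : ContinuousAt Real.log s := Real.continuousAt_log hs0
    exact ContinuousAt.continuousWithinAt
      (((((continuousAt_const.sub hlog).pow (j-1)).const_mul _).add
        ((continuousAt_const.sub hlog).pow j)).neg.div
        ((continuous_pow 2).continuousAt) (pow_ne_zero 2 hs0))
  have habel := abelHelper (𝕜 := ℝ) (fun m => f m) f.map_zero
      ht hderiv hwDcont
  set Ffun : ℝ → ℝ := fun s => ∑ m ∈ Finset.Icc 0 ⌊s⌋₊, f m with hFdef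
  have hFIcc1 : ∀ s : ℝ, Ffun s = ∑ m ∈ Finset.Icc 1 ⌊s⌋₊, f m :=
    fun s => sum_Icc0_eq _ f.map_zero _
  have hE : ∀ s : ℝ, 1 ≤ s → |Ffun s - c * s| ≤ B * s ^ ((3:ℝ)/5) := by
    intro s hs; rw [hFIcc1]; exact hB s hs
  have hF0 : ∀ s : ℝ, 0 ≤ Ffun s := fun s => Finset.sum_nonneg fun m _ => hf m
  have hFmeas : Measurable Ffun := by
    exact (measurable_from_top (f := fun N : ℕ => ∑ m ∈ Finset.Icc 0 N, f m)).comp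
      Nat.measurable_floor
  have hwDmeas : Measurable wD := by
    apply Measurable.div
    · apply Measurable.neg
      apply Measurable.add
      · exact (measurable_const.mul ((measurable_const.sub Real.measurable_log).pow_const _))
      · exact (measurable_const.sub Real.measurable_log).pow_const _
    · exact (measurable_id.pow_const 2)
  -- bound on wD
  have hwDbound : ∀ s : ℝ, 1 ≤ s → s ≤ t →
      |wD s| ≤ ((j:ℝ)+1) * (1+L)^j / s^2 := by
    intro s hs1 hst
    have hs0 : (0:ℝ) < s := lt_of_lt_of_le one_pos hs1
    have hx0 : 0 ≤ L - Real.log s := by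
      have := Real.log_le_log hs0 hst
      simp only [hLdef]; linarith
    have hx1 : L - Real.log s ≤ 1 + L := by
      have := Real.log_nonneg hs1
      linarith
    have h1L : (1:ℝ) ≤ 1 + L := by linarith
    have hp1 : (L - Real.log s)^(j-1) ≤ (1+L)^j :=
      le_trans (pow_le_pow_left₀ hx0 hx1 (j-1)) (pow_le_pow_right₀ h1L (Nat.sub_le j 1))
    have hp2 : (L - Real.log s)^j ≤ (1+L)^j := pow_le_pow_left₀ hx0 hx1 j
    have hnum : |-((j:ℝ) * (L - Real.log s)^(j-1) + (L - Real.log s)^j)|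
        ≤ ((j:ℝ)+1) * (1+L)^j := by
      rw [abs_neg, abs_of_nonneg (by positivity)]
      have : (j:ℝ) * (L - Real.log s)^(j-1) ≤ (j:ℝ) * (1+L)^j :=
        mul_le_mul_of_nonneg_left hp1 (Nat.cast_nonneg j)
      linarith
    simp only [hwDdef, abs_div, abs_pow, abs_of_pos hs0]
    exact (div_le_div_iff_of_pos_right (by positivity)).mpr hnum
  set g2 : ℝ → ℝ := fun s => wD s * (c * s) with hg2def
  set g1 : ℝ → ℝ := fun s => wD s * (Ffun s - c * s) with hg1def
  have hg2cont : ContinuousOn g2 (Set.Icc 1 t) :=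
    hwDcont.mul (continuous_const.mul continuous_id).continuousOn
  have hI2 : IntegrableOn g2 (Set.Ioc 1 t) :=
    (hg2cont.integrableOn_Icc).mono_set Set.Ioc_subset_Icc_self
  have hI1 : IntegrableOn g1 (Set.Ioc 1 t) := by
    refine Measure.integrableOn_of_bounded
      (M := (((j:ℝ)+1) * (1+L)^j) * (B * t ^ ((3:ℝ)/5))) (measure_Ioc_lt_top).ne ?_ ?_
    · exact (hwDmeas.mul (hFmeas.sub (measurable_const.mul measurable_id))).aestronglyMeasurable
    · refine (ae_restrict_iff' measurableSet_Ioc).mpr (ae_of_all _ fun s hs => ?_)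
      have hs1 : (1:ℝ) ≤ s := le_of_lt hs.1
      have hs0 : (0:ℝ) < s := lt_of_lt_of_le one_pos hs1
      have h1 : |wD s| ≤ ((j:ℝ)+1) * (1+L)^j := by
        refine (hwDbound s hs1 hs.2).trans ?_
        refine div_le_self (by positivity) ?_
        nlinarith
      have h2 : |Ffun s - c * s| ≤ B * t ^ ((3:ℝ)/5) := by
        refine (hE s hs1).trans (mul_le_mul_of_nonneg_left ?_ hB0)
        exact Real.rpow_le_rpow (le_of_lt hs0) hs.2 (by norm_num)
      rw [Real.norm_eq_abs, hg1def, abs_mul]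
      exact mul_le_mul h1 h2 (abs_nonneg _) (by positivity)
  have hsplit : (∫ s in Set.Ioc 1 t, wD s * Ffun s)
      = (∫ s in Set.Ioc 1 t, g2 s) + ∫ s in Set.Ioc 1 t, g1 s := by
    rw [← integral_add hI2 hI1]
    refine setIntegral_congr_fun measurableSet_Ioc fun s hs => ?_
    simp only [hg2def, hg1def]; ring
  have hg2int : (∫ s in Set.Ioc 1 t, g2 s)
      = c * (0:ℝ)^j - (c * L^j + c * L^(j+1)/((j:ℝ)+1)) := by
    rw [← intervalIntegral.integral_of_le ht]
    have hΦ : ∀ s ∈ Set.uIcc (1:ℝ) t, HasDerivAt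
        (fun s => c * ((L - Real.log s)^j + (L - Real.log s)^(j+1)/((j:ℝ)+1))) (g2 s) s := by
      intro s hs
      rw [Set.uIcc_of_le ht] at hs
      have hs0 : (0:ℝ) < s := lt_of_lt_of_le one_pos hs.1
      have h1 : HasDerivAt (fun s : ℝ => L - Real.log s) (-s⁻¹) s := by
        simpa using (Real.hasDerivAt_log hs0.ne').const_sub L
      have h2 := ((h1.pow j).add ((h1.pow (j+1)).div_const ((j:ℝ)+1))).const_mul c
      refine h2.congr_deriv ?_
      symm
      simp only [hg2def, hwDdef, Nat.add_sub_cancel]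
      have hjj : ((j:ℝ)+1) ≠ 0 := by positivity
      push_cast
      field_simp
      ring
    rw [intervalIntegral.integral_eq_sub_of_hasDerivAt hΦ
      ((ContinuousOn.intervalIntegrable (by rw [Set.uIcc_of_le ht]; exact hg2cont)))]
    simp only [sub_self, Real.log_one, sub_zero]
    rw [← hLdef, sub_self, zero_pow (Nat.succ_ne_zero j)]
    ring
  have hint_rpow : (∫ s in Set.Ioc 1 t, s ^ (-(7:ℝ)/5)) ≤ 5/2 := by
    rw [← intervalIntegral.integral_of_le ht, integral_rpow (Or.inr ⟨by norm_num,
      by rw [Set.uIcc_of_le ht]; intro hmem; linarith [hmem.1]⟩)]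
    have h1 : (0:ℝ) ≤ t ^ (-(7:ℝ)/5 + 1) := Real.rpow_nonneg (le_of_lt ht0) _
    rw [Real.one_rpow, div_le_iff_of_neg (by norm_num : (-(7:ℝ)/5+1) < 0)]
    linarith
  have hmajcont : ContinuousOn (fun s : ℝ => (B*((j:ℝ)+1)*(1+L)^j) * s ^ (-(7:ℝ)/5))
      (Set.Icc 1 t) := by
    refine continuousOn_const.mul fun s hs => ?_
    exact (Real.continuousAt_rpow_const s _
      (Or.inl (ne_of_gt (lt_of_lt_of_le one_pos hs.1)))).continuousWithinAt
  have hmajint : IntegrableOn (fun s : ℝ => (B*((j:ℝ)+1)*(1+L)^j) * s ^ (-(7:ℝ)/5))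
      (Set.Ioc 1 t) := (hmajcont.integrableOn_Icc).mono_set Set.Ioc_subset_Icc_self
  have hg1bound : ∀ s ∈ Set.Ioc (1:ℝ) t,
      |g1 s| ≤ (B*((j:ℝ)+1)*(1+L)^j) * s ^ (-(7:ℝ)/5) := by
    intro s hs
    have hs1 : (1:ℝ) ≤ s := le_of_lt hs.1
    have hs0 : (0:ℝ) < s := lt_of_lt_of_le one_pos hs1
    have e1 : |g1 s| ≤ (((j:ℝ)+1) * (1+L)^j / s^2) * (B * s ^ ((3:ℝ)/5)) := by
      rw [hg1def, abs_mul]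
      exact mul_le_mul (hwDbound s hs1 hs.2) (hE s hs1) (abs_nonneg _) (by positivity)
    refine e1.trans_eq ?_
    rw [show s ^ (-(7:ℝ)/5) = s ^ ((3:ℝ)/5) / s^2 by
      rw [← Real.rpow_natCast s 2, ← Real.rpow_sub hs0]; norm_num]
    ring
  have hIg1 : |∫ s in Set.Ioc 1 t, g1 s| ≤ (B*((j:ℝ)+1)*(1+L)^j) * (5/2) := by
    have h1 : |∫ s in Set.Ioc 1 t, g1 s| ≤ ∫ s in Set.Ioc 1 t, |g1 s| := by
      simpa [Real.norm_eq_abs] using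
        MeasureTheory.norm_integral_le_integral_norm (μ := volume.restrict (Set.Ioc 1 t)) g1
    have h2 : (∫ s in Set.Ioc 1 t, |g1 s|)
        ≤ ∫ s in Set.Ioc 1 t, (B*((j:ℝ)+1)*(1+L)^j) * s ^ (-(7:ℝ)/5) :=
      setIntegral_mono_on hI1.abs hmajint measurableSet_Ioc hg1bound
    have h3 : (∫ s in Set.Ioc 1 t, (B*((j:ℝ)+1)*(1+L)^j) * s ^ (-(7:ℝ)/5))
        = (B*((j:ℝ)+1)*(1+L)^j) * ∫ s in Set.Ioc 1 t, s ^ (-(7:ℝ)/5) :=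
      MeasureTheory.integral_const_mul _ _
    have h4 : (B*((j:ℝ)+1)*(1+L)^j) * (∫ s in Set.Ioc 1 t, s ^ (-(7:ℝ)/5))
        ≤ (B*((j:ℝ)+1)*(1+L)^j) * (5/2) :=
      mul_le_mul_of_nonneg_left hint_rpow (by positivity)
    linarith
  -- rewrite the sum
  have hsum1 : (∑ e ∈ Finset.Icc 1 ⌊t⌋₊, f e * Real.log (t / e) ^ j / e)
      = ∑ m ∈ Finset.Icc 0 ⌊t⌋₊, w m * f m := by
    rw [sum_Icc0_eq (fun m => w m * f m) (by simp [hwdef, f.map_zero])]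
    refine Finset.sum_congr rfl fun m hm => ?_
    have hm1 : 1 ≤ m := (Finset.mem_Icc.mp hm).1
    have hm0 : ((m:ℝ)) ≠ 0 := ne_of_gt (by exact_mod_cast Nat.pos_of_ne_zero (by omega))
    simp only [hwdef]
    rw [Real.log_div ht0.ne' hm0]
    ring
  have hwt : |w t * Ffun t| ≤ c + B := by
    have hFt : Ffun t ≤ (c + B) * t := by
      have h5 := abs_le.mp (hE t ht)
      have h35 : t ^ ((3:ℝ)/5) ≤ t := by
        nth_rewrite 2 [← Real.rpow_one t]
        exact Real.rpow_le_rpow_of_exponent_le ht (by norm_num)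
      nlinarith [h5.2]
    have h0j1 : (0:ℝ)^j ≤ 1 := by
      rcases Nat.eq_zero_or_pos j with rfl | hj
      · simp
      · simp [zero_pow (Nat.pos_iff_ne_zero.mp hj)]
    have hwt0 : w t ≤ 1/t := by
      simp only [hwdef, hLdef, sub_self]
      exact (div_le_div_iff_of_pos_right ht0).mpr h0j1
    have hwtpos : 0 ≤ w t := by
      simp only [hwdef, hLdef, sub_self]; positivity
    rw [abs_of_nonneg (mul_nonneg hwtpos (hF0 t))]
    calc w t * Ffun t ≤ (1/t) * ((c+B)*t) :=
          mul_le_mul hwt0 hFt (hF0 t) (by positivity)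
      _ = c + B := by field_simp
  have h0j : |c * (0:ℝ)^j| ≤ c := by
    rcases Nat.eq_zero_or_pos j with rfl | hj
    · simp [abs_of_nonneg hc]
    · simp [zero_pow (Nat.pos_iff_ne_zero.mp hj), hc]
  have hLj : |c * L^j| ≤ c * (1+L)^j := by
    rw [abs_of_nonneg (by positivity)]
    exact mul_le_mul_of_nonneg_left (pow_le_pow_left₀ hL0 (by linarith) j) hc
  have honepow : (1:ℝ) ≤ (1+L)^j := by
    calc (1:ℝ) = 1^j := (one_pow j).symm
      _ ≤ (1+L)^j := pow_le_pow_left₀ (by norm_num) (by linarith) j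
  -- final assembly
  beta_reduce at habel
  have hfin : (∑ m ∈ Finset.Icc 0 ⌊t⌋₊, w m * f m) - c * Real.log t ^ (j+1) / (j+1)
      = w t * Ffun t - c*(0:ℝ)^j + c*L^j - ∫ s in Set.Ioc 1 t, g1 s := by
    rw [habel]
    have h9 : (∫ s in Set.Ioc 1 t, wD s * ∑ m ∈ Finset.Icc 0 ⌊s⌋₊, (f : ℕ → ℝ) m)
        = (∫ s in Set.Ioc 1 t, wD s * Ffun s) := rfl
    rw [h9, hsplit, hg2int, hFdef]
    push_cast
    ring
  have e1 := abs_le.mp hwt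
  have e2 := abs_le.mp h0j
  have e3 := abs_le.mp hLj
  have e4 := abs_le.mp hIg1
  have hj0 : (0:ℝ) ≤ (j:ℝ) := Nat.cast_nonneg j
  have key : ∀ X Z W I u : ℝ, 1 ≤ u → |X| ≤ c + B → |Z| ≤ c → |W| ≤ c * u →
      |I| ≤ (5/2)*B*((j:ℝ)+1)*u →
      |X - Z + W - I| ≤ (2*c + (c+B) + (5/2)*B*((j:ℝ)+1)) * u := by
    intro X Z W I u hu e1 e2 e3 e4
    rw [abs_le] at e1 e2 e3 e4 ⊢
    constructor
    · nlinarith [mul_nonneg hc (sub_nonneg.mpr hu), mul_nonneg hB0 (sub_nonneg.mpr hu),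
        mul_nonneg (mul_nonneg hB0 hj0) (sub_nonneg.mpr hu)]
    · nlinarith [mul_nonneg hc (sub_nonneg.mpr hu), mul_nonneg hB0 (sub_nonneg.mpr hu),
        mul_nonneg (mul_nonneg hB0 hj0) (sub_nonneg.mpr hu)]
  have habs : |w t * Ffun t - c*(0:ℝ)^j + c*L^j - ∫ s in Set.Ioc 1 t, g1 s|
      ≤ (2*c + (c+B) + (5/2)*B*((j:ℝ)+1)) * (1+L)^j := by
    refine key _ _ _ _ _ honepow hwt h0j hLj ?_
    refine hIg1.trans_eq ?_
    ring
  rw [hsum1]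
  exact (congrArg abs hfin).trans_le habs



set_option maxHeartbeats 2000000 in
lemma lemP (f : ArithmeticFunction ℝ) (hf : ∀ n, 0 ≤ f n) (c : ℝ) (hc : 0 ≤ c)
    (h : (fun M : ℝ => (∑ m ∈ Finset.Icc 1 ⌊M⌋₊, f m) - c * M)
      =O[atTop] fun M : ℝ => M ^ ((3 : ℝ) / 5)) :
    ∀ k : ℕ, 1 ≤ k → ∃ C : ℝ, 0 ≤ C ∧ ∀ t : ℝ, 1 ≤ t →
      |(∑ m ∈ Finset.Icc 1 ⌊t⌋₊, (f ^ k) m / m)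
        - c ^ k * Real.log t ^ k / (k.factorial : ℝ)| ≤ C * (1 + Real.log t) ^ (k-1) := by
  intro k
  induction k with
  | zero => omega
  | succ k ih =>
    intro _
    rcases Nat.eq_zero_or_pos k with rfl | hk'
    · -- base case k+1 = 1
      obtain ⟨C, hC0, hC⟩ := lemQ f hf c hc h 0
      refine ⟨C, hC0, fun t ht => ?_⟩
      have h1 := hC t ht
      have hsum : (∑ m ∈ Finset.Icc 1 ⌊t⌋₊, (f ^ 1) m / m)
          = ∑ e ∈ Finset.Icc 1 ⌊t⌋₊, f e * Real.log (t/e) ^ 0 / e := by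
        refine Finset.sum_congr rfl fun m hm => ?_
        rw [pow_one, pow_zero]; ring
      rw [hsum]
      simpa using h1
    · -- inductive step
      obtain ⟨Ck, hCk0, hCk⟩ := ih hk'
      obtain ⟨C0, hC00, hC0'⟩ := lemQ f hf c hc h 0
      obtain ⟨Cq, hCq0, hCq⟩ := lemQ f hf c hc h k
      refine ⟨Ck * (c + C0) + c^k/(k.factorial : ℝ) * Cq, by positivity, fun t ht => ?_⟩
      have ht0 : (0:ℝ) < t := lt_of_lt_of_le one_pos ht
      set L := Real.log t with hLdef
      have hL0 : 0 ≤ L := Real.log_nonneg ht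
      set N := ⌊t⌋₊ with hNdef
      have hdfacts : ∀ d : ℕ, d ∈ Finset.Icc 1 N → (1:ℝ) ≤ (d:ℝ) ∧ (d:ℝ) ≤ t := by
        intro d hd
        obtain ⟨hd1, hdN⟩ := Finset.mem_Icc.mp hd
        constructor
        · exact_mod_cast hd1
        · calc (d:ℝ) ≤ (N:ℝ) := by exact_mod_cast hdN
            _ ≤ t := Nat.floor_le (le_of_lt ht0)
      -- rearrangement
      have hre : (∑ m ∈ Finset.Icc 1 N, (f ^ (k+1)) m / m)
          = ∑ d ∈ Finset.Icc 1 N, (f d / d) * (∑ e ∈ Finset.Icc 1 ⌊t / (d:ℝ)⌋₊, (f^k) e / e) := by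
        have h2 : ∀ m ∈ Finset.Icc 1 N, ((f ^ (k+1)) m : ℝ) / m
            = ∑ p ∈ m.divisorsAntidiagonal, (f p.1 / p.1) * ((f^k) p.2 / p.2) := by
          intro m hm
          rw [pow_succ', ArithmeticFunction.mul_apply, Finset.sum_div]
          refine Finset.sum_congr rfl fun p hp => ?_
          obtain ⟨hpm, hm0⟩ := Nat.mem_divisorsAntidiagonal.mp hp
          have hp1 : p.1 ≠ 0 := by intro h0; rw [h0, zero_mul] at hpm; exact hm0 hpm.symm
          have hp2 : p.2 ≠ 0 := by intro h0; rw [h0, mul_zero] at hpm; exact hm0 hpm.symm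
          have hmcast : ((m:ℕ):ℝ) = (p.1:ℝ) * (p.2:ℝ) := by rw [← hpm]; push_cast; ring
          rw [hmcast]
          have hp1' : (p.1:ℝ) ≠ 0 := Nat.cast_ne_zero.mpr hp1
          have hp2' : (p.2:ℝ) ≠ 0 := Nat.cast_ne_zero.mpr hp2
          field_simp
        rw [Finset.sum_congr rfl h2,
          sum_rearrange (fun d e => ((f d : ℝ) / d) * ((f^k) e / e)) N]
        refine Finset.sum_congr rfl fun d hd => ?_
        rw [Finset.mul_sum, hNdef, ← Nat.floor_div_natCast t d]
      rw [hre]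
      -- bounds
      have hGk : ∀ d ∈ Finset.Icc 1 N,
          |(∑ e ∈ Finset.Icc 1 ⌊t / (d:ℝ)⌋₊, (f^k) e / e)
            - c^k * Real.log (t/d) ^ k / (k.factorial : ℝ)| ≤ Ck * (1+L)^(k-1) := by
        intro d hd
        obtain ⟨hd1, hdt⟩ := hdfacts d hd
        have htd1 : (1:ℝ) ≤ t / d := (one_le_div (lt_of_lt_of_le one_pos hd1)).mpr hdt
        refine (hCk (t/d) htd1).trans (mul_le_mul_of_nonneg_left ?_ hCk0)
        have hlog1 : Real.log (t/d) ≤ L := Real.log_le_log (by positivity)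
          (div_le_self (le_of_lt ht0) hd1)
        have hlog0 : 0 ≤ Real.log (t/d) := Real.log_nonneg htd1
        exact pow_le_pow_left₀ (by linarith) (by linarith) _
      have hfd0 : ∀ d : ℕ, (0:ℝ) ≤ f d / d := by
        intro d
        rcases Nat.eq_zero_or_pos d with rfl | hd
        · simp [f.map_zero]
        · exact div_nonneg (hf d) (by positivity)
      -- step 1
      have hstep1 : |(∑ d ∈ Finset.Icc 1 N, (f d / d) * (∑ e ∈ Finset.Icc 1 ⌊t / (d:ℝ)⌋₊, (f^k) e / e))
          - c^k/(k.factorial : ℝ) * (∑ d ∈ Finset.Icc 1 N, f d * Real.log (t/d)^k / d)|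
          ≤ (Ck * (1+L)^(k-1)) * (∑ d ∈ Finset.Icc 1 N, f d / d) := by
        rw [Finset.mul_sum, ← Finset.sum_sub_distrib]
        refine (Finset.abs_sum_le_sum_abs _ _).trans ?_
        rw [Finset.mul_sum]
        refine Finset.sum_le_sum fun d hd => ?_
        have heq : f d / d * (∑ e ∈ Finset.Icc 1 ⌊t / (d:ℝ)⌋₊, (f^k) e / e)
            - c^k/(k.factorial : ℝ) * (f d * Real.log (t/d)^k / d)
            = (f d / d) * ((∑ e ∈ Finset.Icc 1 ⌊t / (d:ℝ)⌋₊, (f^k) e / e)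
              - c^k * Real.log (t/d)^k / (k.factorial : ℝ)) := by ring
        rw [heq, abs_mul, abs_of_nonneg (hfd0 d)]
        calc (f d / d) * |(∑ e ∈ Finset.Icc 1 ⌊t / (d:ℝ)⌋₊, (f^k) e / e)
              - c^k * Real.log (t/d)^k / (k.factorial : ℝ)|
            ≤ (f d / d) * (Ck * (1+L)^(k-1)) :=
              mul_le_mul_of_nonneg_left (hGk d hd) (hfd0 d)
          _ = Ck * (1+L)^(k-1) * (f d / d) := mul_comm _ _
      -- bound on the harmonic-type sum
      have hQ0 := hC0' t ht
      have hq0sum : (∑ e ∈ Finset.Icc 1 N, f e * Real.log (t/e)^0 / e)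
          = ∑ d ∈ Finset.Icc 1 N, f d / d :=
        Finset.sum_congr rfl fun d hd => by rw [pow_zero]; ring
      have hsumfd : (∑ d ∈ Finset.Icc 1 N, f d / d) ≤ (c + C0) * (1 + L) := by
        rw [← hq0sum]
        have h6 := (abs_le.mp hQ0).2
        simp only [pow_zero, pow_one, mul_one, Nat.cast_zero, zero_add, div_one] at h6
        nlinarith [mul_nonneg hC00 hL0]
      have hQk := hCq t ht
      have hiden : c^(k+1) * L^(k+1) / (((k+1).factorial : ℕ) : ℝ)
          = c^k/(k.factorial:ℝ) * (c * L^(k+1) / ((k:ℝ)+1)) := by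
        rw [Nat.factorial_succ]
        have h1 : ((k:ℝ)+1) ≠ 0 := by positivity
        have h2 : ((k.factorial : ℕ) : ℝ) ≠ 0 := Nat.cast_ne_zero.mpr (Nat.factorial_pos k).ne'
        push_cast
        field_simp
        ring
      have habs2 : |c^k/(k.factorial:ℝ) * (∑ d ∈ Finset.Icc 1 N, f d * Real.log (t/d)^k / d)
            - c^(k+1) * L^(k+1) / (((k+1).factorial : ℕ) : ℝ)|
          = c^k/(k.factorial:ℝ)
            * |(∑ d ∈ Finset.Icc 1 N, f d * Real.log (t/d)^k / d)
                - c * L^(k+1) / ((k:ℝ)+1)| := by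
        rw [hiden, ← mul_sub, abs_mul, abs_of_nonneg (by positivity)]
      have hexp : (1+L)^(k-1) * (1+L) = (1+L)^k := by
        rw [← pow_succ]
        congr 1
        omega
      have hfinal : |(∑ d ∈ Finset.Icc 1 N, (f d / d)
            * (∑ e ∈ Finset.Icc 1 ⌊t / (d:ℝ)⌋₊, (f^k) e / e))
          - c^(k+1) * L^(k+1) / (((k+1).factorial : ℕ) : ℝ)|
          ≤ (Ck * (c + C0) + c^k/(k.factorial : ℝ) * Cq) * (1+L)^k := by
        refine (abs_sub_le _ (c^k/(k.factorial:ℝ)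
          * (∑ d ∈ Finset.Icc 1 N, f d * Real.log (t/d)^k / d)) _).trans ?_
        have hb1 : |(∑ d ∈ Finset.Icc 1 N, (f d / d)
              * (∑ e ∈ Finset.Icc 1 ⌊t / (d:ℝ)⌋₊, (f^k) e / e))
            - c^k/(k.factorial:ℝ) * (∑ d ∈ Finset.Icc 1 N, f d * Real.log (t/d)^k / d)|
            ≤ (Ck * (1+L)^(k-1)) * ((c + C0) * (1 + L)) :=
          hstep1.trans (mul_le_mul_of_nonneg_left hsumfd (by positivity))
        have hb2 : c^k/(k.factorial:ℝ)
              * |(∑ d ∈ Finset.Icc 1 N, f d * Real.log (t/d)^k / d)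
                - c * L^(k+1) / ((k:ℝ)+1)|
            ≤ c^k/(k.factorial:ℝ) * (Cq * (1+L)^k) :=
          mul_le_mul_of_nonneg_left hQk (by positivity)
        rw [habs2]
        have heq2 : (Ck * (1+L)^(k-1)) * ((c + C0) * (1 + L))
            = Ck * (c + C0) * ((1+L)^(k-1) * (1+L)) := by ring
        calc _ ≤ (Ck * (1+L)^(k-1)) * ((c + C0) * (1 + L))
              + c^k/(k.factorial:ℝ) * (Cq * (1+L)^k) := add_le_add hb1 hb2
          _ = (Ck * (c + C0) + c^k/(k.factorial : ℝ) * Cq) * (1+L)^k := by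
              rw [heq2, hexp]; ring
      simpa only [Nat.add_sub_cancel] using hfinal


set_option maxHeartbeats 4000000 in
lemma finalAux (f : ArithmeticFunction ℝ) (hf : ∀ n, 0 ≤ f n) (c : ℝ) (hc : 0 ≤ c)
    (k n : ℕ) (hk : 1 ≤ k) (A : ℝ) (hA : 1 ≤ A) (CP : ℝ) (hCP0 : 0 ≤ CP)
    (hCP : ∀ t : ℝ, 1 ≤ t →
      |(∑ m ∈ Finset.Icc 1 ⌊t⌋₊, (f ^ k) m / m)
        - c ^ k * Real.log t ^ k / (k.factorial : ℝ)| ≤ CP * (1 + Real.log t) ^ (k-1))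
    (M : ℝ) (hM : 3 ≤ M) (M' : ℝ) (hMM' : M ≤ M') (hM'MA : M' ≤ M ^ A)
    (γ : ℂ) (hγ : ‖γ‖ ≤ A / Real.log M) :
    ‖(∑ m ∈ Finset.Icc 1 ⌊M⌋₊,
          (((f ^ k) m * Real.log (M' / m) ^ n / m : ℝ) : ℂ)
            * Complex.exp (-γ * Real.log (M' / m)))
        - ((c ^ k : ℝ) : ℂ) * Complex.exp (-γ * Real.log M')
            * ((Real.log M ^ k / (Nat.factorial (k - 1)) : ℝ) : ℂ)
            * ∫ r in (0:ℝ)..1,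
                Complex.exp (γ * r * Real.log M)
                  * ((r ^ (k - 1) * Real.log (M' / M ^ r) ^ n : ℝ) : ℂ)‖
      ≤ (CP * 2^(k-1) * (A^n * Real.exp (A^2))
          + CP * 2^(k-1) * (((n : ℝ) * A^n + A^(n+1)) * Real.exp (A^2)))
        * Real.log M ^ (k + n - 1) := by
  have hM0 : (0:ℝ) < M := by linarith
  have hM1 : (1:ℝ) ≤ M := by linarith
  have hM'0 : (0:ℝ) < M' := by linarith
  set L := Real.log M with hLdef
  set L' := Real.log M' with hL'def
  have hL1 : (1:ℝ) ≤ L := by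
    have he : Real.exp 1 < M := by
      have := Real.exp_one_lt_d9
      linarith
    have := Real.log_le_log (Real.exp_pos 1) he.le
    rwa [Real.log_exp] at this
  have hL0 : (0:ℝ) < L := by linarith
  have hLL' : L ≤ L' := Real.log_le_log hM0 hMM'
  have hL'AL : L' ≤ A * L := by
    have := Real.log_le_log hM'0 hM'MA
    rwa [Real.log_rpow hM0] at this
  have hL'0 : 0 ≤ L' := by linarith
  have hγx : ∀ x : ℝ, 0 ≤ x → x ≤ A * L → ‖γ‖ * x ≤ A^2 := by
    intro x hx0 hxA
    calc ‖γ‖ * x ≤ (A / L) * (A * L) :=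
          mul_le_mul hγ hxA hx0 (by positivity)
      _ = A^2 := by field_simp
  have hexpbound : ∀ x : ℝ, 0 ≤ x → x ≤ A * L →
      ‖Complex.exp (-γ * (x:ℂ))‖ ≤ Real.exp (A^2) := by
    intro x hx0 hxA
    rw [Complex.norm_exp]
    refine Real.exp_le_exp.mpr ?_
    calc (-γ * (x:ℂ)).re ≤ ‖(-γ * (x:ℂ))‖ := Complex.re_le_norm _
      _ = ‖γ‖ * |x| := by rw [norm_mul, norm_neg, Complex.norm_real, Real.norm_eq_abs]
      _ = ‖γ‖ * x := by rw [abs_of_nonneg hx0]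
      _ ≤ A^2 := hγx x hx0 hxA
  -- the sequence and the weight
  set cseq : ℕ → ℂ := fun m => (((f^k) m / m : ℝ) : ℂ) with hcseq
  have hc0 : cseq 0 = 0 := by simp [hcseq]
  set ℓ : ℝ → ℝ := fun s => L' - Real.log s with hℓ
  set W : ℝ → ℂ := fun s => ((ℓ s ^ n : ℝ) : ℂ) * Complex.exp (-γ * ((ℓ s : ℝ) : ℂ)) with hW
  set WD : ℝ → ℂ := fun s =>
      (((n : ℝ) * ℓ s ^ (n-1) * (-s⁻¹) : ℝ) : ℂ) * Complex.exp (-γ * ((ℓ s : ℝ) : ℂ))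
      + ((ℓ s ^ n : ℝ) : ℂ) * (Complex.exp (-γ * ((ℓ s : ℝ) : ℂ)) * (-γ * (((-s⁻¹ : ℝ)) : ℂ)))
    with hWD
  have hℓreal : ∀ s : ℝ, 0 < s → HasDerivAt ℓ (-s⁻¹) s := by
    intro s hs
    simpa using (Real.hasDerivAt_log hs.ne').const_sub L'
  have hℓd : ∀ s : ℝ, 0 < s → HasDerivAt (fun s => ((ℓ s : ℝ) : ℂ)) (((-s⁻¹ : ℝ) : ℂ)) s :=
    fun s hs => (hℓreal s hs).ofReal_comp
  have hWderiv : ∀ s : ℝ, 0 < s → HasDerivAt W (WD s) s := by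
    intro s hs
    have h3 : HasDerivAt (fun s : ℝ => ((ℓ s ^ n : ℝ) : ℂ))
        ((((n : ℝ) * ℓ s ^ (n-1) * (-s⁻¹) : ℝ)) : ℂ) s := ((hℓreal s hs).pow n).ofReal_comp
    have h4 : HasDerivAt (fun s : ℝ => -γ * ((ℓ s : ℝ) : ℂ)) (-γ * (((-s⁻¹ : ℝ)) : ℂ)) s :=
      (hℓd s hs).const_mul (-γ)
    have h5 : HasDerivAt (fun s : ℝ => Complex.exp (-γ * ((ℓ s : ℝ) : ℂ)))
        (Complex.exp (-γ * ((ℓ s : ℝ) : ℂ)) * (-γ * (((-s⁻¹ : ℝ)) : ℂ))) s := h4.cexp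
    exact h3.mul h5
  have hℓca : ∀ s : ℝ, s ≠ 0 → ContinuousAt ℓ s :=
    fun s hs0 => continuousAt_const.sub (Real.continuousAt_log hs0)
  have hecont : ∀ s : ℝ, s ≠ 0 →
      ContinuousAt (fun s => Complex.exp (-γ * ((ℓ s : ℝ) : ℂ))) s := by
    intro s hs0
    exact Complex.continuous_exp.continuousAt.comp (continuousAt_const.mul
      (Complex.continuous_ofReal.continuousAt.comp (hℓca s hs0)))
  have hicont : ∀ s : ℝ, s ≠ 0 → ContinuousAt (fun s : ℝ => (((-s⁻¹ : ℝ)) : ℂ)) s := by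
    intro s hs0
    exact Complex.continuous_ofReal.continuousAt.comp ((continuousAt_inv₀ hs0).neg)
  have hWcont : ContinuousOn W (Set.Icc 1 M) := by
    intro s hs
    have hs0 : s ≠ 0 := ne_of_gt (lt_of_lt_of_le one_pos hs.1)
    exact ((Complex.continuous_ofReal.continuousAt.comp ((hℓca s hs0).pow n)).mul
      (hecont s hs0)).continuousWithinAt
  have hWDcont : ContinuousOn WD (Set.Icc 1 M) := by
    intro s hs
    have hs0 : s ≠ 0 := ne_of_gt (lt_of_lt_of_le one_pos hs.1)
    have hc1 : ContinuousAt (fun s : ℝ => (((n : ℝ) * ℓ s ^ (n-1) * (-s⁻¹) : ℝ) : ℂ)) s :=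
      Complex.continuous_ofReal.continuousAt.comp
        ((continuousAt_const.mul ((hℓca s hs0).pow (n-1))).mul ((continuousAt_inv₀ hs0).neg))
    exact ((hc1.mul (hecont s hs0)).add
      ((Complex.continuous_ofReal.continuousAt.comp ((hℓca s hs0).pow n)).mul
        ((hecont s hs0).mul (continuousAt_const.mul (hicont s hs0))))).continuousWithinAt
  have habel := abelHelper (𝕜 := ℂ) cseq hc0 hM1 hWderiv hWDcont
  -- identify the statement's sum with the Abel sum
  have hsum : (∑ m ∈ Finset.Icc 1 ⌊M⌋₊,
        (((f ^ k) m * Real.log (M' / m) ^ n / m : ℝ) : ℂ)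
          * Complex.exp (-γ * Real.log (M' / m)))
      = ∑ m ∈ Finset.Icc 0 ⌊M⌋₊, W m * cseq m := by
    rw [sum_Icc0_eq (fun m => W (m : ℕ) * cseq m) (by simp [hc0])]
    refine Finset.sum_congr rfl fun m hm => ?_
    have hm1 : 1 ≤ m := (Finset.mem_Icc.mp hm).1
    have hm0 : ((m:ℝ)) ≠ 0 := Nat.cast_ne_zero.mpr (by omega)
    have hlog : Real.log (M' / m) = ℓ m := by
      rw [hℓ, Real.log_div hM'0.ne' hm0, hL'def]
    rw [hlog]
    simp only [hW, hcseq]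
    push_cast
    ring
  -- the G function and the P function
  set G : ℝ → ℂ := fun s => ∑ m ∈ Finset.Icc 0 ⌊s⌋₊, cseq m with hG
  set P : ℝ → ℝ := fun s => Real.log s ^ k / (k.factorial : ℝ) with hPdef
  set PD : ℝ → ℝ := fun s => (k : ℝ) * Real.log s ^ (k-1) * s⁻¹ / (k.factorial : ℝ) with hPDdef
  have hPderiv : ∀ s : ℝ, 0 < s → HasDerivAt P (PD s) s := fun s hs =>
    ((Real.hasDerivAt_log hs.ne').pow k).div_const _
  have hPcont : ContinuousOn (fun s => ((P s : ℝ) : ℂ)) (Set.Icc 1 M) := by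
    intro s hs
    have hs0 : s ≠ 0 := ne_of_gt (lt_of_lt_of_le one_pos hs.1)
    exact (Complex.continuous_ofReal.continuousAt.comp
      (((Real.continuousAt_log hs0).pow k).div_const _)).continuousWithinAt
  have hPDcont : ContinuousOn (fun s => ((PD s : ℝ) : ℂ)) (Set.Icc 1 M) := by
    intro s hs
    have hs0 : s ≠ 0 := ne_of_gt (lt_of_lt_of_le one_pos hs.1)
    exact (Complex.continuous_ofReal.continuousAt.comp
      (((continuousAt_const.mul ((Real.continuousAt_log hs0).pow (k-1))).mul
        (continuousAt_inv₀ hs0)).div_const _)).continuousWithinAt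
  -- FTC for P·W
  have hi1 : IntervalIntegrable (fun s => ((PD s : ℝ) : ℂ) * W s) volume 1 M :=
    ContinuousOn.intervalIntegrable (by rw [Set.uIcc_of_le hM1]; exact hPDcont.mul hWcont)
  have hi2 : IntervalIntegrable (fun s => ((P s : ℝ) : ℂ) * WD s) volume 1 M :=
    ContinuousOn.intervalIntegrable (by rw [Set.uIcc_of_le hM1]; exact hPcont.mul hWDcont)
  have hftc : (∫ s in (1:ℝ)..M, (((PD s : ℝ) : ℂ) * W s + ((P s : ℝ) : ℂ) * WD s))
      = ((P M : ℝ) : ℂ) * W M - ((P 1 : ℝ) : ℂ) * W 1 := by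
    refine intervalIntegral.integral_eq_sub_of_hasDerivAt
      (f := fun s => ((P s : ℝ) : ℂ) * W s) (fun s hs => ?_) (hi1.add hi2)
    rw [Set.uIcc_of_le hM1] at hs
    have hs0 : (0:ℝ) < s := lt_of_lt_of_le one_pos hs.1
    exact ((hPderiv s hs0).ofReal_comp).mul (hWderiv s hs0)
  have hP1 : P 1 = 0 := by
    simp [hPdef, Real.log_one, zero_pow (by omega : k ≠ 0)]
  have hsplit2 : (∫ s in (1:ℝ)..M, ((PD s : ℝ) : ℂ) * W s)
      = ((P M : ℝ) : ℂ) * W M - ∫ s in (1:ℝ)..M, ((P s : ℝ) : ℂ) * WD s := by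
    rw [intervalIntegral.integral_add hi1 hi2, hP1] at hftc
    simp only [Complex.ofReal_zero, zero_mul, sub_zero] at hftc
    linear_combination hftc
  -- change of variables in the main-term integral
  set J : ℂ := ∫ r in (0:ℝ)..1, Complex.exp (γ * r * Real.log M)
      * ((r ^ (k - 1) * Real.log (M' / M ^ r) ^ n : ℝ) : ℂ) with hJ
  set g : ℝ → ℂ := fun s => ((Real.log s ^ (k-1) : ℝ) : ℂ) * W s * ((s : ℂ))⁻¹ with hg
  have hgcont : ContinuousOn g (Set.Icc 1 M) := by
    intro s hs
    have hs0 : s ≠ 0 := ne_of_gt (lt_of_lt_of_le one_pos hs.1)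
    have hsC : ((s : ℝ) : ℂ) ≠ 0 := Complex.ofReal_ne_zero.mpr hs0
    refine (ContinuousWithinAt.mul (ContinuousWithinAt.mul ?_ (hWcont s hs)) ?_)
    · exact (Complex.continuous_ofReal.continuousAt.comp
        ((Real.continuousAt_log hs0).pow (k-1))).continuousWithinAt
    · exact ((continuousAt_inv₀ hsC).comp
        Complex.continuous_ofReal.continuousAt).continuousWithinAt
  have hφd : ∀ r : ℝ, HasDerivAt (fun r : ℝ => Real.exp (r * L)) (Real.exp (r * L) * L) r :=
    fun r => (hasDerivAt_mul_const L).exp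
  have himg : (fun r : ℝ => Real.exp (r * L)) '' (Set.uIcc 0 1) ⊆ Set.Icc 1 M := by
    rintro x ⟨r, hr, rfl⟩
    rw [Set.uIcc_of_le zero_le_one] at hr
    constructor
    · rw [show (1:ℝ) = Real.exp 0 from Real.exp_zero.symm]
      exact Real.exp_le_exp.mpr (by nlinarith [hr.1, hr.2, hL0])
    · rw [show M = Real.exp L from (Real.exp_log hM0).symm]
      exact Real.exp_le_exp.mpr (by nlinarith [hr.1, hr.2, hL0])
  have hCV0 : (∫ r in (0:ℝ)..1, (Real.exp (r * L) * L) • g (Real.exp (r * L)))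
      = ∫ s in (1:ℝ)..M, g s := by
    have hcv := intervalIntegral.integral_comp_smul_deriv'' (f := fun r => Real.exp (r*L))
      (f' := fun r => Real.exp (r*L) * L) (g := g) (a := 0) (b := 1)
      ((Real.continuous_exp.comp (continuous_id.mul continuous_const)).continuousOn)
      (fun r _ => (hφd r).hasDerivWithinAt)
      (((Real.continuous_exp.comp (continuous_id.mul continuous_const)).mul
        continuous_const).continuousOn)
      (hgcont.mono himg)
    simp only [zero_mul, one_mul, Real.exp_zero, Real.exp_log hM0] at hcv
    rw [show Real.exp L = M from Real.exp_log hM0] at hcv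
    exact hcv
  have hpt : ∀ r : ℝ, (Real.exp (r * L) * L) • g (Real.exp (r * L))
      = ((L ^ k : ℝ) : ℂ) * (Complex.exp (-γ * ((L' : ℝ) : ℂ))
          * (Complex.exp (γ * r * Real.log M)
            * ((r ^ (k - 1) * Real.log (M' / M ^ r) ^ n : ℝ) : ℂ))) := by
    intro r
    have h1 : Real.log (Real.exp (r * L)) = r * L := Real.log_exp _
    have h2 : Real.log (M' / M ^ r) = L' - r * L := by
      rw [Real.log_div hM'0.ne' (Real.rpow_pos_of_pos hM0 r).ne', Real.log_rpow hM0]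
    have hE : ((Real.exp (r*L) : ℝ) : ℂ) ≠ 0 := Complex.ofReal_ne_zero.mpr (Real.exp_ne_zero _)
    have hℓr : ℓ (Real.exp (r * L)) = L' - r * L := by
      simp only [hℓ, h1]
    have hexp2 : Complex.exp (-γ * ((ℓ (Real.exp (r * L)) : ℝ) : ℂ))
        = Complex.exp (-γ * ((L' : ℝ) : ℂ)) * Complex.exp (γ * r * (L : ℝ)) := by
      rw [← Complex.exp_add, hℓr]
      congr 1
      push_cast
      ring
    have hLk : (L:ℝ)^k = L^(k-1) * L := by
      rw [← pow_succ]
      congr 1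
      omega
    have hsplitexp : ∀ z w : ℂ, Complex.exp (z - w) = Complex.exp (-w) * Complex.exp z := by
      intro z w
      rw [← Complex.exp_add]
      congr 1
      ring
    simp only [hg, hW, hℓr, h1, hexp2, hLk]
    rw [Complex.real_smul]
    push_cast
    rw [h2]
    field_simp
    ring_nf
    rw [hsplitexp]
    rw [← hLdef]; push_cast; ring
  have hCV : (∫ s in (1:ℝ)..M, g s)
      = ((L ^ k : ℝ) : ℂ) * (Complex.exp (-γ * ((L' : ℝ) : ℂ)) * J) := by
    rw [← hCV0,
      intervalIntegral.integral_congr (g := fun r => ((L ^ k : ℝ) : ℂ)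
        * (Complex.exp (-γ * ((L' : ℝ) : ℂ))
          * (Complex.exp (γ * r * Real.log M)
            * ((r ^ (k - 1) * Real.log (M' / M ^ r) ^ n : ℝ) : ℂ))))
        (fun r _ => hpt r),
      intervalIntegral.integral_const_mul, intervalIntegral.integral_const_mul, hJ]
  -- express the main term via the integral of PD * W
  have hPDg : ∀ s : ℝ, ((PD s : ℝ) : ℂ) * W s = ((((k-1).factorial : ℕ) : ℂ))⁻¹ * g s := by
    intro s
    have hfac : ((k.factorial : ℕ) : ℝ) = (k : ℝ) * (((k-1).factorial : ℕ) : ℝ) := by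
      rw [← Nat.mul_factorial_pred (by omega : k ≠ 0)]
      push_cast
      ring
    have hk0 : ((k:ℕ) : ℂ) ≠ 0 := Nat.cast_ne_zero.mpr (by omega)
    have hf0 : (((k-1).factorial : ℕ) : ℂ) ≠ 0 := Nat.cast_ne_zero.mpr (Nat.factorial_pos _).ne'
    simp only [hPDdef, hg, hW]
    rw [hfac]
    push_cast
    field_simp [hk0, hf0]
  have hIPDW : (∫ s in (1:ℝ)..M, ((PD s : ℝ) : ℂ) * W s)
      = ((((k-1).factorial : ℕ) : ℂ))⁻¹
        * (((L ^ k : ℝ) : ℂ) * (Complex.exp (-γ * ((L' : ℝ) : ℂ)) * J)) := by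
    rw [intervalIntegral.integral_congr (g := fun s => ((((k-1).factorial : ℕ) : ℂ))⁻¹ * g s)
      (fun s _ => hPDg s), intervalIntegral.integral_const_mul, hCV]
  have hMain : ((c ^ k : ℝ) : ℂ) * Complex.exp (-γ * ((L' : ℝ) : ℂ))
      * ((Real.log M ^ k / (Nat.factorial (k - 1)) : ℝ) : ℂ) * J
      = ((c ^ k : ℝ) : ℂ) * ∫ s in (1:ℝ)..M, ((PD s : ℝ) : ℂ) * W s := by
    rw [hIPDW]
    have hf0 : (((k-1).factorial : ℕ) : ℂ) ≠ 0 := Nat.cast_ne_zero.mpr (Nat.factorial_pos _).ne'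
    push_cast
    field_simp
    ring
  -- pointwise bounds
  set E : ℝ := Real.exp (A^2) with hE
  have hE0 : 0 < E := Real.exp_pos _
  have hGreal : ∀ s : ℝ, G s = ((∑ m ∈ Finset.Icc 0 ⌊s⌋₊, (f^k) m / m : ℝ) : ℂ) := by
    intro s
    simp only [hG, hcseq, Complex.ofReal_sum]
  have hfk : ∀ m, 0 ≤ (f^k) m := pow_nonneg_apply f hf k hk
  have hGP : ∀ s : ℝ, 1 ≤ s → s ≤ M →
      ‖G s - ((c^k : ℝ) : ℂ) * ((P s : ℝ) : ℂ)‖ ≤ CP * (1 + L)^(k-1) := by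
    intro s hs1 hsM
    have hs0 : (0:ℝ) < s := lt_of_lt_of_le one_pos hs1
    rw [hGreal s, ← Complex.ofReal_mul, ← Complex.ofReal_sub, Complex.norm_real,
      Real.norm_eq_abs]
    have h9 := hCP s hs1
    rw [← sum_Icc0_eq (fun m => (f^k) m / (m:ℝ)) (by simp) ⌊s⌋₊] at h9
    have h10 : c ^ k * P s = c ^ k * Real.log s ^ k / (k.factorial : ℝ) := by
      simp only [hPdef]; ring
    rw [h10]
    refine h9.trans (mul_le_mul_of_nonneg_left ?_ hCP0)
    have hls : Real.log s ≤ L := by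
      rw [hLdef]; exact Real.log_le_log hs0 hsM
    have hls0 : 0 ≤ Real.log s := Real.log_nonneg hs1
    exact pow_le_pow_left₀ (by linarith) (by linarith) _
  have hWM : ‖W M‖ ≤ A^n * L^n * E := by
    have hlM : ℓ M = L' - L := by
      simp only [hℓ, hLdef]
    have hx0 : 0 ≤ L' - L := by linarith
    have hxA : L' - L ≤ A * L := by nlinarith
    have hxp : (L' - L)^n ≤ A^n * L^n := by
      calc (L' - L)^n ≤ (A*L)^n := pow_le_pow_left₀ hx0 hxA n
        _ = A^n * L^n := mul_pow A L n
    have h9 : ‖W M‖ = |(ℓ M)^n| * ‖Complex.exp (-γ * ((ℓ M : ℝ) : ℂ))‖ := by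
      simp only [hW]
      rw [norm_mul, Complex.norm_real, Real.norm_eq_abs]
    rw [h9, hlM, abs_of_nonneg (pow_nonneg hx0 n)]
    exact mul_le_mul hxp (hlM ▸ hexpbound (L' - L) hx0 hxA) (norm_nonneg _)
      (by positivity)
  have hWDb : ∀ s : ℝ, 1 ≤ s → s ≤ M →
      ‖WD s‖ ≤ (((n:ℝ) * A^n + A^(n+1)) * E) * L^n / L * s⁻¹ := by
    intro s hs1 hsM
    have hs0 : (0:ℝ) < s := lt_of_lt_of_le one_pos hs1
    have hls : Real.log s ≤ L := by
      rw [hLdef]; exact Real.log_le_log hs0 hsM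
    have hx0 : 0 ≤ ℓ s := by
      simp only [hℓ]; linarith
    have hxA : ℓ s ≤ A * L := by
      simp only [hℓ]
      have := Real.log_nonneg hs1
      nlinarith
    have hxp : (ℓ s)^n ≤ A^n * L^n := by
      calc (ℓ s)^n ≤ (A*L)^n := pow_le_pow_left₀ hx0 hxA n
        _ = A^n * L^n := mul_pow A L n
    have hxp1 : (n:ℝ) * (ℓ s)^(n-1) * L ≤ (n:ℝ) * (A^n * L^n) := by
      rcases Nat.eq_zero_or_pos n with rfl | hn
      · simp
      · have h8 : (ℓ s)^(n-1) * L ≤ (A*L)^(n-1) * (A*L) := by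
          refine mul_le_mul (pow_le_pow_left₀ hx0 hxA _) (by nlinarith) hL0.le (by positivity)
        have h9 : (A*L)^(n-1) * (A*L) = (A*L)^n := by
          rw [← pow_succ]; congr 1; omega
        calc (n:ℝ) * (ℓ s)^(n-1) * L = (n:ℝ) * ((ℓ s)^(n-1) * L) := by ring
          _ ≤ (n:ℝ) * ((A*L)^n) := mul_le_mul_of_nonneg_left (h8.trans_eq h9) (Nat.cast_nonneg n)
          _ = (n:ℝ) * (A^n * L^n) := by rw [mul_pow]
    have hEx := hexpbound (ℓ s) hx0 hxA
    have hT1 : ‖(((n : ℝ) * ℓ s ^ (n-1) * (-s⁻¹) : ℝ) : ℂ) * Complex.exp (-γ * ((ℓ s : ℝ) : ℂ))‖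
        ≤ ((n:ℝ) * (ℓ s)^(n-1) * s⁻¹) * E := by
      rw [norm_mul, Complex.norm_real, Real.norm_eq_abs]
      have : |(n : ℝ) * ℓ s ^ (n-1) * (-s⁻¹)| = (n:ℝ) * (ℓ s)^(n-1) * s⁻¹ := by
        rw [abs_mul, abs_neg, abs_inv, abs_of_pos hs0,
          abs_of_nonneg (by positivity : (0:ℝ) ≤ (n : ℝ) * ℓ s ^ (n-1))]
      rw [this]
      exact mul_le_mul_of_nonneg_left hEx (by positivity)
    have hT2 : ‖((ℓ s ^ n : ℝ) : ℂ) * (Complex.exp (-γ * ((ℓ s : ℝ) : ℂ)) * (-γ * (((-s⁻¹ : ℝ)) : ℂ)))‖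
        ≤ (ℓ s)^n * (E * (‖γ‖ * s⁻¹)) := by
      rw [norm_mul, Complex.norm_real, Real.norm_eq_abs, norm_mul, norm_mul, norm_neg,
        Complex.norm_real, Real.norm_eq_abs, abs_neg, abs_inv, abs_of_pos hs0,
        abs_of_nonneg (pow_nonneg hx0 n)]
      exact mul_le_mul_of_nonneg_left
        (mul_le_mul_of_nonneg_right hEx (by positivity)) (by positivity)
    have hbr1 : (n:ℝ) * (ℓ s)^(n-1) ≤ (n:ℝ) * A^n * L^n / L := by
      rw [le_div_iff₀ hL0]
      calc (n:ℝ) * (ℓ s)^(n-1) * L ≤ (n:ℝ) * (A^n * L^n) := hxp1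
        _ = (n:ℝ) * A^n * L^n := by ring
    have hbr2 : ‖γ‖ * (ℓ s)^n ≤ A^(n+1) * L^n / L := by
      calc ‖γ‖ * (ℓ s)^n ≤ (A / L) * (A^n * L^n) :=
            mul_le_mul hγ hxp (pow_nonneg hx0 n) (by positivity)
        _ = A^(n+1) * L^n / L := by field_simp; ring
    calc ‖WD s‖ ≤ ‖(((n : ℝ) * ℓ s ^ (n-1) * (-s⁻¹) : ℝ) : ℂ)
            * Complex.exp (-γ * ((ℓ s : ℝ) : ℂ))‖
          + ‖((ℓ s ^ n : ℝ) : ℂ) * (Complex.exp (-γ * ((ℓ s : ℝ) : ℂ))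
            * (-γ * (((-s⁻¹ : ℝ)) : ℂ)))‖ := norm_add_le _ _
      _ ≤ ((n:ℝ) * (ℓ s)^(n-1) * s⁻¹) * E + (ℓ s)^n * (E * (‖γ‖ * s⁻¹)) := add_le_add hT1 hT2
      _ = ((n:ℝ) * (ℓ s)^(n-1) + ‖γ‖ * (ℓ s)^n) * (E * s⁻¹) := by ring
      _ ≤ ((n:ℝ) * A^n * L^n / L + A^(n+1) * L^n / L) * (E * s⁻¹) :=
          mul_le_mul_of_nonneg_right (add_le_add hbr1 hbr2) (by positivity)
      _ = (((n:ℝ) * A^n + A^(n+1)) * E) * L^n / L * s⁻¹ := by ring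
  -- measurability and integrability
  have hPmeas : Measurable (fun s : ℝ => ((P s : ℝ) : ℂ)) :=
    Complex.measurable_ofReal.comp ((Real.measurable_log.pow_const k).div_const _)
  have hGmeas : Measurable G := by
    have h1 : Measurable (fun N : ℕ => ∑ m ∈ Finset.Icc 0 N, cseq m) := measurable_from_top
    exact h1.comp Nat.measurable_floor
  have hWDmeas : Measurable WD := by
    have m1 : Measurable ℓ := measurable_const.sub Real.measurable_log
    have m2 : Measurable fun s : ℝ => ((ℓ s : ℝ) : ℂ) := Complex.measurable_ofReal.comp m1
    have m3 : Measurable fun s : ℝ => Complex.exp (-γ * ((ℓ s : ℝ) : ℂ)) :=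
      Complex.continuous_exp.measurable.comp (m2.const_mul (-γ))
    have m4 : Measurable fun s : ℝ => (((-s⁻¹ : ℝ)) : ℂ) :=
      Complex.measurable_ofReal.comp (measurable_inv.neg)
    have m5 : Measurable fun s : ℝ => (((n : ℝ) * ℓ s ^ (n-1) * (-s⁻¹) : ℝ) : ℂ) :=
      Complex.measurable_ofReal.comp (((m1.pow_const _).const_mul _).mul (measurable_inv.neg))
    exact (m5.mul m3).add ((Complex.measurable_ofReal.comp (m1.pow_const n)).mul
      (m3.mul (m4.const_mul (-γ))))
  set X : ℝ → ℂ := fun s => G s - ((c^k : ℝ) : ℂ) * ((P s : ℝ) : ℂ) with hX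
  have hXmeas : Measurable X := hGmeas.sub (hPmeas.const_mul _)
  set KD : ℝ := (((n:ℝ) * A^n + A^(n+1)) * E) * L^n / L with hKD
  have hKD0 : 0 ≤ KD := by
    rw [hKD]
    positivity
  have hWDX : IntegrableOn (fun s => WD s * X s) (Set.Ioc 1 M) := by
    refine Measure.integrableOn_of_bounded (M := KD * (CP * (1+L)^(k-1)))
      (measure_Ioc_lt_top).ne ((hWDmeas.mul hXmeas).aestronglyMeasurable) ?_
    refine (ae_restrict_iff' measurableSet_Ioc).mpr (ae_of_all _ fun s hs => ?_)
    have hs1 : (1:ℝ) ≤ s := le_of_lt hs.1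
    rw [norm_mul]
    refine mul_le_mul ((hWDb s hs1 hs.2).trans ?_) (hGP s hs1 hs.2) (norm_nonneg _) hKD0
    calc KD * s⁻¹ ≤ KD * 1 := mul_le_mul_of_nonneg_left (inv_le_one_of_one_le₀ hs1) hKD0
      _ = KD := mul_one KD
  set BG : ℝ := ∑ m ∈ Finset.Icc 0 ⌊M⌋₊, ((f^k) m / m) with hBG
  have hGb : ∀ s : ℝ, 1 ≤ s → s ≤ M → ‖G s‖ ≤ BG := by
    intro s hs1 hsM
    rw [hGreal s, Complex.norm_real, Real.norm_eq_abs,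
      abs_of_nonneg (Finset.sum_nonneg fun m _ => div_nonneg (hfk m) (Nat.cast_nonneg m))]
    refine Finset.sum_le_sum_of_subset_of_nonneg
      (Finset.Icc_subset_Icc le_rfl (Nat.floor_le_floor hsM))
      (fun m _ _ => div_nonneg (hfk m) (Nat.cast_nonneg m))
  have hIWDG : IntegrableOn (fun s => WD s * G s) (Set.Ioc 1 M) := by
    refine Measure.integrableOn_of_bounded (M := KD * BG)
      (measure_Ioc_lt_top).ne ((hWDmeas.mul hGmeas).aestronglyMeasurable) ?_
    refine (ae_restrict_iff' measurableSet_Ioc).mpr (ae_of_all _ fun s hs => ?_)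
    have hs1 : (1:ℝ) ≤ s := le_of_lt hs.1
    have hBG0 : 0 ≤ BG := Finset.sum_nonneg fun m _ => div_nonneg (hfk m) (Nat.cast_nonneg m)
    rw [norm_mul]
    refine mul_le_mul ((hWDb s hs1 hs.2).trans ?_) (hGb s hs1 hs.2) (norm_nonneg _) hKD0
    calc KD * s⁻¹ ≤ KD * 1 := mul_le_mul_of_nonneg_left (inv_le_one_of_one_le₀ hs1) hKD0
      _ = KD := mul_one KD
  have hIPWD : IntegrableOn (fun s => ((c^k : ℝ) : ℂ) * (((P s : ℝ) : ℂ) * WD s))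
      (Set.Ioc 1 M) :=
    ((continuousOn_const.mul (hPcont.mul hWDcont)).integrableOn_Icc).mono_set
      Set.Ioc_subset_Icc_self
  have hintdiff : (∫ s in Set.Ioc 1 M, WD s * X s)
      = (∫ s in Set.Ioc 1 M, WD s * G s)
        - ((c^k : ℝ) : ℂ) * ∫ s in (1:ℝ)..M, ((P s : ℝ) : ℂ) * WD s := by
    rw [intervalIntegral.integral_of_le hM1, ← MeasureTheory.integral_const_mul,
      ← integral_sub hIWDG hIPWD]
    refine setIntegral_congr_fun measurableSet_Ioc fun s hs => ?_
    simp only [hX]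
    ring
  -- the final identity
  have hfinalEq : (∑ m ∈ Finset.Icc 1 ⌊M⌋₊,
        (((f ^ k) m * Real.log (M' / m) ^ n / m : ℝ) : ℂ)
          * Complex.exp (-γ * Real.log (M' / m)))
      - ((c ^ k : ℝ) : ℂ) * Complex.exp (-γ * Real.log M')
        * ((Real.log M ^ k / (Nat.factorial (k - 1)) : ℝ) : ℂ)
        * ∫ r in (0:ℝ)..1, Complex.exp (γ * r * Real.log M)
            * ((r ^ (k - 1) * Real.log (M' / M ^ r) ^ n : ℝ) : ℂ)
      = W M * (G M - ((c^k : ℝ) : ℂ) * ((P M : ℝ) : ℂ))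
        - ∫ s in Set.Ioc 1 M, WD s * X s := by
    rw [hsum, habel, hintdiff, hMain, hsplit2]
    simp only [hG]
    ring
  rw [hfinalEq]
  -- final estimate
  have hGPM := hGP M hM1 le_rfl
  have hInorm : ‖∫ s in Set.Ioc 1 M, WD s * X s‖ ≤ (KD * (CP * (1+L)^(k-1))) * L := by
    have h1 : ‖∫ s in Set.Ioc 1 M, WD s * X s‖ ≤ ∫ s in Set.Ioc 1 M, ‖WD s * X s‖ :=
      MeasureTheory.norm_integral_le_integral_norm _
    have hmaj : IntegrableOn (fun s : ℝ => (KD * (CP * (1+L)^(k-1))) * s⁻¹)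
        (Set.Ioc 1 M) := by
      refine (ContinuousOn.integrableOn_Icc (continuousOn_const.mul fun s hs =>
        (continuousAt_inv₀ (ne_of_gt (lt_of_lt_of_le one_pos hs.1))).continuousWithinAt)).mono_set
        Set.Ioc_subset_Icc_self
    have h2 : (∫ s in Set.Ioc 1 M, ‖WD s * X s‖)
        ≤ ∫ s in Set.Ioc 1 M, (KD * (CP * (1+L)^(k-1))) * s⁻¹ := by
      refine setIntegral_mono_on (hWDX.norm) hmaj measurableSet_Ioc fun s hs => ?_
      have hs1 : (1:ℝ) ≤ s := le_of_lt hs.1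
      rw [norm_mul]
      calc ‖WD s‖ * ‖X s‖ ≤ (KD * s⁻¹) * (CP * (1+L)^(k-1)) :=
            mul_le_mul (hWDb s hs1 hs.2) (hGP s hs1 hs.2) (norm_nonneg _) (by positivity)
        _ = (KD * (CP * (1+L)^(k-1))) * s⁻¹ := by ring
    have h3 : (∫ s in Set.Ioc 1 M, (KD * (CP * (1+L)^(k-1))) * s⁻¹)
        = (KD * (CP * (1+L)^(k-1))) * L := by
      rw [MeasureTheory.integral_const_mul]
      congr 1
      rw [← intervalIntegral.integral_of_le hM1,
        integral_inv_of_pos one_pos hM0, div_one, hLdef]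
    linarith
  have h2L : (1+L)^(k-1) ≤ 2^(k-1) * L^(k-1) := by
    calc (1+L)^(k-1) ≤ (2*L)^(k-1) := pow_le_pow_left₀ (by linarith) (by linarith) _
      _ = 2^(k-1) * L^(k-1) := mul_pow 2 L (k-1)
  have hpow : L^n * L^(k-1) = L^(k+n-1) := by
    rw [← pow_add]
    congr 1
    omega
  have hmono : (1+L)^(k-1) * L^n ≤ 2^(k-1) * L^(k+n-1) := by
    calc (1+L)^(k-1) * L^n ≤ (2^(k-1) * L^(k-1)) * L^n :=
          mul_le_mul_of_nonneg_right h2L (by positivity)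
      _ = 2^(k-1) * (L^n * L^(k-1)) := by ring
      _ = 2^(k-1) * L^(k+n-1) := by rw [hpow]
  have hb2eq : KD * (CP * (1+L)^(k-1)) * L
      = ((((n:ℝ)*A^n + A^(n+1)) * E) * CP) * ((1+L)^(k-1) * L^n) := by
    rw [hKD]
    field_simp
  calc ‖W M * (G M - ((c^k : ℝ) : ℂ) * ((P M : ℝ) : ℂ))
        - ∫ s in Set.Ioc 1 M, WD s * X s‖
      ≤ ‖W M‖ * ‖G M - ((c^k : ℝ) : ℂ) * ((P M : ℝ) : ℂ)‖
        + ‖∫ s in Set.Ioc 1 M, WD s * X s‖ := by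
        refine (norm_sub_le _ _).trans ?_
        rw [norm_mul]
    _ ≤ (A^n * L^n * E) * (CP * (1+L)^(k-1)) + (KD * (CP * (1+L)^(k-1))) * L :=
        add_le_add (mul_le_mul hWM hGPM (norm_nonneg _) (by positivity)) hInorm
    _ = (A^n * E * CP) * ((1+L)^(k-1) * L^n)
        + ((((n:ℝ)*A^n + A^(n+1)) * E) * CP) * ((1+L)^(k-1) * L^n) := by
        rw [hb2eq]
        ring
    _ ≤ (A^n * E * CP) * (2^(k-1) * L^(k+n-1))
        + ((((n:ℝ)*A^n + A^(n+1)) * E) * CP) * (2^(k-1) * L^(k+n-1)) :=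
        add_le_add (mul_le_mul_of_nonneg_left hmono (by positivity))
          (mul_le_mul_of_nonneg_left hmono (by positivity))
    _ = (CP * 2^(k-1) * (A^n * E) + CP * 2^(k-1) * (((n : ℝ) * A^n + A^(n+1)) * E))
        * L^(k+n-1) := by ring

end SDC

/-- Uniform version of the weighted sum asymptotic: for `f` nonnegative
with `∑_{m ≤ M} f(m) = c·M + O(M^{3/5})`, `k ≥ 1`, `n ≥ 0`, `A ≥ 1`, there is a constant `C`
such that for all `M ≥ 3`, all `M ≤ M' ≤ M^A` and all complex `γ` with `|γ| ≤ A/log M`,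
`∑_{m ≤ M} f^{*k}(m)·(log(M'/m))^n·(M'/m)^{-γ}/m` equals
`(c^k (M')^{-γ} (log M)^k/(k-1)!)·∫₀¹ M^{γ r} r^{k-1} (log(M'/M^r))^n dr`
up to an error of size at most `C (log M)^{k+n-1}`. -/
theorem sum_dirichlet_convolution_pow_weighted_asymptotic
    (f : ArithmeticFunction ℝ) (hf : ∀ n, 0 ≤ f n) (c : ℝ) (hc : 0 ≤ c)
    (h : (fun M : ℝ => (∑ m ∈ Finset.Icc 1 ⌊M⌋₊, f m) - c * M)
      =O[atTop] fun M : ℝ => M ^ ((3 : ℝ) / 5))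
    (k n : ℕ) (hk : 1 ≤ k) (A : ℝ) (hA : 1 ≤ A) :
    ∃ C : ℝ, ∀ M : ℝ, 3 ≤ M → ∀ M' : ℝ, M ≤ M' → M' ≤ M ^ A →
      ∀ γ : ℂ, ‖γ‖ ≤ A / Real.log M →
      ‖(∑ m ∈ Finset.Icc 1 ⌊M⌋₊,
            (((f ^ k) m * Real.log (M' / m) ^ n / m : ℝ) : ℂ)
              * Complex.exp (-γ * Real.log (M' / m)))
          - ((c ^ k : ℝ) : ℂ) * Complex.exp (-γ * Real.log M')
              * ((Real.log M ^ k / (Nat.factorial (k - 1)) : ℝ) : ℂ)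
              * ∫ r in (0:ℝ)..1,
                  Complex.exp (γ * r * Real.log M)
                    * ((r ^ (k - 1) * Real.log (M' / M ^ r) ^ n : ℝ) : ℂ)‖
        ≤ C * Real.log M ^ (k + n - 1) := by
  obtain ⟨CP, hCP0, hCP⟩ := SDC.lemP f hf c hc h k hk
  refine ⟨CP * 2^(k-1) * (A^n * Real.exp (A^2))
      + CP * 2^(k-1) * (((n : ℝ) * A^n + A^(n+1)) * Real.exp (A^2)), ?_⟩
  intro M hM M' hMM' hM'MA γ hγ
  exact SDC.finalAux f hf c hc k n hk A hA CP hCP0 hCP M hM M' hMM' hM'MA γ hγ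
end

section
/- Let ℓ ≥ 2 and k ≥ 0 be integers, let r > 0 and X > 0 be real numbers, and let α ∈ ℂ with |α| < r. Then (1/(2πi)) ∮_{|s|=r} X^s (α+s)^{-(ℓ-1)} s^{-(k+1)} ds = ((log X)^{k+ℓ-1}/(k!·(ℓ-2)!)) ∫_0^1 e^{-α u log X} u^{ℓ-2} (1-u)^k du. -/
open Filter intervalIntegral


lemma fact_mul_prod (m k : ℕ) :
    m.factorial * ∏ j ∈ Finset.range (k+1), (m+1+j) = (m+k+1).factorial := by
  induction k with
  | zero => simp [Nat.factorial_succ, Nat.mul_comm]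
  | succ k ih =>
      rw [Finset.prod_range_succ, ← mul_assoc, ih,
        show m+1+(k+1) = (m+k+1)+1 by omega,
        show m+(k+1)+1 = (m+k+1)+1 by omega, Nat.factorial_succ (m+k+1)]
      ring

lemma beta_nat (m k : ℕ) :
    (∫ u in (0:ℝ)..1, (u:ℂ) ^ m * (1 - (u:ℂ)) ^ k)
      = (m.factorial : ℂ) * (k.factorial : ℂ) / ((m + k + 1).factorial : ℂ) := by
  have h := Complex.betaIntegral_eval_nat_add_one_right (u := (m : ℂ) + 1) (by simp; positivity) k
  have h2 : Complex.betaIntegral ((m:ℂ)+1) ((k:ℂ)+1)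
      = ∫ u in (0:ℝ)..1, (u:ℂ) ^ m * (1 - (u:ℂ)) ^ k := by
    rw [Complex.betaIntegral]
    congr 1
    ext u
    rw [add_sub_cancel_right, add_sub_cancel_right, Complex.cpow_natCast, Complex.cpow_natCast]
  rw [h2] at h
  rw [h]
  have h3 : (∏ j ∈ Finset.range (k+1), ((m:ℂ)+1+(j:ℂ)))
      = ((∏ j ∈ Finset.range (k+1), (m+1+j) : ℕ) : ℂ) := by
    push_cast; ring_nf
  rw [h3]
  have h4 := fact_mul_prod m k
  have h5 : ((∏ j ∈ Finset.range (k+1), (m+1+j) : ℕ) : ℂ)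
      = ((m+k+1).factorial : ℂ) / (m.factorial : ℂ) := by
    rw [eq_div_iff (by exact_mod_cast m.factorial_ne_zero)]
    exact_mod_cast (mul_comm _ _).trans h4
  rw [h5, div_div_eq_mul_div, mul_comm]


lemma hasSum_exp_div (z : ℂ) : HasSum (fun n => z ^ n / n.factorial) (Complex.exp z) := by
  rw [Complex.exp_eq_exp_ℂ]
  exact NormedSpace.expSeries_div_hasSum_exp z

lemma circleIntegral_exp_div_pow (τ : ℂ) (m : ℕ) {r : ℝ} (hr : 0 < r) :
    (∮ s in C(0, r), Complex.exp (s * τ) / s ^ (m + 1))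
      = (2 * Real.pi * Complex.I) * τ ^ m / m.factorial := by
  have hs0 : ∀ θ : ℝ, circleMap 0 r θ ≠ 0 := fun θ => circleMap_ne_center hr.ne'
  have key : HasSum (fun n : ℕ => ∮ s in C(0, r), (τ ^ n / n.factorial) * s ^ n / s ^ (m + 1))
      (∮ s in C(0, r), Complex.exp (s * τ) / s ^ (m + 1)) := by
    simp only [circleIntegral]
    apply intervalIntegral.hasSum_integral_of_dominated_convergence
      (bound := fun n θ => r * (‖τ‖ ^ n / n.factorial * (r ^ n / r ^ (m + 1))))
    · intro n
      apply Continuous.aestronglyMeasurable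
      simp only [deriv_circleMap]
      apply Continuous.smul ((continuous_circleMap 0 r).mul continuous_const)
      apply Continuous.div (by fun_prop) (by fun_prop)
      exact fun θ => pow_ne_zero _ (hs0 θ)
    · intro n
      filter_upwards with θ hθ
      apply le_of_eq
      simp only [deriv_circleMap, norm_smul, norm_mul, Complex.norm_I,
        mul_one, norm_circleMap_zero, abs_of_pos hr, norm_div, norm_pow, Complex.norm_natCast]
      ring
    · filter_upwards with θ hθ
      apply Summable.mul_left
      apply Summable.congr ((Real.summable_pow_div_factorial (‖τ‖ * r)).mul_right
        (r ^ (m + 1))⁻¹)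
      intro n
      rw [mul_pow]
      ring
    · exact _root_.intervalIntegrable_const
    · filter_upwards with θ hθ
      have h := (hasSum_exp_div (circleMap 0 r θ * τ)).div_const ((circleMap 0 r θ) ^ (m + 1))
      have h2 : (fun n : ℕ => (τ ^ n / n.factorial) * (circleMap 0 r θ) ^ n
            / (circleMap 0 r θ) ^ (m + 1))
          = fun n : ℕ => (circleMap 0 r θ * τ) ^ n / n.factorial / (circleMap 0 r θ) ^ (m + 1) :=
        funext fun n => by rw [mul_pow]; ring
      exact (h2 ▸ h).const_smul _
  have term : ∀ n : ℕ, (∮ s in C(0, r), (τ ^ n / n.factorial) * s ^ n / s ^ (m + 1))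
      = if n = m then (2 * Real.pi * Complex.I) * τ ^ m / m.factorial else 0 := by
    intro n
    have e1 : (∮ s in C(0, r), (τ ^ n / n.factorial) * s ^ n / s ^ (m + 1))
        = (τ ^ n / n.factorial) * ∮ s in C(0, r), s ^ n / s ^ (m + 1) := by
      rw [← circleIntegral.integral_const_mul]
      congr 1; funext s; ring
    have e2 : (∮ s in C(0, r), s ^ n / s ^ (m + 1))
        = ∮ s in C(0, r), (s - 0) ^ ((n : ℤ) - (m + 1)) := by
      apply circleIntegral.integral_congr hr.le
      intro s hs
      have hsne : s ≠ 0 := by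
        intro h
        rw [Metric.mem_sphere, h] at hs
        simp at hs
        exact hr.ne' hs.symm
      simp only [sub_zero]
      rw [← zpow_natCast s n, ← zpow_natCast s (m + 1), ← zpow_sub₀ hsne]
      norm_num
    rw [e1, e2]
    rcases eq_or_ne n m with h | h
    · subst h
      have : ((n : ℤ) - (n + 1)) = -1 := by omega
      rw [this, if_pos rfl]
      have : (∮ s in C(0, r), (s - 0) ^ (-1 : ℤ)) = ∮ s in C(0, r), (s - 0)⁻¹ := by
        congr 1; funext s; exact zpow_neg_one _
      rw [this, circleIntegral.integral_sub_inv_of_mem_ball (by simpa using hr)]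
      ring
    · rw [circleIntegral.integral_sub_zpow_of_ne (by omega), if_neg h, mul_zero]
  rw [funext term] at key
  exact key.unique (hasSum_ite_eq m _)


/-- For integers `ℓ ≥ 2`, `k ≥ 0`, reals `r, X > 0` and `α ∈ ℂ` with `|α| < r`:
`(1/(2πi)) ∮_{|s|=r} X^s (α+s)^{-(ℓ-1)} s^{-(k+1)} ds
  = ((log X)^{k+ℓ-1}/(k!·(ℓ-2)!)) ∫₀¹ e^{-αu log X} u^{ℓ-2} (1-u)^k du`. -/
theorem circleIntegral_exp_inv_pow_eq_beta_integral
    (ℓ k : ℕ) (hℓ : 2 ≤ ℓ) (r X : ℝ) (hr : 0 < r) (hX : 0 < X)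
    (α : ℂ) (hα : ‖α‖ < r) :
    (1 / (2 * (Real.pi : ℂ) * Complex.I)) *
        (∮ s in C(0, r),
          Complex.exp (s * Real.log X) / ((α + s) ^ (ℓ - 1) * s ^ (k + 1)))
      = ((Real.log X ^ (k + ℓ - 1) /
            ((Nat.factorial k : ℝ) * (Nat.factorial (ℓ - 2) : ℝ)) : ℝ) : ℂ)
          * ∫ u in (0:ℝ)..1,
              Complex.exp (-α * u * Real.log X) * ((u ^ (ℓ - 2) * (1 - u) ^ k : ℝ) : ℂ) := by
  obtain ⟨m, rfl⟩ : ∃ m, ℓ = m + 2 := ⟨ℓ - 2, by omega⟩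
  have e1 : m + 2 - 1 = m + 1 := rfl
  have e2 : m + 2 - 2 = m := rfl
  have e3 : k + (m + 2) - 1 = k + m + 1 := by omega
  simp only [e1, e2, e3]
  set L : ℝ := Real.log X with hLdef
  have hs0 : ∀ θ : ℝ, circleMap 0 r θ ≠ 0 := fun θ => circleMap_ne_center hr.ne'
  have hsabs : ∀ θ : ℝ, ‖circleMap 0 r θ‖ = r := fun θ => by
    simp [norm_circleMap_zero, abs_of_pos hr]
  have hαs : ∀ θ : ℝ, α + circleMap 0 r θ ≠ 0 := by
    intro θ h
    have h2 : circleMap 0 r θ = -α := eq_neg_of_add_eq_zero_right h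
    have h3 := hsabs θ
    rw [h2, norm_neg] at h3
    rw [h3] at hα
    exact lt_irrefl r hα
  -- LHS series
  have HL : HasSum
      (fun n : ℕ => ∮ s in C(0, r), (((n + m).choose m : ℂ) * (-α) ^ n) *
        (Complex.exp (s * (L : ℂ)) / s ^ (k + m + 2 + n)))
      (∮ s in C(0, r), Complex.exp (s * (L : ℂ)) / ((α + s) ^ (m + 1) * s ^ (k + 1))) := by
    simp only [circleIntegral]
    apply intervalIntegral.hasSum_integral_of_dominated_convergence
      (bound := fun n θ => r * (((n + m).choose m : ℝ) * ‖α‖ ^ n *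
        (Real.exp (r * |L|) / r ^ (k + m + 2 + n))))
    · intro n
      apply Continuous.aestronglyMeasurable
      simp only [deriv_circleMap]
      apply Continuous.smul ((continuous_circleMap 0 r).mul continuous_const)
      apply Continuous.mul continuous_const
      apply Continuous.div (by fun_prop) (by fun_prop)
      exact fun θ => pow_ne_zero _ (hs0 θ)
    · intro n
      filter_upwards with θ hθ
      simp only [deriv_circleMap, norm_smul, norm_mul, Complex.norm_I,
        mul_one, norm_circleMap_zero, abs_of_pos hr, norm_div, norm_pow, Complex.norm_natCast,
        norm_neg, Complex.norm_exp, hsabs]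
      have hre : (circleMap 0 r θ * (L : ℂ)).re ≤ r * |L| := by
        calc (circleMap 0 r θ * (L : ℂ)).re ≤ |(circleMap 0 r θ * (L : ℂ)).re| := le_abs_self _
        _ ≤ ‖circleMap 0 r θ * (L : ℂ)‖ := Complex.abs_re_le_norm _
        _ = r * |L| := by rw [norm_mul, hsabs, Complex.norm_real, Real.norm_eq_abs]
      gcongr
    · filter_upwards with θ hθ
      have hq : ‖(‖α‖ / r : ℝ)‖ < 1 := by
        rw [Real.norm_eq_abs, abs_of_nonneg (by positivity)]
        exact (div_lt_one hr).mpr hα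
      apply Summable.congr
        (((summable_choose_mul_geometric_of_norm_lt_one m hq).mul_left
          (r * (Real.exp (r * |L|) / r ^ (k + m + 2)))))
      intro n
      rw [div_pow, pow_add]
      field_simp
      ring
    · exact _root_.intervalIntegrable_const
    · filter_upwards with θ hθ
      set s := circleMap 0 r θ with hsdef
      have hs0' : s ≠ 0 := hs0 θ
      have hαs' : α + s ≠ 0 := hαs θ
      have hq : ‖-α / s‖ < 1 := by
        rw [norm_div, norm_neg, hsabs]
        exact (div_lt_one hr).mpr hα
      have hb := (hasSum_choose_mul_geometric_of_norm_lt_one (𝕜 := ℂ) m hq).mul_right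
        (Complex.exp (s * (L : ℂ)) / s ^ (k + m + 2))
      have h2 : (fun n : ℕ => (((n + m).choose m : ℂ) * (-α / s) ^ n) *
            (Complex.exp (s * (L : ℂ)) / s ^ (k + m + 2)))
          = fun n : ℕ => (((n + m).choose m : ℂ) * (-α) ^ n) *
            (Complex.exp (s * (L : ℂ)) / s ^ (k + m + 2 + n)) := by
        funext n
        rw [div_pow, pow_add]
        ring
      have h3 : 1 / (1 - -α / s) ^ (m + 1) *
            (Complex.exp (s * (L : ℂ)) / s ^ (k + m + 2))
          = Complex.exp (s * (L : ℂ)) / ((α + s) ^ (m + 1) * s ^ (k + 1)) := by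
        have hss : 1 - -α / s = (α + s) / s := by
          field_simp
          ring
        rw [hss, div_pow, one_div_div, show k + m + 2 = (m + 1) + (k + 1) by omega, pow_add]
        field_simp
        ring
      exact (h3 ▸ h2 ▸ hb).const_smul _
  have hterm : ∀ n : ℕ,
      (∮ s in C(0, r), (((n + m).choose m : ℂ) * (-α) ^ n) *
        (Complex.exp (s * (L : ℂ)) / s ^ (k + m + 2 + n)))
      = (((n + m).choose m : ℂ) * (-α) ^ n) *
        ((2 * Real.pi * Complex.I) * (L : ℂ) ^ (k + m + 1 + n) / (k + m + 1 + n).factorial) := by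
    intro n
    rw [circleIntegral.integral_const_mul, show k + m + 2 + n = (k + m + 1 + n) + 1 by omega,
      circleIntegral_exp_div_pow (L : ℂ) (k + m + 1 + n) hr]
  rw [funext hterm] at HL
  -- RHS series
  have HR : HasSum
      (fun n : ℕ => ∫ u in (0:ℝ)..1, ((-α * (L : ℂ)) ^ n / n.factorial) *
        ((u : ℂ) ^ (m + n) * (1 - (u : ℂ)) ^ k))
      (∫ u in (0:ℝ)..1, Complex.exp (-α * u * (L : ℂ)) * ((u ^ m * (1 - u) ^ k : ℝ) : ℂ)) := by
    apply intervalIntegral.hasSum_integral_of_dominated_convergence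
      (bound := fun n u => (‖α‖ * |L|) ^ n / n.factorial)
    · intro n
      apply Continuous.aestronglyMeasurable
      fun_prop
    · intro n
      filter_upwards with u hu
      rw [Set.uIoc_of_le (by norm_num : (0:ℝ) ≤ 1)] at hu
      have h0u : 0 < u := hu.1
      have hu1 : u ≤ 1 := hu.2
      have hnorm : ‖((-α * (L : ℂ)) ^ n / n.factorial) * ((u : ℂ) ^ (m + n) * (1 - (u : ℂ)) ^ k)‖
          = (‖α‖ * |L|) ^ n / n.factorial * (u ^ (m + n) * (1 - u) ^ k) := by
        have h1u : ((1 : ℂ) - (u : ℂ)) = ((1 - u : ℝ) : ℂ) := by push_cast; ring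
        rw [h1u]
        simp only [norm_mul, norm_div, norm_pow, norm_neg,
          Complex.norm_real, Real.norm_eq_abs, Complex.norm_natCast, abs_of_pos h0u,
          abs_of_nonneg (by linarith : (0:ℝ) ≤ 1 - u)]
      rw [hnorm]
      have hone : u ^ (m + n) * (1 - u) ^ k ≤ 1 := by
        apply mul_le_one₀ (pow_le_one₀ h0u.le hu1) (pow_nonneg (by linarith) k)
          (pow_le_one₀ (by linarith) (by linarith))
      exact mul_le_of_le_one_right (by positivity) hone
    · filter_upwards with u hu
      exact Real.summable_pow_div_factorial _
    · exact _root_.intervalIntegrable_const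
    · filter_upwards with u hu
      have h := (hasSum_exp_div (-α * (u : ℂ) * (L : ℂ))).mul_right
        (((u ^ m * (1 - u) ^ k : ℝ) : ℂ))
      have h2 : (fun n : ℕ => ((-α * (u : ℂ) * (L : ℂ)) ^ n / n.factorial) *
            (((u ^ m * (1 - u) ^ k : ℝ) : ℂ)))
          = fun n : ℕ => ((-α * (L : ℂ)) ^ n / n.factorial) *
            ((u : ℂ) ^ (m + n) * (1 - (u : ℂ)) ^ k) := by
        funext n
        push_cast
        rw [pow_add]
        ring
      exact h2 ▸ h
  have hterm2 : ∀ n : ℕ,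
      (∫ u in (0:ℝ)..1, ((-α * (L : ℂ)) ^ n / n.factorial) *
        ((u : ℂ) ^ (m + n) * (1 - (u : ℂ)) ^ k))
      = ((-α * (L : ℂ)) ^ n / n.factorial) *
        (((m + n).factorial : ℂ) * (k.factorial : ℂ) / ((m + n + k + 1).factorial : ℂ)) := by
    intro n
    rw [intervalIntegral.integral_const_mul, beta_nat (m + n) k]
  rw [funext hterm2] at HR
  rw [← HL.tsum_eq, ← HR.tsum_eq, ← tsum_mul_left, ← tsum_mul_left]
  apply tsum_congr
  intro n
  have hπ : ((2 : ℂ) * Real.pi * Complex.I) ≠ 0 := by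
    simp [Real.pi_ne_zero, Complex.I_ne_zero]
  have hf1 : ((k + m + 1 + n).factorial : ℂ) ≠ 0 := Nat.cast_ne_zero.mpr (Nat.factorial_ne_zero _)
  have hfm : (m.factorial : ℂ) ≠ 0 := Nat.cast_ne_zero.mpr (Nat.factorial_ne_zero _)
  have hfn : (n.factorial : ℂ) ≠ 0 := Nat.cast_ne_zero.mpr (Nat.factorial_ne_zero _)
  have hfk : (k.factorial : ℂ) ≠ 0 := Nat.cast_ne_zero.mpr (Nat.factorial_ne_zero _)
  have hch : (((n + m).choose m : ℕ) : ℂ)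
      = ((m + n).factorial : ℂ) / ((m.factorial : ℂ) * (n.factorial : ℂ)) := by
    rw [Nat.cast_choose ℂ (Nat.le_add_left m n), show n + m - m = n by omega,
      show n + m = m + n by omega]
  have hidx : m + n + k + 1 = k + m + 1 + n := by omega
  rw [hch, hidx]
  push_cast
  rw [show k + m + 1 + n = (k + m + 1) + n by omega, pow_add]
  field_simp
  ring
end
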